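/- arXiv:2006.05458 — 14 statements merged into one kernel-verified Lean document; each statement's English description precedes it below -/
import Mathlib

section
/- If X_1, X_2, ... are iid random variables with continuous cdf F and infinite right-tail expectation (∫_0^∞ x f(x) dx = ∞), then for every real c and δ, the asymptotic δ-record probability p_δ(c) = ∫ ∏_{i=1}^∞ F(x+ci−δ) f(x) dx equals 0. -/
open MeasureTheory Set

/-- Asymptotic δ-record probability in the linear drift model with trend `c`:
`p_δ(c) = ∫ (∏_{i=1}^∞ F(x + c i − δ)) f(x) dx`. -/
noncomputable def pdelta (F f : ℝ → ℝ) (c δ : ℝ) : ℝ :=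
  ∫ x : ℝ, (∏' i : ℕ, F (x + c * (i + 1) - δ)) * f x

open Filter


lemma auxA {g : ℕ → ℝ} (h0 : ∀ i, 0 ≤ g i) (h1 : ∀ i, g i ≤ 1)
    (h : Tendsto (fun n => ∏ i ∈ Finset.range n, g i) atTop (nhds 0)) :
    ∏' i, g i = 0 := by
  have hp : HasProd g 0 := by
    rw [HasProd, NormedAddCommGroup.tendsto_nhds_zero]
    intro ε hε
    rw [NormedAddCommGroup.tendsto_nhds_zero] at h
    obtain ⟨n, hn⟩ := (h ε hε).exists
    show ∀ᶠ (x : Finset ℕ) in atTop, ‖∏ b ∈ x, g b‖ < ε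
    rw [eventually_atTop]
    refine ⟨Finset.range n, fun s hs => ?_⟩
    have hnn : (0:ℝ) ≤ ∏ i ∈ s, g i := Finset.prod_nonneg fun i _ => h0 i
    rw [Real.norm_of_nonneg hnn]
    have hsplit : (∏ i ∈ s \ Finset.range n, g i) * ∏ i ∈ Finset.range n, g i = ∏ i ∈ s, g i :=
      Finset.prod_sdiff hs
    have hle1 : (∏ i ∈ s \ Finset.range n, g i) ≤ 1 :=
      Finset.prod_le_one (fun i _ => h0 i) (fun i _ => h1 i)
    have hb : (∏ i ∈ s, g i) ≤ ∏ i ∈ Finset.range n, g i := by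
      rw [← hsplit]
      exact mul_le_of_le_one_left (Finset.prod_nonneg fun i _ => h0 i) hle1
    calc (∏ i ∈ s, g i) ≤ ∏ i ∈ Finset.range n, g i := hb
      _ ≤ ‖∏ i ∈ Finset.range n, g i‖ := le_abs_self _
      _ < ε := hn
  exact hp.tprod_eq

lemma auxProd {g : ℕ → ℝ} (h0 : ∀ i, 0 ≤ g i)
    (h : Tendsto (fun n => ∑ i ∈ Finset.range n, (1 - g i)) atTop atTop) :
    Tendsto (fun n => ∏ i ∈ Finset.range n, g i) atTop (nhds 0) := by
  have key : ∀ n, ∏ i ∈ Finset.range n, g i ≤ Real.exp (-(∑ i ∈ Finset.range n, (1 - g i))) := by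
    intro n
    have h2 : (∑ i ∈ Finset.range n, (g i - 1)) = -(∑ i ∈ Finset.range n, (1 - g i)) := by
      rw [← Finset.sum_neg_distrib]
      exact Finset.sum_congr rfl fun i _ => by ring
    calc ∏ i ∈ Finset.range n, g i ≤ ∏ i ∈ Finset.range n, Real.exp (g i - 1) := by
          refine Finset.prod_le_prod (fun i _ => h0 i) (fun i _ => ?_)
          have := Real.add_one_le_exp (g i - 1); linarith
      _ = Real.exp (∑ i ∈ Finset.range n, (g i - 1)) := (Real.exp_sum _ _).symm
      _ = Real.exp (-(∑ i ∈ Finset.range n, (1 - g i))) := by rw [h2]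
  refine squeeze_zero (fun n => Finset.prod_nonneg fun i _ => h0 i) key ?_
  exact Real.tendsto_exp_atBot.comp (tendsto_neg_atTop_atBot.comp h)


lemma auxSum (f : ℝ → ℝ) (hf : ∀ x, 0 ≤ f x) (hfm : Measurable f) (hfi : Integrable f)
    (hmu : ¬ IntegrableOn (fun x => x * f x) (Ioi (0:ℝ)))
    (c : ℝ) (hc : 0 < c) (y : ℝ) :
    Tendsto (fun n => ∑ i ∈ Finset.range n, ∫ s in Ioi (y + c*((i:ℝ)+1)), f s) atTop atTop := by
  set fe : ℝ → ENNReal := fun s => ENNReal.ofReal (f s) with hfe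
  have hfem : Measurable fe := hfm.ennreal_ofReal
  have hfetot : ∫⁻ s, fe s ≠ ⊤ := by
    rw [← ofReal_integral_eq_lintegral_ofReal hfi (ae_of_all _ hf)]
    exact ENNReal.ofReal_ne_top
  -- infinite tail moment in ENNReal form
  have hmu' : ∫⁻ s in Ioi (0:ℝ), ENNReal.ofReal s * fe s = ⊤ := by
    by_contra h
    apply hmu
    constructor
    · exact (measurable_id.mul hfm).aestronglyMeasurable
    · have hnn : 0 ≤ᵐ[volume.restrict (Ioi (0:ℝ))] fun x => x * f x := by
        filter_upwards [ae_restrict_mem measurableSet_Ioi] with x hx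
        exact mul_nonneg hx.le (hf x)
      rw [hasFiniteIntegral_iff_ofReal hnn]
      have heq : ∀ᵐ x ∂(volume.restrict (Ioi (0:ℝ))), ENNReal.ofReal (x * f x) = ENNReal.ofReal x * fe x := by
        filter_upwards [ae_restrict_mem measurableSet_Ioi] with x hx
        exact ENNReal.ofReal_mul hx.le
      rw [lintegral_congr_ae heq]
      exact lt_top_iff_ne_top.2 h
  set a : ℝ := max 1 (2*(y+c)) with ha
  have ha0 : (0:ℝ) ≤ a := le_trans zero_le_one (le_max_left _ _)
  have hIoc : ∫⁻ s in Ioc (0:ℝ) a, ENNReal.ofReal s * fe s ≠ ⊤ := by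
    have hb : ∫⁻ s in Ioc (0:ℝ) a, ENNReal.ofReal s * fe s
        ≤ ∫⁻ s in Ioc (0:ℝ) a, ENNReal.ofReal a * fe s := by
      refine setLIntegral_mono (hfem.const_mul _) (fun x hx => ?_)
      exact mul_le_mul_left (ENNReal.ofReal_le_ofReal hx.2) _
    have hb2 : ∫⁻ s in Ioc (0:ℝ) a, ENNReal.ofReal a * fe s
        = ENNReal.ofReal a * ∫⁻ s in Ioc (0:ℝ) a, fe s :=
      lintegral_const_mul' _ _ ENNReal.ofReal_ne_top
    refine ne_top_of_le_ne_top ?_ (hb.trans hb2.le)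
    exact ENNReal.mul_ne_top ENNReal.ofReal_ne_top
      (ne_top_of_le_ne_top hfetot (setLIntegral_le_lintegral _ _))
  have htailinf : ∫⁻ s in Ioi a, ENNReal.ofReal s * fe s = ⊤ := by
    by_contra h
    rw [← Ioc_union_Ioi_eq_Ioi ha0,
      lintegral_union measurableSet_Ioi (Set.Ioc_disjoint_Ioi le_rfl)] at hmu'
    exact ENNReal.add_ne_top.2 ⟨hIoc, h⟩ hmu'
  -- pointwise counting bound
  have hpt : ∀ s : ℝ, ENNReal.ofReal ((s - y - c)/c) * fe s
      ≤ ∑' i : ℕ, (Ioi (y + c*((i:ℝ)+1))).indicator fe s := by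
    intro s
    set r : ℝ := (s - y - c)/c with hr
    rcases le_or_gt r 0 with hr0 | hr0
    · simp [ENNReal.ofReal_eq_zero.2 hr0]
    · set n := ⌈r⌉₊ with hn
      have hle : ENNReal.ofReal r ≤ (n : ENNReal) := by
        rw [← ENNReal.ofReal_natCast]
        exact ENNReal.ofReal_le_ofReal (Nat.le_ceil r)
      have hsum : (∑ i ∈ Finset.range n, (Ioi (y + c*((i:ℝ)+1))).indicator fe s)
          = (n : ENNReal) * fe s := by
        have hmem : ∀ i ∈ Finset.range n, (Ioi (y + c*((i:ℝ)+1))).indicator fe s = fe s := by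
          intro i hi
          have hi' : (i:ℝ) < r := Nat.lt_ceil.1 (Finset.mem_range.1 hi)
          have h2 : (i:ℝ) * c < s - y - c := (lt_div_iff₀ hc).1 hi'
          have : s ∈ Ioi (y + c*((i:ℝ)+1)) := by
            simp only [mem_Ioi]; nlinarith
          rw [indicator_of_mem this]
        rw [Finset.sum_congr rfl hmem, Finset.sum_const, Finset.card_range, nsmul_eq_mul]
      calc ENNReal.ofReal r * fe s ≤ (n : ENNReal) * fe s := mul_le_mul_left hle _
        _ = ∑ i ∈ Finset.range n, (Ioi (y + c*((i:ℝ)+1))).indicator fe s := hsum.symm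
        _ ≤ ∑' i : ℕ, (Ioi (y + c*((i:ℝ)+1))).indicator fe s := ENNReal.sum_le_tsum _
  -- T = ∞
  have hT : (∑' i : ℕ, ∫⁻ s in Ioi (y + c*((i:ℝ)+1)), fe s) = ⊤ := by
    have h2 : (∑' i : ℕ, ∫⁻ s in Ioi (y + c*((i:ℝ)+1)), fe s)
        = ∫⁻ s, ∑' i : ℕ, (Ioi (y + c*((i:ℝ)+1))).indicator fe s := by
      rw [lintegral_tsum (fun i => (hfem.indicator measurableSet_Ioi).aemeasurable)]
      exact (tsum_congr fun i => (lintegral_indicator measurableSet_Ioi fe)).symm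
    rw [h2, eq_top_iff]
    have step1 : (⊤:ENNReal) = ENNReal.ofReal (2*c)⁻¹ * ∫⁻ s in Ioi a, ENNReal.ofReal s * fe s := by
      rw [htailinf, ENNReal.mul_top]
      simpa [ENNReal.ofReal_eq_zero, not_le] using inv_pos.2 (by linarith : (0:ℝ) < 2*c)
    rw [step1, ← lintegral_const_mul' _ _ ENNReal.ofReal_ne_top]
    have step2 : ∫⁻ s in Ioi a, ENNReal.ofReal (2*c)⁻¹ * (ENNReal.ofReal s * fe s)
        ≤ ∫⁻ s in Ioi a, ENNReal.ofReal ((s - y - c)/c) * fe s := by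
      refine setLIntegral_mono (((measurable_id.sub_const _).sub_const _).div_const c
        |>.ennreal_ofReal.mul hfem) (fun s hs => ?_)
      rw [← mul_assoc, ← ENNReal.ofReal_mul (by positivity)]
      refine mul_le_mul_left (ENNReal.ofReal_le_ofReal ?_) _
      have h1 : 2*(y+c) ≤ s := le_trans (le_max_right _ _) (le_of_lt hs)
      have h2 : (1:ℝ) ≤ s := le_trans (le_max_left _ _) (le_of_lt hs)
      have hrw : (2*c)⁻¹ * s = s / (2*c) := by ring
      rw [hrw, div_le_div_iff₀ (by linarith) hc]
      nlinarith
    refine le_trans step2 (le_trans (setLIntegral_le_lintegral _ _) (lintegral_mono hpt))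
  -- convert to real tendsto
  have hGfin : ∀ i : ℕ, (∫⁻ s in Ioi (y + c*((i:ℝ)+1)), fe s) ≠ ⊤ :=
    fun i => ne_top_of_le_ne_top hfetot (setLIntegral_le_lintegral _ _)
  have hreal : ∀ i : ℕ, ∫ s in Ioi (y + c*((i:ℝ)+1)), f s
      = (∫⁻ s in Ioi (y + c*((i:ℝ)+1)), fe s).toReal := fun i =>
    integral_eq_lintegral_of_nonneg_ae (ae_of_all _ hf) hfm.aestronglyMeasurable
  rw [tendsto_atTop]
  intro M
  have hlt : ENNReal.ofReal M < ∑' i : ℕ, ∫⁻ s in Ioi (y + c*((i:ℝ)+1)), fe s := by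
    rw [hT]; exact ENNReal.ofReal_lt_top
  rw [ENNReal.tsum_eq_iSup_nat, lt_iSup_iff] at hlt
  obtain ⟨N, hN⟩ := hlt
  rw [eventually_atTop]
  refine ⟨N, fun n hn => ?_⟩
  have hSn : ∑ i ∈ Finset.range n, ∫ s in Ioi (y + c*((i:ℝ)+1)), f s
      = (∑ i ∈ Finset.range n, ∫⁻ s in Ioi (y + c*((i:ℝ)+1)), fe s).toReal := by
    rw [ENNReal.toReal_sum (fun i _ => hGfin i)]
    exact Finset.sum_congr rfl fun i _ => hreal i
  have hmono : (∑ i ∈ Finset.range N, ∫⁻ s in Ioi (y + c*((i:ℝ)+1)), fe s)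
      ≤ ∑ i ∈ Finset.range n, ∫⁻ s in Ioi (y + c*((i:ℝ)+1)), fe s :=
    Finset.sum_le_sum_of_subset (Finset.range_subset_range.2 hn)
  have hfinn : (∑ i ∈ Finset.range n, ∫⁻ s in Ioi (y + c*((i:ℝ)+1)), fe s) ≠ ⊤ := by
    rw [← lt_top_iff_ne_top]
    exact ENNReal.sum_lt_top.2 (fun i _ => lt_top_iff_ne_top.2 (hGfin i))
  have hle : ENNReal.ofReal M ≤ ∑ i ∈ Finset.range n, ∫⁻ s in Ioi (y + c*((i:ℝ)+1)), fe s :=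
    le_trans hN.le hmono
  rw [hSn]
  calc M ≤ (ENNReal.ofReal M).toReal := by
        rcases le_or_gt M 0 with h | h
        · exact le_trans h ENNReal.toReal_nonneg
        · rw [ENNReal.toReal_ofReal h.le]
    _ ≤ _ := ENNReal.toReal_le_toReal ENNReal.ofReal_ne_top hfinn |>.2 hle


/-- If the iid observations have infinite right-tail expectation `μ⁺ = ∫_0^∞ x f(x) dx = ∞`,
then the asymptotic δ-record probability vanishes for every `c` and `δ`. -/
theorem stmt0 (F f : ℝ → ℝ) (hf : ∀ x, 0 ≤ f x) (hfm : Measurable f)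
    (hcdf : ∀ x, F x = ∫ t in Iic x, f t)
    (hprob : ∫ x : ℝ, f x = 1)
    (hmu : ¬ IntegrableOn (fun x => x * f x) (Ioi (0 : ℝ))) :
    ∀ c δ : ℝ, pdelta F f c δ = 0 := by
  intro c δ
  have hfi : Integrable f := by
    by_contra h
    rw [integral_undef h] at hprob; norm_num at hprob
  have hF0 : ∀ t, 0 ≤ F t := fun t => by
    rw [hcdf t]; exact setIntegral_nonneg measurableSet_Iic fun x _ => hf x
  have hF1 : ∀ t, F t ≤ 1 := fun t => by
    rw [hcdf t, ← hprob]; exact setIntegral_le_integral hfi (ae_of_all _ hf)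
  have hFmono : ∀ a b : ℝ, a ≤ b → F a ≤ F b := by
    intro a b hab
    rw [hcdf a, hcdf b]
    exact setIntegral_mono_set hfi.integrableOn (ae_of_all _ hf)
      (HasSubset.Subset.eventuallyLE (Iic_subset_Iic.2 hab))
  have htail : ∀ t, 1 - F t = ∫ s in Ioi t, f s := by
    intro t
    have h2 := integral_add_compl (measurableSet_Iic (a := t)) hfi
    rw [compl_Iic, hprob] at h2
    rw [hcdf t]; linarith
  have hFlt : ∀ t, F t < 1 := by
    intro t
    rcases lt_or_eq_of_le (hF1 t) with h | h
    · exact h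
    exfalso
    have htz : ∫ s in Ioi t, f s = 0 := by have := htail t; rw [h] at this; linarith
    have hzero : f =ᵐ[volume.restrict (Ioi t)] 0 :=
      (integral_eq_zero_iff_of_nonneg hf hfi.integrableOn).1 htz
    apply hmu
    set T := max t 0 with hT
    have h1 : IntegrableOn (fun x => x * f x) (Ioc 0 T) := by
      refine Integrable.mono (hfi.integrableOn.const_mul T)
        ((measurable_id.mul hfm).aestronglyMeasurable) ?_
      filter_upwards [ae_restrict_mem measurableSet_Ioc] with x hx
      rw [Real.norm_eq_abs, Real.norm_eq_abs, abs_of_nonneg (mul_nonneg hx.1.le (hf x)),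
        abs_of_nonneg (mul_nonneg (le_trans hx.1.le hx.2) (hf x))]
      exact mul_le_mul_of_nonneg_right hx.2 (hf x)
    have h2 : IntegrableOn (fun x => x * f x) (Ioi T) := by
      have hz2 : (fun x => x * f x) =ᵐ[volume.restrict (Ioi T)] 0 := by
        have := ae_restrict_of_ae_restrict_of_subset (Ioi_subset_Ioi (le_max_left t 0)) hzero
        filter_upwards [this] with x hx
        simp [hx]
      exact (integrable_zero _ _ _).congr hz2.symm
    refine (h1.union h2).mono_set ?_
    rw [Ioc_union_Ioi_eq_Ioi (le_max_right t 0)]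
  have key : ∀ x : ℝ, (∏' i : ℕ, F (x + c * ((i:ℝ) + 1) - δ)) = 0 := by
    intro x
    apply auxA (fun i => hF0 _) (fun i => hF1 _)
    apply auxProd (fun i => hF0 _)
    rcases le_or_gt c 0 with hc | hc
    · set ε := 1 - F (x + c - δ) with hε
      have hεpos : 0 < ε := by have := hFlt (x + c - δ); simp only [hε]; linarith
      refine tendsto_atTop_mono ?_ (Tendsto.atTop_mul_const hεpos tendsto_natCast_atTop_atTop)
      intro n
      calc (n:ℝ) * ε = ∑ _i ∈ Finset.range n, ε := by
            rw [Finset.sum_const, Finset.card_range, nsmul_eq_mul]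
        _ ≤ ∑ i ∈ Finset.range n, (1 - F (x + c*((i:ℝ)+1) - δ)) := by
            refine Finset.sum_le_sum (fun i _ => ?_)
            have harg : x + c*((i:ℝ)+1) - δ ≤ x + c - δ := by
              nlinarith [Nat.cast_nonneg (α := ℝ) i]
            have := hFmono _ _ harg
            simp only [hε]; linarith
    · have hts := auxSum f hf hfm hfi hmu c hc (x - δ)
      refine Tendsto.congr (fun n => Finset.sum_congr rfl fun i _ => ?_) hts
      rw [show (x - δ) + c*((i:ℝ)+1) = x + c*((i:ℝ)+1) - δ by ring, ← htail]
  simp only [pdelta]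
  rw [show (fun x : ℝ => (∏' i : ℕ, F (x + c * ((i:ℝ) + 1) - δ)) * f x) = (fun _ => (0:ℝ))
    from funext fun x => by rw [key x, zero_mul]]
  exact integral_zero _ _
end

section
/- If μ⁺ < ∞, c > 0 and x_+ − x_- > δ − c, then p_δ(c) > 0; conversely if c > 0 and x_+ − x_- ≤ δ − c then p_δ(c) = 0. -/
open MeasureTheory Set
open Filter


lemma myHasProd {u : ℕ → ℝ} (h0 : ∀ i, 0 ≤ u i) (h1 : ∀ i, u i ≤ 1) :
    HasProd u (⨅ s : Finset ℕ, ∏ i ∈ s, u i) := by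
  have anti : Antitone (fun s : Finset ℕ => ∏ i ∈ s, u i) := by
    intro s t hst
    calc ∏ i ∈ t, u i = (∏ i ∈ t \ s, u i) * ∏ i ∈ s, u i := (Finset.prod_sdiff hst).symm
      _ ≤ 1 * ∏ i ∈ s, u i := mul_le_mul_of_nonneg_right
          (Finset.prod_le_one (fun i _ => h0 i) (fun i _ => h1 i))
          (Finset.prod_nonneg fun i _ => h0 i)
      _ = ∏ i ∈ s, u i := one_mul _
  exact tendsto_atTop_ciInf anti ⟨0, by rintro x ⟨s, rfl⟩; exact Finset.prod_nonneg fun i _ => h0 i⟩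

lemma myTprod_nonneg {u : ℕ → ℝ} (h0 : ∀ i, 0 ≤ u i) (h1 : ∀ i, u i ≤ 1) :
    0 ≤ ∏' i, u i := by
  rw [(myHasProd h0 h1).tprod_eq]
  exact le_ciInf fun s => Finset.prod_nonneg fun i _ => h0 i

lemma myTprod_le_one {u : ℕ → ℝ} (h0 : ∀ i, 0 ≤ u i) (h1 : ∀ i, u i ≤ 1) :
    ∏' i, u i ≤ 1 := by
  rw [(myHasProd h0 h1).tprod_eq]
  exact ciInf_le_of_le ⟨0, by rintro x ⟨s, rfl⟩; exact Finset.prod_nonneg fun i _ => h0 i⟩ ∅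
    (by simp)

lemma myTprod_eq_zero {u : ℕ → ℝ} (h0 : ∀ i, 0 ≤ u i) (h1 : ∀ i, u i ≤ 1) (hz : u 0 = 0) :
    ∏' i, u i = 0 := by
  refine le_antisymm ?_ (myTprod_nonneg h0 h1)
  rw [(myHasProd h0 h1).tprod_eq]
  refine ciInf_le_of_le ⟨0, by rintro x ⟨s, rfl⟩; exact Finset.prod_nonneg fun i _ => h0 i⟩
    {0} (by simp [hz])

lemma myTprod_pos {u : ℕ → ℝ} (h0 : ∀ i, 0 < u i) (h1 : ∀ i, u i ≤ 1)
    (hs : Summable (fun i => 1 - u i)) : 0 < ∏' i, u i := by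
  have hlog : Summable (fun i => Real.log (u i)) := by
    refine Summable.of_norm_bounded_eventually_nat (g := fun i => 2 * (1 - u i)) (hs.mul_left 2) ?_
    have : ∀ᶠ i in atTop, 1 - u i < 1/2 := hs.tendsto_atTop_zero.eventually_lt_const (by norm_num)
    filter_upwards [this] with i hi
    have hu : (1:ℝ)/2 < u i := by linarith
    have hlogle : -Real.log (u i) ≤ 2 * (1 - u i) := by
      have h2 : Real.log (u i)⁻¹ ≤ (u i)⁻¹ - 1 := Real.log_le_sub_one_of_pos (by positivity)
      rw [Real.log_inv] at h2
      have h3 : (u i)⁻¹ - 1 ≤ 2 * (1 - u i) := by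
        have hui : (u i)⁻¹ ≤ 2 := by
          rw [inv_le_comm₀ (h0 i) (by norm_num)]
          linarith
        have : (u i)⁻¹ - 1 = (1 - u i) * (u i)⁻¹ := by
          field_simp
        rw [this]
        have h1u : 0 ≤ 1 - u i := by linarith [h1 i]
        nlinarith
      linarith
    have habs : ‖Real.log (u i)‖ = -Real.log (u i) := by
      rw [Real.norm_eq_abs, abs_of_nonpos (Real.log_nonpos (h0 i).le (h1 i))]
    rw [habs]; exact hlogle
  have := (hlog.hasSum).rexp
  have heq : (Real.exp ∘ fun i => Real.log (u i)) = u := by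
    funext i; simp [Real.exp_log (h0 i)]
  rw [heq] at this
  rw [this.tprod_eq]
  exact Real.exp_pos _

lemma myTprod_measurable {u : ℝ → ℕ → ℝ} (hm : ∀ i, Measurable fun x => u x i)
    (h0 : ∀ x i, 0 ≤ u x i) (h1 : ∀ x i, u x i ≤ 1) :
    Measurable fun x => ∏' i, u x i := by
  have hlim : Tendsto (fun n x => ∏ i ∈ Finset.range n, u x i) atTop
      (nhds (fun x => ∏' i, u x i)) := by
    rw [tendsto_pi_nhds]
    intro x
    exact ((myHasProd (h0 x) (h1 x)).multipliable.hasProd).tendsto_prod_nat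
  exact measurable_of_tendsto_metrizable
    (fun n => Finset.measurable_prod _ (fun i _ => hm i)) hlim


lemma myExistsStart (xm xp : EReal) (hx : xm < xp) (c δ : ℝ) (hc : 0 < c)
    (hlt : ((δ - c : ℝ) : EReal) < xp - xm) :
    ∃ x₀ : ℝ, xm < (x₀ : EReal) ∧ (x₀ : EReal) < xp ∧ xm < ((x₀ + c - δ : ℝ) : EReal) := by
  revert hx hlt
  induction xm using EReal.rec with
  | bot =>
    intro hx _
    obtain ⟨x₀, _, h2⟩ := EReal.exists_between_coe_real hx
    exact ⟨x₀, EReal.bot_lt_coe _, h2, EReal.bot_lt_coe _⟩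
  | top => intro hx _; exact absurd hx (by simp)
  | coe m =>
    revert hc
    induction xp using EReal.rec with
    | bot => intro _ hx _; exact absurd hx (by simp)
    | top =>
      intro hc _ _
      refine ⟨max (m + 1) (m + δ - c + 1), ?_, EReal.coe_lt_top _, ?_⟩
      · rw [EReal.coe_lt_coe_iff]
        have := le_max_left (m + 1) (m + δ - c + 1); linarith
      · rw [EReal.coe_lt_coe_iff]
        have := le_max_right (m + 1) (m + δ - c + 1); linarith
    | coe p =>
      intro hc hx hlt
      rw [show (p : EReal) - (m : EReal) = ((p - m : ℝ) : EReal) from (EReal.coe_sub p m).symm,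
        EReal.coe_lt_coe_iff] at hlt
      have hmp : (m : ℝ) < p := by exact_mod_cast hx
      obtain ⟨x₀, h1, h2⟩ := exists_between (show max m (m + δ - c) < p from
        max_lt hmp (by linarith))
      have hm1 : m < x₀ := lt_of_le_of_lt (le_max_left _ _) h1
      have hm2 : m + δ - c < x₀ := lt_of_le_of_lt (le_max_right _ _) h1
      exact ⟨x₀, by exact_mod_cast hm1, by exact_mod_cast h2, by
        rw [EReal.coe_lt_coe_iff]; linarith⟩

lemma myBothReal (xm xp : EReal) (hx : xm < xp) (c δ : ℝ)
    (hb : xp - xm ≤ ((δ - c : ℝ) : EReal)) :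
    ∃ m p : ℝ, xm = (m : EReal) ∧ xp = (p : EReal) ∧ p - m ≤ δ - c := by
  revert hx hb
  induction xm using EReal.rec with
  | bot =>
    intro hx hb
    rw [EReal.sub_bot (ne_bot_of_gt hx)] at hb
    exact absurd hb (not_le.2 (EReal.coe_lt_top _))
  | top => intro hx _; exact absurd hx (by simp)
  | coe m =>
    induction xp using EReal.rec with
    | bot => intro hx _; exact absurd hx (by simp)
    | top =>
      intro _ hb
      rw [EReal.top_sub_coe] at hb
      exact absurd hb (not_le.2 (EReal.coe_lt_top _))
    | coe p =>
      intro _ hb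
      rw [show (p : EReal) - (m : EReal) = ((p - m : ℝ) : EReal) from (EReal.coe_sub p m).symm,
        EReal.coe_le_coe_iff] at hb
      exact ⟨m, p, rfl, rfl, hb⟩

/-- For `c > 0`: if `μ⁺ < ∞` and `x₊ − x₋ > δ − c` then `p_δ(c) > 0`; conversely if
`x₊ − x₋ ≤ δ − c` then `p_δ(c) = 0`. -/
theorem stmt1 (F f : ℝ → ℝ) (xm xp : EReal) (hx : xm < xp)
    (hf : ∀ x, 0 ≤ f x) (hfm : Measurable f)
    (hsupp : ∀ x : ℝ, 0 < f x ↔ (xm < (x : EReal) ∧ (x : EReal) < xp))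
    (hcdf : ∀ x, F x = ∫ t in Iic x, f t)
    (hprob : ∫ x : ℝ, f x = 1)
    (c δ : ℝ) (hc : 0 < c) :
    (IntegrableOn (fun x => x * f x) (Ioi (0 : ℝ)) ∧ ((δ - c : ℝ) : EReal) < xp - xm →
      0 < pdelta F f c δ) ∧
    (xp - xm ≤ ((δ - c : ℝ) : EReal) → pdelta F f c δ = 0) := by
  have hfi : Integrable f := by
    by_contra h
    rw [integral_undef h] at hprob
    norm_num at hprob
  have hF0 : ∀ y : ℝ, 0 ≤ F y := fun y => by
    rw [hcdf]; exact setIntegral_nonneg measurableSet_Iic fun t _ => hf t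
  have hF1 : ∀ y : ℝ, F y ≤ 1 := fun y => by
    rw [hcdf, ← hprob]
    exact setIntegral_le_integral hfi (Eventually.of_forall hf)
  have hu0 : ∀ x : ℝ, ∀ i : ℕ, 0 ≤ F (x + c * ((i : ℝ) + 1) - δ) := fun x i => hF0 _
  have hu1 : ∀ x : ℝ, ∀ i : ℕ, F (x + c * ((i : ℝ) + 1) - δ) ≤ 1 := fun x i => hF1 _
  have hFpos : ∀ y : ℝ, xm < (y : EReal) → 0 < F y := by
    intro y hy
    obtain ⟨r, hr1, hr2⟩ := EReal.exists_between_coe_real (lt_min hy hx)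
    have hry : (r : ℝ) < y := by
      have := hr2.trans_le (min_le_left _ _); exact_mod_cast this
    have hrp : (r : EReal) < xp := hr2.trans_le (min_le_right _ _)
    obtain ⟨q, hq1, hq2⟩ := EReal.exists_between_coe_real hr1
    have hqr : q < r := by exact_mod_cast hq2
    have hpos_on : ∀ t ∈ Ioo q r, 0 < f t := by
      intro t ht
      refine (hsupp t).2 ⟨hq1.trans ?_, lt_of_lt_of_le ?_ hrp.le⟩
      · exact_mod_cast ht.1
      · exact_mod_cast ht.2
    have h1 : 0 < ∫ t in Ioo q r, f t := by
      rw [setIntegral_pos_iff_support_of_nonneg_ae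
        (Eventually.filter_mono (ae_mono Measure.restrict_le_self) (Eventually.of_forall hf))
        hfi.integrableOn]
      have hss : Function.support f ∩ Ioo q r = Ioo q r :=
        inter_eq_right.2 fun t ht => (hpos_on t ht).ne'
      rw [hss, Real.volume_Ioo]
      exact ENNReal.ofReal_pos.2 (by linarith)
    calc (0:ℝ) < ∫ t in Ioo q r, f t := h1
      _ ≤ ∫ t in Iic y, f t := setIntegral_mono_set hfi.integrableOn
          (Eventually.filter_mono (ae_mono Measure.restrict_le_self) (Eventually.of_forall hf))
          (Eventually.of_forall fun t ht => le_of_lt (lt_of_lt_of_le ht.2 hry.le))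
      _ = F y := (hcdf y).symm
  have hFcompl : ∀ y : ℝ, 1 - F y = ∫ t in Ioi y, f t := by
    intro y
    have h := integral_add_compl (measurableSet_Iic (a := y)) hfi
    rw [compl_Iic] at h
    rw [hcdf]; linarith [h.trans hprob]
  have hFmono : Monotone F := fun y z hyz => by
    rw [hcdf, hcdf]
    exact setIntegral_mono_set hfi.integrableOn
      (Eventually.filter_mono (ae_mono Measure.restrict_le_self) (Eventually.of_forall hf))
      (Eventually.of_forall fun t ht => le_trans ht hyz)
  have hFmeas : Measurable F := hFmono.measurable
  have hPmeas : Measurable fun x : ℝ => ∏' i : ℕ, F (x + c * ((i : ℝ) + 1) - δ) :=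
    myTprod_measurable (fun i => hFmeas.comp (by fun_prop)) hu0 hu1
  have hint : Integrable fun x : ℝ => (∏' i : ℕ, F (x + c * ((i : ℝ) + 1) - δ)) * f x := by
    refine Integrable.mono' hfi ((hPmeas.mul hfm).aestronglyMeasurable)
      (Eventually.of_forall ?_)
    intro x
    rw [Real.norm_eq_abs, abs_mul, abs_of_nonneg (hf x),
      abs_of_nonneg (myTprod_nonneg (hu0 x) (hu1 x))]
    calc (∏' i : ℕ, F (x + c * ((i : ℝ) + 1) - δ)) * f x ≤ 1 * f x :=
          mul_le_mul_of_nonneg_right (myTprod_le_one (hu0 x) (hu1 x)) (hf x)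
      _ = f x := one_mul _
  constructor
  · rintro ⟨hInt, hlt⟩
    -- integrability on Ioi a for all a
    have hIa : ∀ a : ℝ, IntegrableOn (fun t => t * f t) (Ioi a) := by
      intro a
      have hsub : Ioi a ⊆ Ioc a 0 ∪ Ioi 0 := by
        intro t ht
        rcases le_or_gt t 0 with h | h
        · exact Or.inl ⟨ht, h⟩
        · exact Or.inr h
      refine (IntegrableOn.union ?_ hInt).mono_set hsub
      refine Integrable.mono' ((hfi.const_mul |a|).integrableOn)
        ((measurable_id.mul hfm).aestronglyMeasurable)
        ((ae_restrict_iff' measurableSet_Ioc).2 (Eventually.of_forall ?_))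
      intro t ht
      rw [Real.norm_eq_abs, abs_mul]
      have h1 : |t| ≤ |a| := by
        rw [abs_of_nonpos ht.2]
        have := ht.1
        have := neg_abs_le a
        linarith
      calc |t| * |f t| ≤ |a| * |f t| := mul_le_mul_of_nonneg_right h1 (abs_nonneg _)
        _ = |a| * f t := by rw [abs_of_nonneg (hf t)]
    -- summability
    have hsum : ∀ x : ℝ, Summable fun i : ℕ => 1 - F (x + c * ((i : ℝ) + 1) - δ) := by
      intro x
      set a := x - δ with ha
      have hg : IntegrableOn (fun t => (t - a) / c * f t) (Ioi a) := by
        have h1 : IntegrableOn (fun t => 1 / c * (t * f t) - a / c * f t) (Ioi a) :=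
          ((hIa a).const_mul (1 / c)).sub (hfi.integrableOn.const_mul (a / c))
        have heq : (fun t : ℝ => (t - a) / c * f t) =
            fun t => 1 / c * (t * f t) - a / c * f t := by
          funext t; field_simp
        rw [heq]; exact h1
      refine summable_of_sum_range_le
        (c := ∫ t, (Ioi a).indicator (fun t => (t - a) / c * f t) t)
        (fun i => by linarith [hF1 (x + c * ((i : ℝ) + 1) - δ)]) ?_
      intro n
      have hterm : ∀ i : ℕ, 1 - F (x + c * ((i : ℝ) + 1) - δ) =
          ∫ t, (Ioi (a + c * ((i : ℝ) + 1))).indicator f t := by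
        intro i
        rw [hFcompl, show x + c * ((i : ℝ) + 1) - δ = a + c * ((i : ℝ) + 1) by rw [ha]; ring,
          ← integral_indicator measurableSet_Ioi]
      rw [Finset.sum_congr rfl fun i _ => hterm i,
        ← integral_finset_sum _ fun i _ => hfi.integrableOn.integrable_indicator measurableSet_Ioi]
      refine integral_mono
        (integrable_finset_sum _ fun i _ => hfi.integrableOn.integrable_indicator measurableSet_Ioi)
        (hg.integrable_indicator measurableSet_Ioi) ?_
      intro t
      beta_reduce
      by_cases hta : a < t
      · rw [indicator_of_mem (mem_Ioi.2 hta)]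
        have hite : ∀ i : ℕ, (Ioi (a + c * ((i : ℝ) + 1))).indicator f t =
            if a + c * ((i : ℝ) + 1) < t then f t else 0 := by
          intro i; simp [indicator_apply, mem_Ioi]
        rw [Finset.sum_congr rfl fun i _ => hite i, ← Finset.sum_filter, Finset.sum_const,
          nsmul_eq_mul]
        set K := (Finset.range n).filter fun i : ℕ => a + c * ((i : ℝ) + 1) < t with hK
        have hcard : (K.card : ℝ) ≤ (t - a) / c := by
          have hsub2 : K ⊆ Finset.range ⌊(t - a) / c⌋₊ := by
            intro i hi
            simp only [hK, Finset.mem_filter, Finset.mem_range] at hi ⊢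
            have hlt2 : ((i : ℝ) + 1) < (t - a) / c := by
              rw [lt_div_iff₀ hc]; linarith [hi.2]
            have h2 : i + 1 ≤ ⌊(t - a) / c⌋₊ := Nat.le_floor (by push_cast; linarith)
            omega
          calc (K.card : ℝ) ≤ (⌊(t - a) / c⌋₊ : ℝ) := by
                exact_mod_cast (Finset.card_le_card hsub2).trans_eq (Finset.card_range _)
            _ ≤ (t - a) / c := Nat.floor_le (div_nonneg (by linarith) hc.le)
        exact mul_le_mul_of_nonneg_right hcard (hf t)
      · rw [indicator_of_notMem (by simpa using hta)]
        refine le_of_eq (Finset.sum_eq_zero fun i _ => ?_)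
        refine indicator_of_notMem ?_ f
        simp only [mem_Ioi, not_lt]
        nlinarith [Nat.cast_nonneg (α := ℝ) i, not_lt.1 hta]
    -- choose interval
    obtain ⟨x₀, hA0, hB0, hC0⟩ := myExistsStart xm xp hx c δ hc hlt
    obtain ⟨x₂, h02, h2p⟩ := EReal.exists_between_coe_real hB0
    have h02' : x₀ < x₂ := by exact_mod_cast h02
    have hS : ∀ x ∈ Ioo x₀ x₂, 0 < (∏' i : ℕ, F (x + c * ((i : ℝ) + 1) - δ)) * f x := by
      intro x hxS
      have hA : xm < (x : EReal) := hA0.trans (by exact_mod_cast hxS.1)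
      have hB : (x : EReal) < xp :=
        lt_trans (show (x : EReal) < (x₂ : EReal) by exact_mod_cast hxS.2) h2p
      have hfx : 0 < f x := (hsupp x).2 ⟨hA, hB⟩
      have hP : 0 < ∏' i : ℕ, F (x + c * ((i : ℝ) + 1) - δ) := by
        refine myTprod_pos (fun i => hFpos _ ?_) (fun i => hF1 _) (hsum x)
        refine hC0.trans_le ?_
        rw [EReal.coe_le_coe_iff]
        have h1 : (1 : ℝ) ≤ (i : ℝ) + 1 := by
          have : (0 : ℝ) ≤ (i : ℝ) := Nat.cast_nonneg i
          linarith
        have h2 : c * 1 ≤ c * ((i : ℝ) + 1) := mul_le_mul_of_nonneg_left h1 hc.le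
        have h3 : x₀ < x := hxS.1
        linarith
      exact mul_pos hP hfx
    unfold pdelta
    rw [← integral_add_compl (measurableSet_Ioo (a := x₀) (b := x₂)) hint]
    have h2 : 0 ≤ ∫ x in (Ioo x₀ x₂)ᶜ, (∏' i : ℕ, F (x + c * ((i : ℝ) + 1) - δ)) * f x :=
      setIntegral_nonneg measurableSet_Ioo.compl fun x _ =>
        mul_nonneg (myTprod_nonneg (hu0 x) (hu1 x)) (hf x)
    have h1 : 0 < ∫ x in Ioo x₀ x₂, (∏' i : ℕ, F (x + c * ((i : ℝ) + 1) - δ)) * f x := by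
      rw [setIntegral_pos_iff_support_of_nonneg_ae
        (Eventually.filter_mono (ae_mono Measure.restrict_le_self) (Eventually.of_forall
          fun x => mul_nonneg (myTprod_nonneg (hu0 x) (hu1 x)) (hf x)))
        hint.integrableOn]
      have hss : Function.support (fun x => (∏' i : ℕ, F (x + c * ((i : ℝ) + 1) - δ)) * f x) ∩
          Ioo x₀ x₂ = Ioo x₀ x₂ :=
        inter_eq_right.2 fun x hxS => (hS x hxS).ne'
      rw [hss, Real.volume_Ioo]
      exact ENNReal.ofReal_pos.2 (by linarith)
    linarith
  · intro hb
    obtain ⟨m, p, hm, hp, hmp⟩ := myBothReal xm xp hx c δ hb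
    subst hm; subst hp
    have hzero : ∀ x : ℝ, (∏' i : ℕ, F (x + c * ((i : ℝ) + 1) - δ)) * f x = 0 := by
      intro x
      rcases eq_or_lt_of_le (hf x) with h | h
      · rw [← h, mul_zero]
      · have hx' := (hsupp x).1 h
        have hmx : (m : ℝ) < x := by exact_mod_cast hx'.1
        have hxp : (x : ℝ) < p := by exact_mod_cast hx'.2
        have hzero0 : F (x + c * (((0:ℕ) : ℝ) + 1) - δ) = 0 := by
          rw [hcdf]
          have hEq : EqOn f (fun _ => (0:ℝ)) (Iic (x + c * (((0:ℕ):ℝ) + 1) - δ)) := by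
            intro t ht
            simp only [mem_Iic] at ht
            have htm : t < m := by push_cast at ht; linarith
            have : ¬ 0 < f t := fun hft =>
              absurd ((hsupp t).1 hft).1 (not_lt.2 (by exact_mod_cast htm.le))
            exact le_antisymm (not_lt.1 this) (hf t)
          rw [setIntegral_congr_fun measurableSet_Iic hEq, integral_zero]
        rw [myTprod_eq_zero (hu0 x) (hu1 x) hzero0, zero_mul]
    unfold pdelta
    rw [show (fun x => (∏' i : ℕ, F (x + c * ((i:ℕ) + 1) - δ)) * f x) = fun _ => (0:ℝ) from
      funext hzero]
    exact integral_zero _ _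
end

section
/- For c > 0 and μ⁺ < ∞, the infinite product ∏_{i=1}^∞ F(x+ci−δ), viewed as a function of c, is continuous at every c ≠ 0, for every x in (x_-, x_+) with x ≠ x_- + δ − c. -/
open MeasureTheory Set Filter Topology

private lemma aux_hasProd_iInf (g : ℕ → ℝ) (h0 : ∀ i, 0 ≤ g i) (h1 : ∀ i, g i ≤ 1) :
    HasProd g (⨅ s : Finset ℕ, ∏ i ∈ s, g i) := by
  have hanti : Antitone (fun s : Finset ℕ => ∏ i ∈ s, g i) := by
    intro s t hst
    have h2 : ∏ i ∈ t \ s, g i ≤ 1 :=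
      Finset.prod_le_one (fun i _ => h0 i) (fun i _ => h1 i)
    have h3 : 0 ≤ ∏ i ∈ s, g i := Finset.prod_nonneg fun i _ => h0 i
    calc ∏ i ∈ t, g i = (∏ i ∈ t \ s, g i) * ∏ i ∈ s, g i := (Finset.prod_sdiff hst).symm
      _ ≤ 1 * ∏ i ∈ s, g i := mul_le_mul_of_nonneg_right h2 h3
      _ = ∏ i ∈ s, g i := one_mul _
  exact tendsto_atTop_ciInf hanti
    ⟨0, by rintro y ⟨s, rfl⟩; exact Finset.prod_nonneg fun i _ => h0 i⟩

private lemma aux_hasProd_zero (g : ℕ → ℝ) (h0 : ∀ i, 0 ≤ g i) (h1 : ∀ i, g i ≤ 1)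
    (hs : ∀ ε > (0:ℝ), ∃ j, g j < ε) : HasProd g 0 := by
  rw [HasProd, Metric.tendsto_nhds]
  intro ε hε
  obtain ⟨j, hj⟩ := hs ε hε
  rw [SummationFilter.unconditional_filter, Filter.eventually_atTop]
  refine ⟨{j}, fun s hs' => ?_⟩
  have hj_mem : j ∈ s := hs' (Finset.mem_singleton_self j)
  have hprod : ∏ i ∈ s, g i = g j * ∏ i ∈ s.erase j, g i :=
    (Finset.mul_prod_erase s g hj_mem).symm
  have hP1 : ∏ i ∈ s.erase j, g i ≤ 1 :=
    Finset.prod_le_one (fun i _ => h0 i) (fun i _ => h1 i)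
  have hP0 : 0 ≤ ∏ i ∈ s.erase j, g i := Finset.prod_nonneg fun i _ => h0 i
  have hnn : 0 ≤ ∏ i ∈ s, g i := Finset.prod_nonneg fun i _ => h0 i
  rw [Real.dist_eq, sub_zero, abs_of_nonneg hnn, hprod]
  calc g j * ∏ i ∈ s.erase j, g i ≤ g j * 1 := mul_le_mul_of_nonneg_left hP1 (h0 j)
    _ = g j := mul_one _
    _ < ε := hj

private lemma aux_one_sub_sum_le_prod (g : ℕ → ℝ) (h0 : ∀ i, 0 ≤ g i) (h1 : ∀ i, g i ≤ 1)
    (s : Finset ℕ) : 1 - ∑ i ∈ s, (1 - g i) ≤ ∏ i ∈ s, g i := by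
  induction s using Finset.induction with
  | empty => simp
  | @insert a s ha ih =>
    rw [Finset.sum_insert ha, Finset.prod_insert ha]
    have hS : 0 ≤ ∑ i ∈ s, (1 - g i) := Finset.sum_nonneg fun i _ => by linarith [h1 i]
    have hmul : g a * (1 - ∑ i ∈ s, (1 - g i)) ≤ g a * ∏ i ∈ s, g i :=
      mul_le_mul_of_nonneg_left ih (h0 a)
    have hmul2 : g a * (∑ i ∈ s, (1 - g i)) ≤ ∑ i ∈ s, (1 - g i) :=
      mul_le_of_le_one_left hS (h1 a)
    nlinarith [h0 a, h1 a]

private lemma aux_int (f : ℝ → ℝ) (hfm : Measurable f) (hIf : Integrable f)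
    (hmu : IntegrableOn (fun x => x * f x) (Ioi (0:ℝ))) (y : ℝ) :
    IntegrableOn (fun t => t * f t) (Ioi y) := by
  rcases le_or_gt 0 y with h | h
  · exact hmu.mono_set (Ioi_subset_Ioi h)
  · have h1 : IntegrableOn (fun t => t * f t) (Ioc y 0) := by
      have hb : Integrable (fun t => |y| * f t) (volume.restrict (Ioc y 0)) :=
        ((hIf.const_mul |y|)).integrableOn
      refine hb.mono ((measurable_id.mul hfm).aestronglyMeasurable) ?_
      refine (ae_restrict_iff' measurableSet_Ioc).2 (Filter.Eventually.of_forall fun t ht => ?_)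
      have h2 : |t| ≤ |y| := by
        rw [abs_of_nonpos ht.2, abs_of_neg h]; linarith [ht.1]
      simp only [Real.norm_eq_abs, abs_mul, abs_abs]
      exact mul_le_mul_of_nonneg_right h2 (abs_nonneg _)
    have h2 := h1.union hmu
    rwa [Set.Ioc_union_Ioi_eq_Ioi h.le] at h2

private lemma aux_summable (f : ℝ → ℝ) (hf : ∀ x, 0 ≤ f x) (hfm : Measurable f)
    (hIf : Integrable f) (hmu : IntegrableOn (fun x => x * f x) (Ioi (0:ℝ)))
    (a c₁ : ℝ) (hc₁ : 0 < c₁) :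
    Summable (fun i : ℕ => ∫ t in Ioi (a + c₁ * (i+1)), f t) := by
  have HInt : ∀ y : ℝ, IntegrableOn (fun t => (t - y) * f t) (Ioi y) := by
    intro y
    have h1 := aux_int f hfm hIf hmu y
    have h2 : IntegrableOn (fun t => y * f t) (Ioi y) := (hIf.const_mul y).integrableOn
    have h3 := h1.sub h2
    exact h3.congr (Filter.Eventually.of_forall fun t => by
      simp only [Pi.sub_apply]; ring)
  have Hnonneg : ∀ y : ℝ, 0 ≤ ∫ t in Ioi y, (t - y) * f t := fun y =>
    setIntegral_nonneg measurableSet_Ioi fun t ht =>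
      mul_nonneg (by linarith [mem_Ioi.1 ht]) (hf t)
  have key : ∀ y : ℝ, c₁ * (∫ t in Ioi (y + c₁), f t)
      + (∫ t in Ioi (y + c₁), (t - (y + c₁)) * f t) ≤ ∫ t in Ioi y, (t - y) * f t := by
    intro y
    have hd : Disjoint (Ioc y (y+c₁)) (Ioi (y+c₁)) := Ioc_disjoint_Ioi le_rfl
    have hu : Ioc y (y+c₁) ∪ Ioi (y+c₁) = Ioi y := Ioc_union_Ioi_eq_Ioi (by linarith)
    have i1 : IntegrableOn (fun t => (t - y) * f t) (Ioc y (y+c₁)) :=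
      (HInt y).mono_set Set.Ioc_subset_Ioi_self
    have i2 : IntegrableOn (fun t => (t - y) * f t) (Ioi (y+c₁)) :=
      (HInt y).mono_set (Ioi_subset_Ioi (by linarith))
    have h2 : (∫ t in Ioi y, (t - y) * f t)
        = (∫ t in Ioc y (y+c₁), (t - y) * f t) + ∫ t in Ioi (y+c₁), (t - y) * f t := by
      rw [← hu, setIntegral_union hd measurableSet_Ioi i1 i2]
    have h3 : (∫ t in Ioi (y+c₁), (t - y) * f t)
        = (∫ t in Ioi (y+c₁), (t - (y+c₁)) * f t) + c₁ * ∫ t in Ioi (y+c₁), f t := by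
      rw [← MeasureTheory.integral_const_mul,
        ← MeasureTheory.integral_add (HInt (y+c₁)) ((hIf.const_mul c₁).integrableOn)]
      exact integral_congr_ae (Filter.Eventually.of_forall fun t => by ring)
    have h4 : 0 ≤ ∫ t in Ioc y (y+c₁), (t - y) * f t :=
      setIntegral_nonneg measurableSet_Ioc fun t ht => mul_nonneg (by linarith [ht.1]) (hf t)
    linarith
  have hpartial : ∀ N : ℕ, ∑ i ∈ Finset.range N, c₁ * (∫ t in Ioi (a + c₁ * (i+1)), f t)
      ≤ (∫ t in Ioi a, (t - a) * f t)
        - ∫ t in Ioi (a + c₁ * N), (t - (a + c₁ * N)) * f t := by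
    intro N
    induction N with
    | zero => simp
    | succ N ih =>
      rw [Finset.sum_range_succ]
      have hk := key (a + c₁ * N)
      have e1 : a + c₁ * (N:ℝ) + c₁ = a + c₁ * ((N:ℝ)+1) := by ring
      rw [e1] at hk
      push_cast
      push_cast at ih
      linarith
  apply summable_of_sum_range_le (c := (∫ t in Ioi a, (t - a) * f t) / c₁)
  · exact fun n => setIntegral_nonneg measurableSet_Ioi fun t _ => hf t
  · intro n
    have h6 : c₁ * ∑ i ∈ Finset.range n, (∫ t in Ioi (a + c₁ * (i+1)), f t)
        ≤ ∫ t in Ioi a, (t - a) * f t := by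
      rw [Finset.mul_sum]
      linarith [hpartial n, Hnonneg (a + c₁ * n)]
    rw [le_div_iff₀ hc₁, mul_comm]
    exact h6

/-- If `μ⁺ < ∞`, the infinite product `∏_{i=1}^∞ F(x + c i − δ)`, as a function of the
trend `c`, is continuous at every `c ≠ 0`, for every `x ∈ (x₋, x₊)` with `x ≠ x₋ + δ − c`. -/
theorem stmt3 (F f : ℝ → ℝ) (xm xp : EReal) (hx : xm < xp)
    (hf : ∀ x, 0 ≤ f x) (hfm : Measurable f)
    (hsupp : ∀ x : ℝ, 0 < f x ↔ (xm < (x : EReal) ∧ (x : EReal) < xp))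
    (hcdf : ∀ x, F x = ∫ t in Iic x, f t)
    (hprob : ∫ x : ℝ, f x = 1)
    (hmu : IntegrableOn (fun x => x * f x) (Ioi (0 : ℝ)))
    (δ c x : ℝ) (hc : c ≠ 0)
    (hx1 : xm < (x : EReal)) (hx2 : (x : EReal) < xp)
    (hne : (x : EReal) ≠ xm + (δ : EReal) - (c : EReal)) :
    ContinuousAt (fun c' : ℝ => ∏' i : ℕ, F (x + c' * (i + 1) - δ)) c := by
  -- basic facts
  have hIf : Integrable f := by
    by_contra h
    rw [MeasureTheory.integral_undef h] at hprob
    norm_num at hprob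
  have hF0 : ∀ y : ℝ, 0 ≤ F y := fun y => by
    rw [hcdf]
    exact setIntegral_nonneg measurableSet_Iic fun t _ => hf t
  have hmono : Monotone F := by
    intro y z hyz
    rw [hcdf, hcdf]
    exact setIntegral_mono_set hIf.integrableOn (Filter.Eventually.of_forall hf)
      (HasSubset.Subset.eventuallyLE (Iic_subset_Iic.2 hyz))
  have hsplit : ∀ y : ℝ, F y + (∫ t in Ioi y, f t) = 1 := fun y => by
    rw [hcdf, intervalIntegral.integral_Iic_add_Ioi hIf.integrableOn hIf.integrableOn, hprob]
  have hF1 : ∀ y : ℝ, F y ≤ 1 := fun y => by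
    have h1 := hsplit y
    have h2 : 0 ≤ ∫ t in Ioi y, f t := setIntegral_nonneg measurableSet_Ioi fun t _ => hf t
    linarith
  have hcont : Continuous F := by
    have h1 : ∀ a b : ℝ, IntervalIntegrable f volume a b := fun a b => hIf.intervalIntegrable
    have h2 := intervalIntegral.continuous_primitive h1 0
    have h3 : Continuous fun y : ℝ => (∫ t in (0:ℝ)..y, f t) + F 0 :=
      h2.add continuous_const
    refine h3.congr fun y => ?_
    rw [← intervalIntegral.integral_Iic_sub_Iic hIf.integrableOn hIf.integrableOn,
      ← hcdf y, ← hcdf 0]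
    ring
  rcases lt_trichotomy c 0 with hclt | hceq | hcgt
  · -- negative trend: the product is identically 0 on a neighborhood
    have hFlim : Tendsto (fun n : ℕ => F (-(n : ℝ))) atTop (𝓝 0) := by
      have heq : ∀ n : ℕ, F (-(n : ℝ)) = ∫ t, (Iic (-(n:ℝ))).indicator f t := by
        intro n
        rw [hcdf, MeasureTheory.integral_indicator measurableSet_Iic]
      have hdct := MeasureTheory.tendsto_integral_of_dominated_convergence
        (F := fun (n : ℕ) (t : ℝ) => (Iic (-(n:ℝ))).indicator f t)
        (f := fun _ : ℝ => (0:ℝ)) (bound := f)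
        (fun n => (hfm.indicator measurableSet_Iic).aestronglyMeasurable)
        hIf
        (fun n => Filter.Eventually.of_forall fun t => by
          by_cases ht : t ∈ Iic (-(n:ℝ))
          · simp [Set.indicator_of_mem ht, Real.norm_eq_abs, abs_of_nonneg (hf t)]
          · simp [Set.indicator_of_notMem ht, hf t])
        (Filter.Eventually.of_forall fun t => by
          have hev : ∀ᶠ n : ℕ in atTop, (Iic (-(n:ℝ))).indicator f t = 0 := by
            obtain ⟨m, hm⟩ := exists_nat_gt (-t)
            refine Filter.eventually_atTop.2 ⟨m, fun n hn => Set.indicator_of_notMem ?_ _⟩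
            have hmn : (m:ℝ) ≤ n := Nat.cast_le.2 hn
            simp only [mem_Iic, not_le]
            linarith
          exact Tendsto.congr' (hev.mono fun n h => h.symm) tendsto_const_nhds)
      simpa [heq] using hdct
    have hsmall : ∀ ε > (0:ℝ), ∃ y : ℝ, F y < ε := by
      intro ε hε
      have := (Metric.tendsto_atTop.1 hFlim) ε hε
      obtain ⟨n, hn⟩ := this
      refine ⟨-(n:ℝ), ?_⟩
      have := hn n le_rfl
      rw [Real.dist_eq, sub_zero, abs_of_nonneg (hF0 _)] at this
      exact this
    have key : ∀ c' : ℝ, c' < 0 → (∏' i : ℕ, F (x + c' * (i + 1) - δ)) = 0 := by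
      intro c' hc'
      apply HasProd.tprod_eq
      apply aux_hasProd_zero _ (fun i => hF0 _) (fun i => hF1 _)
      intro ε hε
      obtain ⟨y, hy⟩ := hsmall ε hε
      obtain ⟨j, hj⟩ := exists_nat_ge ((x - δ - y) / (-c'))
      refine ⟨j, ?_⟩
      have hc'' : (0:ℝ) < -c' := by linarith
      have h1 : (x - δ - y) ≤ (-c') * ((j:ℝ) + 1) := by
        rw [div_le_iff₀ hc''] at hj
        nlinarith
      have h2 : x + c' * ((j:ℝ) + 1) - δ ≤ y := by nlinarith
      exact lt_of_le_of_lt (hmono h2) hy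
    have hev : (fun c' : ℝ => ∏' i : ℕ, F (x + c' * (i + 1) - δ)) =ᶠ[𝓝 c]
        (fun _ => (0:ℝ)) :=
      Filter.eventuallyEq_of_mem (Iio_mem_nhds hclt) (fun c' hc' => key c' hc')
    exact (continuousAt_const (y := (0:ℝ))).congr hev.symm
  · exact absurd hceq hc
  · -- positive trend
    set c₁ : ℝ := c / 2 with hc₁def
    have hc₁ : 0 < c₁ := by positivity
    have hcc : c₁ < c := by
      rw [hc₁def]; linarith
    have hcc2 : c < c + c := by linarith
    set M : ℕ → ℝ := fun i => 1 - F (x + c₁ * (i + 1) - δ) with hMdef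
    have hMnonneg : ∀ i, 0 ≤ M i := fun i => by
      simp only [hMdef]
      linarith [hF1 (x + c₁ * ((i:ℝ) + 1) - δ)]
    have hM : Summable M := by
      have h0 := aux_summable f hf hfm hIf hmu (x - δ) c₁ hc₁
      refine h0.congr fun i => ?_
      have h1 := hsplit (x + c₁ * ((i:ℝ) + 1) - δ)
      have e : x - δ + c₁ * ((i:ℝ) + 1) = x + c₁ * ((i:ℝ) + 1) - δ := by ring
      rw [e]
      simp only [hMdef]
      linarith
    have keybound : ∀ c' ∈ Icc c₁ (c + c), ∀ N : ℕ,
        |(∏' i : ℕ, F (x + c' * (i + 1) - δ))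
          - ∏ i ∈ Finset.range N, F (x + c' * (i + 1) - δ)| ≤ ∑' k : ℕ, M (k + N) := by
      intro c' hc' N
      set P : ℝ := ∏ i ∈ Finset.range N, F (x + c' * (i + 1) - δ) with hPdef
      have htail : HasProd (fun n : ℕ => F (x + c' * ((n + N : ℕ) + 1) - δ))
          (⨅ s : Finset ℕ, ∏ i ∈ s, F (x + c' * ((i + N : ℕ) + 1) - δ)) :=
        aux_hasProd_iInf _ (fun i => hF0 _) (fun i => hF1 _)
      set Q : ℝ := ∏' n : ℕ, F (x + c' * ((n + N : ℕ) + 1) - δ) with hQdef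
      have hQval : Q = ⨅ s : Finset ℕ, ∏ i ∈ s, F (x + c' * ((i + N : ℕ) + 1) - δ) :=
        htail.tprod_eq
      have hbdd : BddBelow (Set.range fun s : Finset ℕ =>
          ∏ i ∈ s, F (x + c' * ((i + N : ℕ) + 1) - δ)) :=
        ⟨0, by rintro z ⟨s, rfl⟩; exact Finset.prod_nonneg fun i _ => hF0 _⟩
      have hQle1 : Q ≤ 1 := by
        rw [hQval]
        have := ciInf_le hbdd (∅ : Finset ℕ)
        simpa using this
      set T : ℝ := ∑' k : ℕ, M (k + N) with hTdef
      have hTnn : 0 ≤ T := tsum_nonneg fun k => hMnonneg _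
      have hMsum : Summable fun k : ℕ => M (k + N) := (summable_nat_add_iff N).2 hM
      have hQge : 1 - T ≤ Q := by
        rw [hQval]
        refine le_ciInf fun s => ?_
        have hst : ∑ i ∈ s, (1 - F (x + c' * ((i + N : ℕ) + 1) - δ)) ≤ T := by
          have h1 : ∀ i ∈ s, (1 - F (x + c' * ((i + N : ℕ) + 1) - δ)) ≤ M (i + N) := by
            intro i _
            have hnn : (0:ℝ) ≤ ((i + N : ℕ) : ℝ) + 1 := by positivity
            have harg : x + c₁ * ((i + N : ℕ) + 1) - δ ≤ x + c' * ((i + N : ℕ) + 1) - δ := by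
              nlinarith [hc'.1]
            have := hmono harg
            simp only [hMdef]
            linarith
          calc ∑ i ∈ s, (1 - F (x + c' * ((i + N : ℕ) + 1) - δ))
              ≤ ∑ i ∈ s, M (i + N) := Finset.sum_le_sum h1
            _ ≤ T := Summable.sum_le_tsum s (fun i _ => hMnonneg _) hMsum
        have h2 := aux_one_sub_sum_le_prod (fun n : ℕ => F (x + c' * ((n + N : ℕ) + 1) - δ))
          (fun i => hF0 _) (fun i => hF1 _) s
        calc 1 - T ≤ 1 - ∑ i ∈ s, (1 - F (x + c' * ((i + N : ℕ) + 1) - δ)) := by linarith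
          _ ≤ ∏ i ∈ s, F (x + c' * ((i + N : ℕ) + 1) - δ) := h2
      have hPQ : P * Q = ∏' i : ℕ, F (x + c' * (i + 1) - δ) := by
        rw [hPdef, hQdef]
        exact_mod_cast Multipliable.prod_mul_tprod_nat_mul' (f := fun i : ℕ => F (x + c' * (i + 1) - δ))
          (k := N) htail.multipliable
      have hP0 : 0 ≤ P := Finset.prod_nonneg fun i _ => hF0 _
      have hP1 : P ≤ 1 := Finset.prod_le_one (fun i _ => hF0 _) (fun i _ => hF1 _)
      have h1 : P * Q ≤ P := mul_le_of_le_one_right hP0 hQle1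
      have h2 : P * (1 - T) ≤ P * Q := mul_le_mul_of_nonneg_left hQge hP0
      have h4 : P * T ≤ T := mul_le_of_le_one_left hTnn hP1
      rw [← hPQ]
      refine abs_le.2 ⟨by nlinarith, by linarith⟩
    have hT0 : Tendsto (fun N : ℕ => ∑' k : ℕ, M (k + N)) atTop (𝓝 0) :=
      tendsto_sum_nat_add M
    have htuo : TendstoUniformlyOn
        (fun (N : ℕ) (c' : ℝ) => ∏ i ∈ Finset.range N, F (x + c' * (i + 1) - δ))
        (fun c' : ℝ => ∏' i : ℕ, F (x + c' * (i + 1) - δ)) atTop (Icc c₁ (c + c)) := by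
      rw [Metric.tendstoUniformlyOn_iff]
      intro ε hε
      have hev : ∀ᶠ N : ℕ in atTop, (∑' k : ℕ, M (k + N)) < ε :=
        hT0.eventually_lt_const hε
      filter_upwards [hev] with N hN c' hc'
      rw [Real.dist_eq]
      exact lt_of_le_of_lt (keybound c' hc' N) hN
    have hPcont : ∀ N : ℕ,
        Continuous fun c' : ℝ => ∏ i ∈ Finset.range N, F (x + c' * (i + 1) - δ) := by
      intro N
      apply continuous_finset_prod
      intro i _
      exact hcont.comp (by continuity)
    have hcon := htuo.continuousOn
      (Filter.Eventually.of_forall fun N => (hPcont N).continuousOn).frequently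
    exact hcon.continuousAt (Icc_mem_nhds hcc hcc2)
end

section
/- The asymptotic δ-record probability p_δ(c) is right-continuous at c = 0, i.e. lim_{c→0⁺} p_δ(c) = 1 − F(x_+ + δ), assuming μ⁺ < ∞. -/
open MeasureTheory Set Filter Topology

lemma aux_hasProd {g : ℕ → ℝ} (h0 : ∀ i, 0 ≤ g i) (h1 : ∀ i, g i ≤ 1) :
    HasProd g (⨅ s : Finset ℕ, ∏ i ∈ s, g i) := by
  classical
  have hanti : Antitone (fun s : Finset ℕ => ∏ i ∈ s, g i) := by
    intro s t hst
    calc ∏ i ∈ t, g i = (∏ i ∈ t \ s, g i) * ∏ i ∈ s, g i := (Finset.prod_sdiff hst).symm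
    _ ≤ 1 * ∏ i ∈ s, g i :=
        mul_le_mul_of_nonneg_right
          (Finset.prod_le_one (fun i _ => h0 i) (fun i _ => h1 i))
          (Finset.prod_nonneg fun i _ => h0 i)
    _ = ∏ i ∈ s, g i := one_mul _
  exact tendsto_atTop_ciInf hanti
    ⟨0, by rintro _ ⟨s, rfl⟩; exact Finset.prod_nonneg fun i _ => h0 i⟩

lemma aux_tprod_eq {g : ℕ → ℝ} (h0 : ∀ i, 0 ≤ g i) (h1 : ∀ i, g i ≤ 1) :
    ∏' i, g i = ⨅ s : Finset ℕ, ∏ i ∈ s, g i :=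
  (aux_hasProd h0 h1).tprod_eq

lemma aux_tprod_nonneg {g : ℕ → ℝ} (h0 : ∀ i, 0 ≤ g i) (h1 : ∀ i, g i ≤ 1) :
    0 ≤ ∏' i, g i := by
  rw [aux_tprod_eq h0 h1]
  exact le_ciInf fun s => Finset.prod_nonneg fun i _ => h0 i

lemma aux_tprod_le {g : ℕ → ℝ} (h0 : ∀ i, 0 ≤ g i) (h1 : ∀ i, g i ≤ 1) (s : Finset ℕ) :
    ∏' i, g i ≤ ∏ i ∈ s, g i := by
  rw [aux_tprod_eq h0 h1]
  exact ciInf_le ⟨0, by rintro _ ⟨t, rfl⟩; exact Finset.prod_nonneg fun i _ => h0 i⟩ s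

lemma aux_tprod_le_one {g : ℕ → ℝ} (h0 : ∀ i, 0 ≤ g i) (h1 : ∀ i, g i ≤ 1) :
    ∏' i, g i ≤ 1 := by
  simpa using aux_tprod_le h0 h1 ∅

/-- If `μ⁺ < ∞`, the asymptotic δ-record probability is right-continuous at `c = 0`:
`lim_{c→0⁺} p_δ(c) = 1 − F(x₊ + δ)` (expressed as the tail mass of `f` beyond `x₊ + δ`). -/
theorem stmt4 (F f : ℝ → ℝ) (xm xp : EReal) (hx : xm < xp)
    (hf : ∀ x, 0 ≤ f x) (hfm : Measurable f)
    (hsupp : ∀ x : ℝ, 0 < f x ↔ (xm < (x : EReal) ∧ (x : EReal) < xp))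
    (hcdf : ∀ x, F x = ∫ t in Iic x, f t)
    (hprob : ∫ x : ℝ, f x = 1)
    (hmu : IntegrableOn (fun x => x * f x) (Ioi (0 : ℝ)))
    (δ : ℝ) :
    Filter.Tendsto (fun c : ℝ => pdelta F f c δ) (nhdsWithin 0 (Ioi 0))
      (nhds (∫ x in {x : ℝ | xp + (δ : EReal) < (x : EReal)}, f x)) := by
  classical
  have hfi : Integrable f := by
    by_contra h
    rw [integral_undef h] at hprob; norm_num at hprob
  have hF0 : ∀ y, 0 ≤ F y := fun y => by
    rw [hcdf]; exact setIntegral_nonneg measurableSet_Iic fun t _ => hf t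
  have hFmono : Monotone F := by
    intro a b hab
    rw [hcdf, hcdf]
    exact setIntegral_mono_set hfi.integrableOn
      (Filter.Eventually.of_forall fun t => hf t)
      (HasSubset.Subset.eventuallyLE (Iic_subset_Iic.2 hab))
  have hF1 : ∀ y, F y ≤ 1 := fun y => by
    rw [hcdf, ← hprob]
    exact setIntegral_le_integral hfi (Filter.Eventually.of_forall hf)
  have hFmeas : Measurable F := hFmono.measurable
  have hzero : ∀ t : ℝ, ¬ (xm < (t : EReal) ∧ (t : EReal) < xp) → f t = 0 := by
    intro t ht
    have h1 : ¬ 0 < f t := fun h => ht ((hsupp t).1 h)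
    have := hf t
    linarith [not_lt.1 h1]
  have hFone : ∀ y : ℝ, xp < (y : EReal) → F y = 1 := by
    intro y hy
    rw [hcdf, ← hprob]
    apply setIntegral_eq_integral_of_forall_compl_eq_zero
    intro t ht
    have hty : y < t := not_le.1 ht
    apply hzero
    rintro ⟨-, h2⟩
    exact absurd ((hy.trans (EReal.coe_lt_coe_iff.2 hty)).trans h2) (lt_irrefl _)
  have hFlt : ∀ b : ℝ, (b : EReal) < xp → F b < 1 := by
    intro b hb
    have hmax : max xm (b : EReal) < xp := max_lt hx hb
    obtain ⟨u, hu1, hu2⟩ := EReal.exists_between_coe_real hmax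
    obtain ⟨v, hv1, hv2⟩ := EReal.exists_between_coe_real hu2
    have huv : u < v := EReal.coe_lt_coe_iff.1 hv1
    have hbu : b < u := EReal.coe_lt_coe_iff.1 ((le_max_right _ _).trans_lt hu1)
    have hpos : 0 < ∫ t in Ioi b, f t := by
      rw [setIntegral_pos_iff_support_of_nonneg_ae
        (Filter.Eventually.of_forall fun t => hf t) hfi.integrableOn]
      refine lt_of_lt_of_le ?_ (measure_mono (?_ : Ioo u v ⊆ Function.support f ∩ Ioi b))
      · rw [Real.volume_Ioo]; exact ENNReal.ofReal_pos.2 (by linarith)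
      · intro t ht
        refine ⟨?_, hbu.trans ht.1⟩
        have : 0 < f t := (hsupp t).2
          ⟨(le_max_left _ _).trans_lt (hu1.trans (EReal.coe_lt_coe_iff.2 ht.1)),
           (EReal.coe_lt_coe_iff.2 ht.2).trans hv2⟩
        exact ne_of_gt this
    have hsplit : F b + ∫ t in Ioi b, f t = 1 := by
      rw [hcdf, ← hprob, ← compl_Iic]
      exact integral_add_compl measurableSet_Iic hfi
    linarith
  -- the limit set
  set S : Set ℝ := {x : ℝ | xp + (δ : EReal) < (x : EReal)} with hSdef
  have hSmeas : MeasurableSet S := measurable_coe_real_ereal measurableSet_Ioi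
  -- product tends to 0
  have hprod0 : ∀ x : ℝ, ((x - δ : ℝ) : EReal) < xp →
      Tendsto (fun c : ℝ => ∏' i : ℕ, F (x + c * (i + 1) - δ)) (𝓝[>] 0) (𝓝 0) := by
    intro x hxd
    obtain ⟨b, hb1, hb2⟩ := EReal.exists_between_coe_real hxd
    have hq1 : F b < 1 := hFlt b hb2
    have hq0 : 0 ≤ F b := hF0 b
    have hxb : x - δ < b := EReal.coe_lt_coe_iff.1 hb1
    set K := b - x + δ with hK
    have hKpos : 0 < K := by rw [hK]; linarith
    have upper : ∀ c ∈ Ioi (0 : ℝ),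
        (∏' i : ℕ, F (x + c * (i + 1) - δ)) ≤ F b ^ ⌊K / c⌋₊ := by
      intro c hc
      have hc' : 0 < c := hc
      have h0 : ∀ i : ℕ, 0 ≤ F (x + c * (i + 1) - δ) := fun i => hF0 _
      have h1 : ∀ i : ℕ, F (x + c * (i + 1) - δ) ≤ 1 := fun i => hF1 _
      calc ∏' i : ℕ, F (x + c * (i + 1) - δ)
          ≤ ∏ i ∈ Finset.range ⌊K / c⌋₊, F (x + c * (i + 1) - δ) := aux_tprod_le h0 h1 _
        _ ≤ ∏ _i ∈ Finset.range ⌊K / c⌋₊, F b := by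
            apply Finset.prod_le_prod (fun i _ => h0 i)
            intro i hi
            apply hFmono
            have hi' : (i : ℝ) + 1 ≤ (⌊K / c⌋₊ : ℝ) := by
              have := Finset.mem_range.1 hi
              exact_mod_cast Nat.succ_le_of_lt this
            have hfl : (⌊K / c⌋₊ : ℝ) ≤ K / c := Nat.floor_le (le_of_lt (div_pos hKpos hc'))
            have hcK : c * ((i : ℝ) + 1) ≤ K := by
              calc c * ((i : ℝ) + 1) ≤ c * (K / c) :=
                    mul_le_mul_of_nonneg_left (hi'.trans hfl) (le_of_lt hc')
                _ = K := by field_simp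
            linarith
        _ = F b ^ ⌊K / c⌋₊ := by rw [Finset.prod_const, Finset.card_range]
    have hupperT : Tendsto (fun c : ℝ => F b ^ ⌊K / c⌋₊) (𝓝[>] 0) (𝓝 0) := by
      apply (tendsto_pow_atTop_nhds_zero_of_lt_one hq0 hq1).comp
      apply tendsto_nat_floor_atTop.comp
      have h := tendsto_inv_nhdsGT_zero.const_mul_atTop (α := ℝ) hKpos
      exact h.congr (fun c => by rw [div_eq_mul_inv])
    apply tendsto_of_tendsto_of_tendsto_of_le_of_le' tendsto_const_nhds hupperT
    · exact eventually_nhdsWithin_of_forall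
        (fun c _ => aux_tprod_nonneg (fun i => hF0 _) (fun i => hF1 _))
    · exact eventually_nhdsWithin_of_forall upper
  -- product equals 1
  have hprod1 : ∀ x : ℝ, xp < ((x - δ : ℝ) : EReal) → ∀ c ∈ Ioi (0 : ℝ),
      (∏' i : ℕ, F (x + c * (i + 1) - δ)) = 1 := by
    intro x hxd c hc
    have hone : ∀ i : ℕ, F (x + c * (i + 1) - δ) = 1 := by
      intro i
      apply hFone
      refine hxd.trans (EReal.coe_lt_coe_iff.2 ?_)
      have hpos : 0 < c * ((i : ℝ) + 1) := mul_pos hc (by positivity)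
      linarith
    rw [tprod_congr hone, tprod_one]
  -- measurability of integrands
  have hGmeas : ∀ c : ℝ, AEStronglyMeasurable
      (fun x => (∏' i : ℕ, F (x + c * (i + 1) - δ)) * f x) volume := by
    intro c
    apply Measurable.aestronglyMeasurable
    apply Measurable.mul _ hfm
    have heq : (fun x : ℝ => ∏' i : ℕ, F (x + c * (i + 1) - δ))
        = fun x => ⨅ s : Finset ℕ, ∏ i ∈ s, F (x + c * (i + 1) - δ) := by
      funext x
      exact aux_tprod_eq (fun i => hF0 _) (fun i => hF1 _)
    rw [heq]
    apply Measurable.iInf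
    intro s
    apply Finset.measurable_prod
    intro i _
    exact hFmeas.comp (by measurability)
  have key : (∫ x in S, f x) = ∫ x, S.indicator f x := (integral_indicator hSmeas).symm
  rw [key]
  unfold pdelta
  apply tendsto_integral_filter_of_dominated_convergence f
  · exact Filter.Eventually.of_forall hGmeas
  · apply Filter.Eventually.of_forall
    intro c
    apply Filter.Eventually.of_forall
    intro x
    have h0 := aux_tprod_nonneg (fun i : ℕ => hF0 (x + c * (i + 1) - δ)) (fun i => hF1 _)
    have h1 := aux_tprod_le_one (fun i : ℕ => hF0 (x + c * (i + 1) - δ)) (fun i => hF1 _)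
    rw [Real.norm_eq_abs, abs_of_nonneg (mul_nonneg h0 (hf x))]
    exact mul_le_of_le_one_left (hf x) h1
  · exact hfi
  · have hnull : volume {x : ℝ | (x : EReal) = xp + (δ : EReal)} = 0 := by
      apply Set.Countable.measure_zero
      apply Set.Subsingleton.countable
      intro a ha b hb
      have : (a : EReal) = (b : EReal) := by
        rw [mem_setOf_eq] at ha hb
        rw [ha, hb]
      exact_mod_cast this
    have hae : ∀ᵐ x : ℝ, (x : EReal) ≠ xp + (δ : EReal) := by
      rw [ae_iff]
      simpa only [not_ne_iff] using hnull
    filter_upwards [hae] with x hxne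
    by_cases hfx : f x = 0
    · have heq : (fun c : ℝ => (∏' i : ℕ, F (x + c * (i + 1) - δ)) * f x)
          = fun _ => (0 : ℝ) := by
        funext c; rw [hfx, mul_zero]
      have hind : S.indicator f x = 0 := by
        by_cases hxS : x ∈ S
        · rw [indicator_of_mem hxS, hfx]
        · rw [indicator_of_notMem hxS]
      rw [heq, hind]
      exact tendsto_const_nhds
    · have hfx' : 0 < f x := lt_of_le_of_ne (hf x) (Ne.symm hfx)
      obtain ⟨hx1, hx2⟩ := (hsupp x).1 hfx'
      by_cases hxS : x ∈ S
      · rw [indicator_of_mem hxS]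
        have hxS' : xp + (δ : EReal) < (x : EReal) := hxS
        have hxd : xp < ((x - δ : ℝ) : EReal) := by
          rw [EReal.coe_sub]
          exact (EReal.lt_sub_iff_add_lt (by simp) (by simp)).2 hxS'
        apply Tendsto.congr' _ tendsto_const_nhds
        filter_upwards [self_mem_nhdsWithin] with c hc
        rw [hprod1 x hxd c hc, one_mul]
      · rw [indicator_of_notMem hxS]
        have hle : (x : EReal) ≤ xp + (δ : EReal) := not_lt.1 hxS
        have hlt : (x : EReal) < xp + (δ : EReal) := lt_of_le_of_ne hle hxne
        have hxd : ((x - δ : ℝ) : EReal) < xp := by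
          rw [EReal.coe_sub]
          exact (EReal.sub_lt_iff (by simp) (by simp)).2 hlt
        have h := (hprod0 x hxd).mul_const (f x)
        rw [zero_mul] at h
        exact h
end

section
/- Let F(x) = exp(−exp(−x)) be the Gumbel cdf and c ≠ 0. Then the probability that the n-th observation of Y_j = X_j + cj is a δ-record equals (1 − e^{−c}) / (1 − e^{−c} + e^{δ}(e^{−c} − e^{−nc})). -/
open MeasureTheory Set Real Filter Topology

lemma key_deriv (b : ℝ) (hb : b ≠ 0) (x : ℝ) :
    HasDerivAt (fun x : ℝ => exp (-(b * exp (-x))) / b)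
      (exp (-x) * exp (-(b * exp (-x)))) x := by
  have h1 : HasDerivAt (fun x : ℝ => -(b * exp (-x))) (b * exp (-x)) x := by
    have h0 : HasDerivAt (fun x : ℝ => exp (-x)) (exp (-x) * (-1)) x :=
      (hasDerivAt_neg x).exp
    have := ((h0.const_mul b).neg)
    exact this.congr_deriv (by ring)
  have h2 := h1.exp
  have h3 := h2.div_const b
  exact h3.congr_deriv (by field_simp)

lemma key_integral (b : ℝ) (hb : 0 < b) :
    ∫ x : ℝ, exp (-x) * exp (-(b * exp (-x))) = 1 / b := by
  set f' : ℝ → ℝ := fun x => exp (-x) * exp (-(b * exp (-x))) with hf'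
  set F : ℝ → ℝ := fun x => exp (-(b * exp (-x))) / b with hFdef
  have hderiv : ∀ x, HasDerivAt F (f' x) x := fun x => key_deriv b hb.ne' x
  have htop : Tendsto F atTop (𝓝 (1 / b)) := by
    have h : Tendsto (fun x : ℝ => -(b * exp (-x))) atTop (𝓝 (-(b * 0))) :=
      (tendsto_exp_neg_atTop_nhds_zero.const_mul b).neg
    have h2 : Tendsto (fun x : ℝ => exp (-(b * exp (-x)))) atTop (𝓝 (exp (-(b * 0)))) :=
      (Real.continuous_exp.tendsto _).comp h
    have := h2.div_const b
    simpa using this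
  have hbot : Tendsto F atBot (𝓝 0) := by
    have h0 : Tendsto (fun x : ℝ => exp (-x)) atBot atTop :=
      tendsto_exp_atTop.comp tendsto_neg_atBot_atTop
    have h1 : Tendsto (fun x : ℝ => -(b * exp (-x))) atBot atBot :=
      tendsto_neg_atTop_atBot.comp (h0.const_mul_atTop hb)
    have h2 : Tendsto (fun x : ℝ => exp (-(b * exp (-x)))) atBot (𝓝 0) :=
      tendsto_exp_atBot.comp h1
    have := h2.div_const b
    simpa using this
  have hbound : ∀ x : ℝ, f' x ≤ 4 / b ^ 2 * exp x := by
    intro x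
    have ht : (0:ℝ) < exp (-x) := exp_pos _
    have key : (b * exp (-x)) ^ 2 / 4 ≤ exp (b * exp (-x)) := by
      have h1 : b * exp (-x) / 2 + 1 ≤ exp (b * exp (-x) / 2) := Real.add_one_le_exp _
      have h2 : exp (b * exp (-x)) = exp (b * exp (-x) / 2) ^ 2 := by
        rw [← Real.exp_nat_mul]; ring_nf
      have h3 : 0 ≤ b * exp (-x) := by positivity
      nlinarith [Real.exp_pos (b * exp (-x) / 2)]
    have hxe : exp (-x) = 1 / exp x := by rw [Real.exp_neg]; ring
    have hexp : exp (-(b * exp (-x))) = 1 / exp (b * exp (-x)) := by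
      rw [Real.exp_neg]; ring
    have hEpos : (0:ℝ) < exp (b * exp (-x)) := exp_pos _
    -- f' x = exp(-x) / exp(b exp(-x)) ≤ exp(-x) * 4 / (b exp(-x))^2 = 4/(b^2) exp(x)
    rw [hf']
    simp only
    rw [hexp]
    calc exp (-x) * (1 / exp (b * exp (-x)))
        ≤ exp (-x) * (4 / (b * exp (-x)) ^ 2) := by
          apply mul_le_mul_of_nonneg_left _ ht.le
          rw [div_le_div_iff₀ hEpos (by positivity)]
          nlinarith
      _ = 4 / b ^ 2 * exp x := by
          rw [Real.exp_neg]
          field_simp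
  have hIoi : IntegrableOn f' (Ioi 0) :=
    integrableOn_Ioi_deriv_of_nonneg' (fun x _ => hderiv x)
      (fun x _ => by positivity) htop
  have hIic : IntegrableOn f' (Iic 0) := by
    apply Integrable.mono' (((integrableOn_exp_Iic 0).const_mul (4 / b ^ 2)))
    · exact (Continuous.aestronglyMeasurable (by continuity)).restrict
    · filter_upwards with x
      rw [Real.norm_eq_abs, abs_of_nonneg (by positivity)]
      exact hbound x
  have hint : Integrable f' := by
    rw [← integrableOn_univ, ← Set.Iic_union_Ioi (a := (0:ℝ))]
    exact hIic.union hIoi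
  rw [integral_of_hasDerivAt_of_tendsto hderiv hint hbot htop]
  simp

/-- Gumbel LDM: for `c ≠ 0`, the probability that the `n`-th observation is a δ-record is
`p_{n,δ}(c) = (1 − e^{−c}) / (1 − e^{−c} + e^{δ}(e^{−c} − e^{−nc}))`. -/
theorem stmt7 (c δ : ℝ) (hc : c ≠ 0) (n : ℕ) (hn : 1 ≤ n) :
    (∫ x : ℝ, (∏ i ∈ Finset.range (n - 1), exp (-exp (-(x + c * (i + 1) - δ)))) *
        (exp (-x) * exp (-exp (-x))))
      = (1 - exp (-c)) / (1 - exp (-c) + exp δ * (exp (-c) - exp (-(n : ℝ) * c))) := by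
  set S : ℝ := ∑ i ∈ Finset.range (n - 1), exp (δ - c * (i + 1)) with hSdef
  have hS0 : 0 ≤ S := Finset.sum_nonneg fun i _ => (exp_pos _).le
  have hprod : ∀ x : ℝ,
      (∏ i ∈ Finset.range (n - 1), exp (-exp (-(x + c * (i + 1) - δ)))) *
        (exp (-x) * exp (-exp (-x)))
      = exp (-x) * exp (-((S + 1) * exp (-x))) := by
    intro x
    rw [← Real.exp_sum]
    have h1 : ∑ i ∈ Finset.range (n - 1), -exp (-(x + c * (i + 1) - δ))
        = -(S * exp (-x)) := by
      rw [hSdef, Finset.sum_mul, ← Finset.sum_neg_distrib]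
      apply Finset.sum_congr rfl
      intro i _
      rw [← Real.exp_add]
      ring_nf
    rw [h1, show (-((S + 1) * exp (-x))) = -(S * exp (-x)) + -exp (-x) by ring,
      Real.exp_add]
    ring
  simp_rw [hprod]
  rw [key_integral (S + 1) (by linarith)]
  -- Now compute S
  have hr : exp (-c) ≠ 1 := by
    rw [Ne, Real.exp_eq_one_iff]
    simpa using hc
  have hd : 1 - exp (-c) ≠ 0 := sub_ne_zero.2 (Ne.symm hr)
  have hS : S * (1 - exp (-c)) = exp δ * (exp (-c) - exp (-(n : ℝ) * c)) := by
    have hterm : ∀ i ∈ Finset.range (n - 1),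
        exp (δ - c * (i + 1)) = exp δ * exp (-c) * exp (-c) ^ i := by
      intro i _
      rw [← Real.exp_nat_mul, ← Real.exp_add, ← Real.exp_add]
      ring_nf
    have hpow : exp (-c) * exp (-c) ^ (n - 1) = exp (-(n : ℝ) * c) := by
      rw [← pow_succ', Nat.sub_add_cancel hn, ← Real.exp_nat_mul]
      ring_nf
    rw [hSdef, Finset.sum_congr rfl hterm, ← Finset.mul_sum]
    calc exp δ * exp (-c) * (∑ i ∈ Finset.range (n - 1), exp (-c) ^ i) * (1 - exp (-c))
        = exp δ * exp (-c) *
            (-((∑ i ∈ Finset.range (n - 1), exp (-c) ^ i) * (exp (-c) - 1))) := by ring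
      _ = exp δ * exp (-c) * (1 - exp (-c) ^ (n - 1)) := by rw [geom_sum_mul]; ring
      _ = exp δ * (exp (-c) - exp (-(n : ℝ) * c)) := by rw [← hpow]; ring
  have hden : 1 - exp (-c) + exp δ * (exp (-c) - exp (-(n : ℝ) * c))
      = (S + 1) * (1 - exp (-c)) := by
    rw [← hS]; ring
  rw [hden, mul_comm, ← div_div, div_self hd]
end

section
/- For the Gumbel distribution with c = 0, the δ-record probability for the n-th observation equals 1 / ((n−1)e^{δ} + 1). -/
open MeasureTheory Real Filter Set

private lemma gumbel_integrable (a : ℝ) (ha : 1 ≤ a) :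
    Integrable (fun x : ℝ => exp (-x) * exp (-(a * exp (-x)))) := by
  have ha0 : 0 < a := lt_of_lt_of_le one_pos ha
  have hcont : Continuous (fun x : ℝ => exp (-x) * exp (-(a * exp (-x)))) := by
    continuity
  rw [← integrableOn_univ, ← Set.Iic_union_Ioi (a := (0 : ℝ))]
  apply IntegrableOn.union
  · -- on Iic 0 : bound by gaussian exp (-(1/4) * x^2)
    have hgauss : Integrable (fun x : ℝ => exp (-(1/4 : ℝ) * x ^ 2)) :=
      integrable_exp_neg_mul_sq (by norm_num)
    refine hgauss.integrableOn.mono' hcont.aestronglyMeasurable.restrict ?_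
    refine ae_restrict_of_forall_mem measurableSet_Iic fun x hx => ?_
    have hx0 : x ≤ 0 := hx
    have h1 : exp (-x) * exp (-(a * exp (-x))) = exp (-x - a * exp (-x)) := by
      rw [← exp_add]; ring_nf
    rw [h1, Real.norm_eq_abs, abs_of_pos (exp_pos _)]
    apply exp_le_exp.mpr
    have h2' : 1 + (-x) / 2 ≤ exp ((-x) / 2) := by
      have := Real.add_one_le_exp ((-x) / 2); linarith
    have h3 : (1 + (-x) / 2) ^ 2 ≤ exp (-x) := by
      have hnn : (0 : ℝ) ≤ 1 + (-x) / 2 := by linarith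
      calc (1 + (-x) / 2) ^ 2 ≤ exp ((-x) / 2) ^ 2 := by
              exact pow_le_pow_left₀ hnn h2' 2
        _ = exp (-x) := by rw [← Real.exp_nat_mul]; ring_nf
    have h4 : exp (-x) ≤ a * exp (-x) := le_mul_of_one_le_left (exp_pos _).le ha
    nlinarith [exp_pos (-x)]
  · -- on Ioi 0 : bound by exp (-x)
    have hexp : IntegrableOn (fun x : ℝ => exp (-(1 : ℝ) * x)) (Ioi 0) :=
      exp_neg_integrableOn_Ioi 0 one_pos
    refine hexp.mono' hcont.aestronglyMeasurable.restrict ?_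
    refine ae_restrict_of_forall_mem measurableSet_Ioi fun x _ => ?_
    rw [Real.norm_eq_abs, abs_of_pos (mul_pos (exp_pos _) (exp_pos _))]
    have h1 : exp (-(a * exp (-x))) ≤ 1 :=
      exp_le_one_iff.mpr (neg_nonpos.mpr (mul_nonneg ha0.le (exp_pos _).le))
    calc exp (-x) * exp (-(a * exp (-x))) ≤ exp (-x) * 1 := by
          exact mul_le_mul_of_nonneg_left h1 (exp_pos _).le
      _ = exp (-(1 : ℝ) * x) := by ring_nf

/-- Gumbel distribution, no drift (`c = 0`): the δ-record probability of the `n`-th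
observation is `1 / ((n−1)e^{δ} + 1)`. -/
theorem stmt8 (δ : ℝ) (n : ℕ) (hn : 1 ≤ n) :
    (∫ x : ℝ, (exp (-exp (-(x - δ)))) ^ (n - 1) * (exp (-x) * exp (-exp (-x))))
      = 1 / (((n : ℝ) - 1) * exp δ + 1) := by
  set a : ℝ := ((n : ℝ) - 1) * exp δ + 1 with ha_def
  have hn1 : (0 : ℝ) ≤ (n : ℝ) - 1 := by
    have : (1 : ℝ) ≤ (n : ℝ) := by exact_mod_cast hn
    linarith
  have ha : 1 ≤ a := by
    have := mul_nonneg hn1 (exp_pos δ).le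
    simp only [ha_def]; linarith
  have ha0 : 0 < a := lt_of_lt_of_le one_pos ha
  -- rewrite the integrand
  have hint : ∀ x : ℝ, (exp (-exp (-(x - δ)))) ^ (n - 1) * (exp (-x) * exp (-exp (-x)))
      = exp (-x) * exp (-(a * exp (-x))) := by
    intro x
    have hc : ((n - 1 : ℕ) : ℝ) = (n : ℝ) - 1 := by
      push_cast [Nat.cast_sub hn]; ring
    rw [← Real.exp_nat_mul, ← exp_add, ← exp_add, ← exp_add, hc]
    congr 1
    have : -(x - δ) = δ + -x := by ring
    rw [this, exp_add]
    ring
  simp_rw [hint]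
  -- FTC on the real line
  have hderiv : ∀ x : ℝ, HasDerivAt (fun x : ℝ => exp (-(a * exp (-x))) / a)
      (exp (-x) * exp (-(a * exp (-x)))) x := by
    intro x
    have h1 : HasDerivAt (fun x : ℝ => -(a * exp (-x)))
        (-(a * (exp (-x) * (-1)))) x := by
      exact (((hasDerivAt_neg x).exp).const_mul a).neg
    have h2 := h1.exp.div_const a
    refine h2.congr_deriv ?_
    rw [div_eq_iff ha0.ne']
    ring
  have hbot : Tendsto (fun x : ℝ => exp (-(a * exp (-x))) / a) atBot (nhds 0) := by
    have h1 : Tendsto (fun x : ℝ => exp (-x)) atBot atTop :=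
      tendsto_exp_atTop.comp tendsto_neg_atBot_atTop
    have h2 : Tendsto (fun x : ℝ => -(a * exp (-x))) atBot atBot := by
      simp_rw [neg_mul_eq_neg_mul]
      exact h1.const_mul_atTop_of_neg (neg_neg_iff_pos.mpr ha0)
    have h3 := (tendsto_exp_atBot.comp h2).div_const a
    simpa using h3
  have htop : Tendsto (fun x : ℝ => exp (-(a * exp (-x))) / a) atTop (nhds (1 / a)) := by
    have h1 : Tendsto (fun x : ℝ => exp (-x)) atTop (nhds 0) :=
      tendsto_exp_atBot.comp tendsto_neg_atTop_atBot
    have h2 : Tendsto (fun x : ℝ => -(a * exp (-x))) atTop (nhds (-(a * 0))) :=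
      (h1.const_mul a).neg
    have h3 := ((Real.continuous_exp.tendsto _).comp h2).div_const a
    simpa using h3
  have := integral_of_hasDerivAt_of_tendsto hderiv (gumbel_integrable a ha) hbot htop
  rw [this]
  ring
end

section
/- Let F be the Dagum cdf with a = 1: F(x) = (1 + b/x)^{−q} for x ≥ 0, and take trend c = b and δ = 0. Then the record probability for the n-th observation equals q n^{−q} ∫_0^1 t^{q−1}(1 − t(n−1)/n)^{−q} dt = q (n−1)^{−q} ∫_1^n (y−1)^{q−1}/y dy. -/
open MeasureTheory Set Real

/- Auxiliary lemmas -/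

lemma aux_prod (b q x : ℝ) (hb : 0 < b) (hx : 0 < x) (m : ℕ) :
    ∏ i ∈ Finset.range m, ((x + b * (i + 1)) / (x + b * (i + 1) + b)) ^ q
      = ((x + b) / (x + b * (m + 1))) ^ q := by
  induction m with
  | zero =>
      simp only [Finset.range_zero, Finset.prod_empty, Nat.cast_zero, zero_add, mul_one]
      rw [div_self (by positivity), Real.one_rpow]
  | succ m ih =>
      rw [Finset.prod_range_succ, ih,
        ← Real.mul_rpow (by positivity) (by positivity)]
      congr 1
      push_cast
      rw [div_mul_div_comm, div_eq_div_iff (by positivity) (by positivity)]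
      ring

lemma aux_integrand (b q nr : ℝ) (hb : 0 < b) (hn : 1 ≤ nr) (x : ℝ) (hx : 0 < x) :
    ((x + b) / (x + b * nr)) ^ q * (q * (x / (x + b)) ^ (q - 1) * (b / (x + b) ^ 2))
      = q * b * x ^ (q - 1) / ((x + b) * (x + b * nr) ^ q) := by
  have hxb : (0:ℝ) < x + b := by positivity
  have hxn : (0:ℝ) < x + b * nr := by nlinarith
  have h1 : (0:ℝ) < (x + b) ^ q := Real.rpow_pos_of_pos hxb q
  have h2 : (0:ℝ) < (x + b * nr) ^ q := Real.rpow_pos_of_pos hxn q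
  have h3 : (0:ℝ) < x ^ q := Real.rpow_pos_of_pos hx q
  rw [Real.div_rpow hxb.le hxn.le, Real.div_rpow hx.le hxb.le,
    Real.rpow_sub hx, Real.rpow_sub hxb, Real.rpow_one, Real.rpow_one]
  field_simp

lemma aux_image1 (b : ℝ) (hb : 0 < b) :
    (fun t => b * t / (1 - t)) '' Ioo (0:ℝ) 1 = Ioi 0 := by
  ext x
  simp only [mem_image, mem_Ioo, mem_Ioi]
  constructor
  · rintro ⟨t, ⟨ht0, ht1⟩, rfl⟩
    have h : (0:ℝ) < 1 - t := by linarith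
    positivity
  · intro hx
    have hxb : (0:ℝ) < x + b := by positivity
    refine ⟨x / (x + b), ⟨by positivity, ?_⟩, ?_⟩
    · rw [div_lt_one hxb]; linarith
    · have h1 : 1 - x / (x + b) = b / (x + b) := by field_simp; ring
      rw [h1]
      field_simp

lemma aux_inj1 (b : ℝ) (hb : 0 < b) :
    InjOn (fun t => b * t / (1 - t)) (Ioo (0:ℝ) 1) := by
  intro t ht s hs h
  simp only [mem_Ioo] at ht hs
  have h1 : (1:ℝ) - t ≠ 0 := by linarith [ht.2]
  have h2 : (1:ℝ) - s ≠ 0 := by linarith [hs.2]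
  simp only at h
  field_simp at h
  have h2 : t * (1 - s) = s * (1 - t) := by
    apply mul_left_cancel₀ hb.ne'
    linear_combination b * h
  linear_combination h2

lemma aux_deriv1 (b : ℝ) (t : ℝ) (ht : t ∈ Ioo (0:ℝ) 1) :
    HasDerivWithinAt (fun t => b * t / (1 - t)) (b / (1 - t) ^ 2) (Ioo (0:ℝ) 1) t := by
  simp only [mem_Ioo] at ht
  have h : (1:ℝ) - t ≠ 0 := by linarith [ht.2]
  have hd : HasDerivAt (fun t : ℝ => b * t / (1 - t))
      ((b * 1 * (1 - t) - b * t * (0 - 1)) / (1 - t) ^ 2) t := by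
    exact ((hasDerivAt_id t).const_mul b).div
      ((hasDerivAt_const t 1).sub (hasDerivAt_id t)) h
  have : (b * 1 * (1 - t) - b * t * (0 - 1)) / (1 - t) ^ 2 = b / (1 - t) ^ 2 := by
    field_simp
    ring
  rw [this] at hd
  exact hd.hasDerivWithinAt

lemma aux_ptB (b q nr : ℝ) (hb : 0 < b) (hq : 0 < q) (hn : 1 ≤ nr)
    (t : ℝ) (ht : t ∈ Ioo (0:ℝ) 1) :
    |b / (1 - t) ^ 2| *
      (q * b * (b * t / (1 - t)) ^ (q - 1) /
        ((b * t / (1 - t) + b) * (b * t / (1 - t) + b * nr) ^ q))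
      = q * nr ^ (-q) * (t ^ (q - 1) * (1 - t * (nr - 1) / nr) ^ (-q)) := by
  simp only [mem_Ioo] at ht
  obtain ⟨ht0, ht1⟩ := ht
  have hu : (0:ℝ) < 1 - t := by linarith
  have hnr : (0:ℝ) < nr := by linarith
  have hs : (0:ℝ) < nr - t * (nr - 1) := by nlinarith
  have e1 : b * t / (1 - t) + b = b / (1 - t) := by field_simp; ring
  have e2 : b * t / (1 - t) + b * nr = b * (nr - t * (nr - 1)) / (1 - t) := by
    field_simp; ring
  have e3 : 1 - t * (nr - 1) / nr = (nr - t * (nr - 1)) / nr := by field_simp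
  have hbt : (0:ℝ) < b * t / (1 - t) := by positivity
  have hA : (b * t / (1 - t)) ^ (q - 1)
      = (b ^ q * t ^ q / (1 - t) ^ q) / (b * t / (1 - t)) := by
    rw [Real.rpow_sub hbt, Real.rpow_one, Real.div_rpow (by positivity) hu.le,
      Real.mul_rpow hb.le ht0.le]
  have hB : (b * (nr - t * (nr - 1)) / (1 - t)) ^ q
      = b ^ q * (nr - t * (nr - 1)) ^ q / (1 - t) ^ q := by
    rw [Real.div_rpow (by positivity) hu.le, Real.mul_rpow hb.le hs.le]
  have hC : t ^ (q - 1) = t ^ q / t := by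
    rw [Real.rpow_sub ht0, Real.rpow_one]
  have hD : ((nr - t * (nr - 1)) / nr) ^ (-q) = nr ^ q / (nr - t * (nr - 1)) ^ q := by
    rw [Real.rpow_neg (by positivity), Real.div_rpow hs.le hnr.le, inv_div]
  have hE : nr ^ (-q) = (nr ^ q)⁻¹ := Real.rpow_neg hnr.le q
  rw [e1, e2, e3, abs_of_pos (by positivity : (0:ℝ) < b / (1 - t) ^ 2),
    hA, hB, hC, hD, hE]
  have p1 : (0:ℝ) < b ^ q := Real.rpow_pos_of_pos hb q
  have p2 : (0:ℝ) < t ^ q := Real.rpow_pos_of_pos ht0 q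
  have p3 : (0:ℝ) < (1 - t) ^ q := Real.rpow_pos_of_pos hu q
  have p4 : (0:ℝ) < (nr - t * (nr - 1)) ^ q := Real.rpow_pos_of_pos hs q
  have p5 : (0:ℝ) < nr ^ q := Real.rpow_pos_of_pos hnr q
  field_simp

lemma aux_image2 (nr : ℝ) (hn : 2 ≤ nr) :
    (fun y => nr * (y - 1) / ((nr - 1) * y)) '' Ioo (1:ℝ) nr = Ioo 0 1 := by
  have hm : (0:ℝ) < nr - 1 := by linarith
  have hnr : (0:ℝ) < nr := by linarith
  ext t
  simp only [mem_image, mem_Ioo]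
  constructor
  · rintro ⟨y, ⟨hy1, hyn⟩, rfl⟩
    have hy0 : (0:ℝ) < y := by linarith
    have hv : (0:ℝ) < y - 1 := by linarith
    constructor
    · positivity
    · rw [div_lt_one (by positivity)]
      nlinarith
  · rintro ⟨ht0, ht1⟩
    have hs : (0:ℝ) < nr - t * (nr - 1) := by nlinarith
    have hs1 : (1:ℝ) < nr - t * (nr - 1) := by nlinarith
    have hsn : nr - t * (nr - 1) < nr := by nlinarith
    refine ⟨nr / (nr - t * (nr - 1)), ⟨?_, ?_⟩, ?_⟩
    · rw [lt_div_iff₀ hs]; linarith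
    · rw [div_lt_iff₀ hs]; nlinarith
    · field_simp
      ring

lemma aux_inj2 (nr : ℝ) (hn : 2 ≤ nr) :
    InjOn (fun y => nr * (y - 1) / ((nr - 1) * y)) (Ioo (1:ℝ) nr) := by
  have hm : (0:ℝ) < nr - 1 := by linarith
  have hnr : (0:ℝ) < nr := by linarith
  intro y hy z hz h
  simp only [mem_Ioo] at hy hz
  have hy0 : y ≠ 0 := by linarith [hy.1]
  have hz0 : z ≠ 0 := by linarith [hz.1]
  simp only at h
  field_simp at h
  have hpos : nr * (nr - 1) ≠ 0 := by positivity
  have h2 : (y - 1) * z = (z - 1) * y := by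
    apply mul_left_cancel₀ hpos
    linear_combination nr * (nr - 1) * h
  linear_combination h2

lemma aux_deriv2 (nr : ℝ) (hn : 2 ≤ nr) (y : ℝ) (hy : y ∈ Ioo (1:ℝ) nr) :
    HasDerivWithinAt (fun y => nr * (y - 1) / ((nr - 1) * y))
      (nr / ((nr - 1) * y ^ 2)) (Ioo (1:ℝ) nr) y := by
  simp only [mem_Ioo] at hy
  have hm : (0:ℝ) < nr - 1 := by linarith
  have hy0 : (0:ℝ) < y := by linarith [hy.1]
  have h : (nr - 1) * y ≠ 0 := by positivity
  have hd : HasDerivAt (fun y : ℝ => nr * (y - 1) / ((nr - 1) * y))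
      ((nr * (1 - 0) * ((nr - 1) * y) - nr * (y - 1) * ((nr - 1) * 1)) / ((nr - 1) * y) ^ 2)
      y := by
    exact (((hasDerivAt_id y).sub (hasDerivAt_const y 1)).const_mul nr).div
      ((hasDerivAt_id y).const_mul (nr - 1)) h
  have : (nr * (1 - 0) * ((nr - 1) * y) - nr * (y - 1) * ((nr - 1) * 1)) / ((nr - 1) * y) ^ 2
      = nr / ((nr - 1) * y ^ 2) := by
    field_simp
    ring
  rw [this] at hd
  exact hd.hasDerivWithinAt

lemma aux_ptC (q nr : ℝ) (hq : 0 < q) (hn : 2 ≤ nr) (y : ℝ) (hy : y ∈ Ioo (1:ℝ) nr) :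
    |nr / ((nr - 1) * y ^ 2)| *
      ((nr * (y - 1) / ((nr - 1) * y)) ^ (q - 1) *
        (1 - nr * (y - 1) / ((nr - 1) * y) * (nr - 1) / nr) ^ (-q))
      = (nr / (nr - 1)) ^ q * ((y - 1) ^ (q - 1) / y) := by
  simp only [mem_Ioo] at hy
  have hm : (0:ℝ) < nr - 1 := by linarith
  have hnr : (0:ℝ) < nr := by linarith
  have hy0 : (0:ℝ) < y := by linarith [hy.1]
  have hv : (0:ℝ) < y - 1 := by linarith [hy.1]
  have e1 : 1 - nr * (y - 1) / ((nr - 1) * y) * (nr - 1) / nr = 1 / y := by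
    field_simp
    ring
  have hpsi : (0:ℝ) < nr * (y - 1) / ((nr - 1) * y) := by positivity
  have hA : ((1:ℝ) / y) ^ (-q) = y ^ q := by
    rw [one_div, Real.inv_rpow hy0.le, Real.rpow_neg hy0.le, inv_inv]
  have hB : (nr * (y - 1) / ((nr - 1) * y)) ^ (q - 1)
      = (nr ^ q * (y - 1) ^ q / ((nr - 1) ^ q * y ^ q)) / (nr * (y - 1) / ((nr - 1) * y)) := by
    rw [Real.rpow_sub hpsi, Real.rpow_one, Real.div_rpow (by positivity) (by positivity),
      Real.mul_rpow hnr.le hv.le, Real.mul_rpow hm.le hy0.le]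
  have hC : (y - 1) ^ (q - 1) = (y - 1) ^ q / (y - 1) := by
    rw [Real.rpow_sub hv, Real.rpow_one]
  have hD : (nr / (nr - 1)) ^ q = nr ^ q / (nr - 1) ^ q :=
    Real.div_rpow hnr.le hm.le q
  rw [e1, abs_of_pos (by positivity : (0:ℝ) < nr / ((nr - 1) * y ^ 2)), hA, hB, hC, hD]
  have p1 : (0:ℝ) < nr ^ q := Real.rpow_pos_of_pos hnr q
  have p2 : (0:ℝ) < (y - 1) ^ q := Real.rpow_pos_of_pos hv q
  have p3 : (0:ℝ) < (nr - 1) ^ q := Real.rpow_pos_of_pos hm q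
  have p4 : (0:ℝ) < y ^ q := Real.rpow_pos_of_pos hy0 q
  field_simp

/-- Dagum model with `a = 1`, trend `c = b`, `δ = 0`: the record probability of the `n`-th
observation equals `q n^{−q} ∫_0^1 t^{q−1}(1 − t(n−1)/n)^{−q} dt`
and also `q (n−1)^{−q} ∫_1^n (y−1)^{q−1}/y dy`. Here `F(x) = (1 + b/x)^{−q} = (x/(x+b))^q`
with density `f(x) = q (x/(x+b))^{q−1} b/(x+b)²` on `x > 0`. -/
theorem stmt10 (b q : ℝ) (hb : 0 < b) (hq : 0 < q) (n : ℕ) (hn : 2 ≤ n) :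
    (∫ x in Ioi (0 : ℝ),
        (∏ i ∈ Finset.range (n - 1),
          ((x + b * (i + 1)) / (x + b * (i + 1) + b)) ^ q) *
        (q * (x / (x + b)) ^ (q - 1) * (b / (x + b) ^ 2)))
      = q * (n : ℝ) ^ (-q) *
        ∫ t in Ioo (0 : ℝ) 1, t ^ (q - 1) * (1 - t * ((n : ℝ) - 1) / n) ^ (-q) ∧
    q * (n : ℝ) ^ (-q) *
        (∫ t in Ioo (0 : ℝ) 1, t ^ (q - 1) * (1 - t * ((n : ℝ) - 1) / n) ^ (-q))
      = q * ((n : ℝ) - 1) ^ (-q) * ∫ y in Ioo (1 : ℝ) (n : ℝ), (y - 1) ^ (q - 1) / y := by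
  have hnr2 : (2:ℝ) ≤ (n:ℝ) := by exact_mod_cast hn
  have hnr1 : (1:ℝ) ≤ (n:ℝ) := by linarith
  have hnr0 : (0:ℝ) < (n:ℝ) := by linarith
  have hm : (0:ℝ) < (n:ℝ) - 1 := by linarith
  constructor
  · -- first equality
    have step1 : (∫ x in Ioi (0 : ℝ),
        (∏ i ∈ Finset.range (n - 1),
          ((x + b * (i + 1)) / (x + b * (i + 1) + b)) ^ q) *
        (q * (x / (x + b)) ^ (q - 1) * (b / (x + b) ^ 2)))
        = ∫ x in Ioi (0:ℝ), q * b * x ^ (q - 1) / ((x + b) * (x + b * (n:ℝ)) ^ q) := by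
      apply setIntegral_congr_fun measurableSet_Ioi
      intro x hx
      simp only [mem_Ioi] at hx
      dsimp only
      rw [aux_prod b q x hb hx (n - 1)]
      have hcast : ((n - 1 : ℕ) : ℝ) + 1 = (n:ℝ) := by
        rw [Nat.cast_sub (by omega : 1 ≤ n)]
        push_cast
        ring
      rw [hcast]
      exact aux_integrand b q (n:ℝ) hb hnr1 x hx
    rw [step1, ← aux_image1 b hb,
      integral_image_eq_integral_abs_deriv_smul measurableSet_Ioo
        (fun t ht => aux_deriv1 b t ht) (aux_inj1 b hb),
      ← integral_const_mul]
    apply setIntegral_congr_fun measurableSet_Ioo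
    intro t ht
    dsimp only
    simp only [smul_eq_mul]
    exact aux_ptB b q (n:ℝ) hb hq hnr1 t ht
  · -- second equality
    have step2 : (∫ t in Ioo (0 : ℝ) 1, t ^ (q - 1) * (1 - t * ((n : ℝ) - 1) / n) ^ (-q))
        = ((n:ℝ) / ((n:ℝ) - 1)) ^ q * ∫ y in Ioo (1:ℝ) (n:ℝ), (y - 1) ^ (q - 1) / y := by
      rw [← aux_image2 (n:ℝ) hnr2,
        integral_image_eq_integral_abs_deriv_smul measurableSet_Ioo
          (fun y hy => aux_deriv2 (n:ℝ) hnr2 y hy) (aux_inj2 (n:ℝ) hnr2),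
        ← integral_const_mul]
      apply setIntegral_congr_fun measurableSet_Ioo
      intro y hy
      dsimp only
      simp only [smul_eq_mul]
      exact aux_ptC q (n:ℝ) hq hnr2 y hy
    rw [step2]
    rw [Real.div_rpow hnr0.le hm.le, Real.rpow_neg hnr0.le, Real.rpow_neg hm.le]
    have p1 : (0:ℝ) < (n:ℝ) ^ q := Real.rpow_pos_of_pos hnr0 q
    have p3 : (0:ℝ) < ((n:ℝ) - 1) ^ q := Real.rpow_pos_of_pos hm q
    field_simp
end

section
/- In the Dagum model with a = 1, c = b and q = 1, the record probability satisfies p_{n,0} = log(n)/(n−1) exactly, for n ≥ 2. -/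
open MeasureTheory Set Real

lemma telescope (b x : ℝ) (hb : 0 < b) (hx : 0 < x) (m : ℕ) :
    ∏ i ∈ Finset.range m, (x + b * (i + 1)) / (x + b * (i + 1) + b)
      = (x + b) / (x + b * (m + 1)) := by
  induction m with
  | zero => simp [div_self (show x + b ≠ 0 by positivity)]
  | succ m ih =>
    rw [Finset.prod_range_succ, ih]
    have h1 : (0:ℝ) < x + b * (m + 1) := by positivity
    push_cast
    rw [div_mul_div_comm, mul_comm (x + b), mul_div_mul_left _ _ h1.ne']
    ring_nf

/-- Loglogistic model (`Dagum with a = 1, q = 1`), trend `c = b`: the record probability of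
the `n`-th observation equals `log(n)/(n−1)` exactly, for `n ≥ 2`. -/
theorem stmt11 (b : ℝ) (hb : 0 < b) (n : ℕ) (hn : 2 ≤ n) :
    (∫ x in Ioi (0 : ℝ),
        (∏ i ∈ Finset.range (n - 1), (x + b * (i + 1)) / (x + b * (i + 1) + b)) *
        (b / (x + b) ^ 2))
      = Real.log n / ((n : ℝ) - 1) := by
  have hn1 : (1 : ℝ) < (n : ℝ) := by exact_mod_cast hn.trans_lt' one_lt_two
  have hn1' : (0 : ℝ) < (n : ℝ) - 1 := by linarith
  have hcast : ((n - 1 : ℕ) : ℝ) + 1 = (n : ℝ) := by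
    have : 1 ≤ n := le_trans (by norm_num) hn
    push_cast [Nat.cast_sub this]
    ring
  -- rewrite integrand
  have hcongr : ∫ x in Ioi (0 : ℝ),
        (∏ i ∈ Finset.range (n - 1), (x + b * (i + 1)) / (x + b * (i + 1) + b)) *
        (b / (x + b) ^ 2)
      = ∫ x in Ioi (0 : ℝ), ((n : ℝ) - 1)⁻¹ * ((x + b)⁻¹ - (x + b * n)⁻¹) := by
    apply setIntegral_congr_fun measurableSet_Ioi
    intro x hx
    simp only
    rw [telescope b x hb hx, hcast]
    have h1 : 0 < x + b := by have := hx.out; positivity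
    have h2 : 0 < x + b * n := by have := hx.out; positivity
    field_simp
    ring
  rw [hcongr, integral_const_mul]
  have key : ∫ x in Ioi (0 : ℝ), ((x + b)⁻¹ - (x + b * n)⁻¹) = Real.log n := by
    have hderiv : ∀ x ∈ Ici (0 : ℝ),
        HasDerivAt (fun x : ℝ => Real.log (x + b) - Real.log (x + b * n))
          ((x + b)⁻¹ - (x + b * n)⁻¹) x := by
      intro x hx
      have h1 : 0 < x + b := by have := hx.out; positivity
      have h2 : 0 < x + b * n := by have := hx.out; positivity
      exact ((Real.hasDerivAt_log h1.ne').comp x ((hasDerivAt_id x).add_const b) |>.sub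
        ((Real.hasDerivAt_log h2.ne').comp x ((hasDerivAt_id x).add_const (b * n)))).congr_deriv
        (by simp; rfl)
    have hpos : ∀ x ∈ Ioi (0 : ℝ), 0 ≤ (x + b)⁻¹ - (x + b * n)⁻¹ := by
      intro x hx
      have h1 : 0 < x + b := by have := hx.out; positivity
      have h2 : 0 < x + b * n := by have := hx.out; positivity
      have : x + b ≤ x + b * n := by nlinarith
      have := inv_anti₀ h1 this
      linarith
    have htend : Filter.Tendsto (fun x : ℝ => Real.log (x + b) - Real.log (x + b * n))
        Filter.atTop (nhds 0) := by
      have heq : ∀ᶠ x : ℝ in Filter.atTop,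
          Real.log (x + b) - Real.log (x + b * n) = Real.log ((x + b) / (x + b * n)) := by
        filter_upwards [Filter.eventually_gt_atTop 0] with x hx
        have h1 : 0 < x + b := by positivity
        have h2 : 0 < x + b * n := by positivity
        rw [Real.log_div h1.ne' h2.ne']
      rw [Filter.tendsto_congr' heq]
      have hfrac : Filter.Tendsto (fun x : ℝ => (x + b) / (x + b * n))
          Filter.atTop (nhds 1) := by
        have : ∀ᶠ x : ℝ in Filter.atTop,
            (x + b) / (x + b * n) = 1 - (b * n - b) / (x + b * n) := by
          filter_upwards [Filter.eventually_gt_atTop 0] with x hx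
          have h2 : 0 < x + b * n := by positivity
          field_simp
          ring
        rw [Filter.tendsto_congr' this]
        have : Filter.Tendsto (fun x : ℝ => (b * n - b) / (x + b * n))
            Filter.atTop (nhds 0) := by
          apply Filter.Tendsto.div_atTop tendsto_const_nhds
          exact Filter.tendsto_atTop_add_const_right _ _ Filter.tendsto_id
        simpa using (tendsto_const_nhds.sub this)
      have := (Real.continuousAt_log one_ne_zero).tendsto.comp hfrac
      simpa [Function.comp_def] using this
    have := integral_Ioi_of_hasDerivAt_of_nonneg' hderiv hpos htend
    rw [this]
    rw [zero_add, zero_add, Real.log_mul hb.ne' (by linarith : (0:ℝ) < (n:ℝ)).ne']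
    ring
  rw [key]
  rw [div_eq_inv_mul]
end

section
/- In the Dagum model with a = 1, c = b and integer q ≥ 2, p_{n,0}^{(q)} = (q/(n−1)^q)((−1)^{q−1} log n + Σ_{k=1}^{q−1} C(q−1,k)((−1)^{q−1−k}/k)(n^k − 1)), and consequently p_{n,0}^{(q)} ~ (q/(q−1))·(1/n) as n → ∞. -/
open MeasureTheory Set Real Filter

private lemma poly_id (m : ℕ) (y : ℝ) :
    (y - 1) ^ m = (-1 : ℝ) ^ m +
      ∑ k ∈ Finset.Icc 1 m, (m.choose k : ℝ) * (-1 : ℝ) ^ (m - k) * y ^ k := by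
  rw [sub_pow]
  have h : ∀ k ∈ Finset.range (m + 1),
      (-1 : ℝ) ^ (k + m) * y ^ k * (1:ℝ) ^ (m - k) * m.choose k
        = (m.choose k : ℝ) * (-1 : ℝ) ^ (m - k) * y ^ k := by
    intro k hk
    rw [Finset.mem_range] at hk
    have : (-1 : ℝ) ^ (k + m) = (-1 : ℝ) ^ (m - k) := by
      rw [show k + m = (m - k) + 2 * k by omega, pow_add]
      simp [pow_mul]
    rw [this]; ring
  rw [Finset.sum_congr rfl h]
  have : Finset.range (m + 1) = insert 0 (Finset.Icc 1 m) := by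
    ext k; simp [Finset.mem_range, Finset.mem_Icc]; omega
  rw [this, Finset.sum_insert (by simp)]
  simp

private lemma deriv_key (m : ℕ) (y : ℝ) (hy : 0 < y) :
    HasDerivAt (fun y : ℝ => (-1 : ℝ) ^ m * Real.log y +
        ∑ k ∈ Finset.Icc 1 m, (m.choose k : ℝ) * ((-1 : ℝ) ^ (m - k) / k) * y ^ k)
      ((y - 1) ^ m / y) y := by
  have h1 : HasDerivAt (fun y : ℝ => (-1 : ℝ) ^ m * Real.log y) ((-1:ℝ)^m * y⁻¹) y :=
    (Real.hasDerivAt_log hy.ne').const_mul _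
  have h2 : HasDerivAt (fun y : ℝ =>
      ∑ k ∈ Finset.Icc 1 m, (m.choose k : ℝ) * ((-1 : ℝ) ^ (m - k) / k) * y ^ k)
      (∑ k ∈ Finset.Icc 1 m, (m.choose k : ℝ) * ((-1 : ℝ) ^ (m - k) / k) * (k * y ^ (k-1))) y := by
    apply HasDerivAt.fun_sum
    intro k hk
    exact (hasDerivAt_pow k y).const_mul _
  have := h1.fun_add h2
  refine this.congr_deriv (Eq.symm ?_)
  rw [eq_comm, eq_div_iff hy.ne', add_mul, mul_assoc, inv_mul_cancel₀ hy.ne', mul_one,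
    Finset.sum_mul]
  have h3 : ∀ k ∈ Finset.Icc 1 m,
      (m.choose k : ℝ) * ((-1 : ℝ) ^ (m - k) / k) * (k * y ^ (k-1)) * y
        = (m.choose k : ℝ) * (-1 : ℝ) ^ (m - k) * y ^ k := by
    intro k hk
    rw [Finset.mem_Icc] at hk
    have hk0 : (k : ℝ) ≠ 0 := Nat.cast_ne_zero.2 (by omega)
    have : y ^ (k - 1) * y = y ^ k := by
      rw [← pow_succ]; congr 1; omega
    have expand : (m.choose k : ℝ) * ((-1 : ℝ) ^ (m - k) / k) * (k * y ^ (k-1)) * y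
        = (m.choose k : ℝ) * (-1 : ℝ) ^ (m - k) * ((k:ℝ)/k) * (y^(k-1) * y) := by ring
    rw [expand, div_self hk0, mul_one, this]
  rw [Finset.sum_congr rfl h3, ← poly_id]

private lemma closed_form (m : ℕ) (x : ℝ) (hx : 1 ≤ x) :
    ∫ y in Ioo (1 : ℝ) x, (y - 1) ^ m / y
      = (-1 : ℝ) ^ m * Real.log x +
        ∑ k ∈ Finset.Icc 1 m, (m.choose k : ℝ) * ((-1 : ℝ) ^ (m - k) / k) * (x ^ k - 1) := by
  have hcont : ContinuousOn (fun y : ℝ => (y - 1) ^ m / y) (Set.uIcc 1 x) := by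
    apply ContinuousOn.div
    · fun_prop
    · fun_prop
    · intro y hy
      rw [Set.uIcc_of_le hx] at hy
      exact ne_of_gt (lt_of_lt_of_le one_pos hy.1)
  have key := intervalIntegral.integral_eq_sub_of_hasDerivAt (f := fun y : ℝ =>
      (-1 : ℝ) ^ m * Real.log y +
        ∑ k ∈ Finset.Icc 1 m, (m.choose k : ℝ) * ((-1 : ℝ) ^ (m - k) / k) * y ^ k)
    (f' := fun y : ℝ => (y - 1) ^ m / y) (a := 1) (b := x)
    (fun y hy => by
      rw [Set.uIcc_of_le hx] at hy
      exact deriv_key m y (lt_of_lt_of_le one_pos hy.1))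
    (hcont.intervalIntegrable)
  rw [intervalIntegral.integral_of_le hx, MeasureTheory.integral_Ioc_eq_integral_Ioo] at key
  rw [key]
  simp only [Real.log_one, mul_zero, one_pow, zero_add]
  rw [add_sub_assoc, ← Finset.sum_sub_distrib]
  congr 1
  exact Finset.sum_congr rfl fun k hk => by ring

/-- Dagum model with `a = 1`, `c = b`, integer `q ≥ 2`: the record probability
`p_{n,0}^{(q)} = q(n−1)^{−q} ∫_1^n (y−1)^{q−1}/y dy` admits the closed form
`(q/(n−1)^q)((−1)^{q−1} log n + Σ_{k=1}^{q−1} C(q−1,k)((−1)^{q−1−k}/k)(n^k − 1))`, and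
consequently `p_{n,0}^{(q)} ~ (q/(q−1))·(1/n)` as `n → ∞`. -/
theorem stmt12 (q : ℕ) (hq : 2 ≤ q) :
    (∀ n : ℕ, 2 ≤ n →
      (q : ℝ) / ((n : ℝ) - 1) ^ q * ∫ y in Ioo (1 : ℝ) (n : ℝ), (y - 1) ^ (q - 1) / y
        = (q : ℝ) / ((n : ℝ) - 1) ^ q *
          ((-1 : ℝ) ^ (q - 1) * Real.log n +
            ∑ k ∈ Finset.Icc 1 (q - 1),
              ((q - 1).choose k : ℝ) * ((-1 : ℝ) ^ (q - 1 - k) / k) * ((n : ℝ) ^ k - 1))) ∧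
    Tendsto (fun n : ℕ =>
        ((q : ℝ) / ((n : ℝ) - 1) ^ q * ∫ y in Ioo (1 : ℝ) (n : ℝ), (y - 1) ^ (q - 1) / y)
          * (n : ℝ))
      atTop (nhds ((q : ℝ) / ((q : ℝ) - 1))) := by
  have hform : ∀ n : ℕ, 2 ≤ n →
      (∫ y in Ioo (1 : ℝ) (n : ℝ), (y - 1) ^ (q - 1) / y)
        = (-1 : ℝ) ^ (q - 1) * Real.log n +
            ∑ k ∈ Finset.Icc 1 (q - 1),
              ((q - 1).choose k : ℝ) * ((-1 : ℝ) ^ (q - 1 - k) / k) * ((n : ℝ) ^ k - 1) := by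
    intro n hn
    exact closed_form (q - 1) n (by exact_mod_cast Nat.one_le_iff_ne_zero.2 (by omega))
  constructor
  · intro n hn; rw [hform n hn]
  · obtain ⟨m, rfl⟩ : ∃ m, q = m + 1 := ⟨q - 1, by omega⟩
    have hm : 1 ≤ m := by omega
    have hm0 : (m : ℝ) ≠ 0 := Nat.cast_ne_zero.2 (by omega)
    simp only [Nat.add_sub_cancel] at hform ⊢
    set c : ℕ → ℝ := fun k => (m.choose k : ℝ) * ((-1 : ℝ) ^ (m - k) / k) with hc
    set g : ℕ → ℝ := fun n => (((m+1 : ℕ)):ℝ) * ((n : ℝ) / ((n : ℝ) - 1)) ^ (m+1) *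
      ((-1 : ℝ) ^ m * (Real.log n / (n : ℝ) ^ m) +
        ∑ k ∈ Finset.Icc 1 m, c k * (((n : ℝ) ^ k - 1) / (n : ℝ) ^ m)) with hg
    have heq : ∀ᶠ n : ℕ in atTop,
        g n = ((((m+1 : ℕ)):ℝ) / ((n : ℝ) - 1) ^ (m+1) *
          ∫ y in Ioo (1 : ℝ) (n : ℝ), (y - 1) ^ m / y) * (n : ℝ) := by
      filter_upwards [eventually_ge_atTop 2] with n hn
      have h2 : (2:ℝ) ≤ (n:ℝ) := by exact_mod_cast hn
      have hn1 : (n:ℝ) - 1 ≠ 0 := by nlinarith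
      have hn0 : (n:ℝ) ≠ 0 := by nlinarith
      rw [hform n hn]
      simp only [hg]
      have hsum : ∑ k ∈ Finset.Icc 1 m, c k * (((n : ℝ) ^ k - 1) / (n : ℝ) ^ m)
          = (∑ k ∈ Finset.Icc 1 m, c k * ((n : ℝ) ^ k - 1)) / (n : ℝ) ^ m := by
        rw [Finset.sum_div]
        exact Finset.sum_congr rfl fun k _ => (mul_div_assoc _ _ _).symm
      rw [hsum, ← mul_div_assoc, ← add_div]
      simp only [hc]
      have gen : ∀ S : ℝ, (((m+1:ℕ)):ℝ) * ((n:ℝ)/((n:ℝ)-1))^(m+1) * (S/(n:ℝ)^m)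
          = ((((m+1:ℕ)):ℝ)/((n:ℝ)-1)^(m+1) * S) * n := by
        intro S
        rw [div_pow]
        field_simp
        ring
      exact gen _
    -- limit of n/(n-1)
    have h_ratio : Tendsto (fun n : ℕ => (n : ℝ) / ((n : ℝ) - 1)) atTop (nhds 1) := by
      have h1 : Tendsto (fun x : ℝ => 1 + (x - 1)⁻¹) atTop (nhds (1 + 0)) :=
        tendsto_const_nhds.add (tendsto_inv_atTop_zero.comp
          (tendsto_atTop_add_const_right _ (-1) tendsto_id))
      have h2 : Tendsto (fun x : ℝ => x / (x - 1)) atTop (nhds 1) := by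
        rw [show (1:ℝ) = 1 + 0 by ring]
        apply Tendsto.congr' _ h1
        filter_upwards [eventually_ge_atTop (2:ℝ)] with x hx
        have hx1 : x - 1 ≠ 0 := by nlinarith
        simp only [add_zero]
        field_simp
        ring
      exact h2.comp tendsto_natCast_atTop_atTop
    -- limit of log n / n^m
    have h_log : Tendsto (fun n : ℕ => Real.log n / (n : ℝ) ^ m) atTop (nhds 0) := by
      have hub : Tendsto (fun n : ℕ => Real.log n / (n : ℝ)) atTop (nhds 0) := by
        have := (Real.tendsto_pow_log_div_mul_add_atTop 1 0 1 one_ne_zero).comp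
          tendsto_natCast_atTop_atTop
        simpa [Function.comp_def] using this
      apply tendsto_of_tendsto_of_tendsto_of_le_of_le' tendsto_const_nhds hub
      · filter_upwards [eventually_ge_atTop 1] with n hn
        have h1 : (1:ℝ) ≤ (n:ℝ) := by exact_mod_cast hn
        have := Real.log_nonneg h1
        positivity
      · filter_upwards [eventually_ge_atTop 1] with n hn
        have h1 : (1:ℝ) ≤ (n:ℝ) := by exact_mod_cast hn
        have hlog := Real.log_nonneg h1
        have hpow : (n:ℝ) ≤ (n:ℝ) ^ m := le_self_pow₀ h1 (by omega)
        exact div_le_div_of_nonneg_left hlog (by linarith) hpow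
    have h_inv : Tendsto (fun n : ℕ => ((n:ℝ))⁻¹) atTop (nhds 0) :=
      tendsto_inv_atTop_zero.comp tendsto_natCast_atTop_atTop
    -- limit of each sum term
    have h_term : ∀ k ∈ Finset.Icc 1 m, Tendsto
        (fun n : ℕ => c k * (((n : ℝ) ^ k - 1) / (n : ℝ) ^ m)) atTop
        (nhds (c k * (if k = m then 1 else 0))) := by
      intro k hk
      rw [Finset.mem_Icc] at hk
      apply Tendsto.const_mul
      have base : Tendsto (fun n : ℕ => ((n:ℝ)⁻¹) ^ (m - k) - ((n:ℝ)⁻¹) ^ m) atTop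
          (nhds ((0:ℝ) ^ (m - k) - (0:ℝ) ^ m)) := (h_inv.pow _).sub (h_inv.pow _)
      have hval : (0:ℝ) ^ (m - k) - (0:ℝ) ^ m = (if k = m then 1 else 0) := by
        rcases eq_or_ne k m with h | h
        · simp [h, zero_pow (show m ≠ 0 by omega)]
        · rw [if_neg h, zero_pow (show m - k ≠ 0 by omega), zero_pow (show m ≠ 0 by omega)]
          ring
      rw [← hval]
      apply Tendsto.congr' _ base
      filter_upwards [eventually_ge_atTop 1] with n hn
      have hn0 : (n:ℝ) ≠ 0 := Nat.cast_ne_zero.2 (by omega)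
      have hsplit : (n:ℝ) ^ m = (n:ℝ) ^ (m-k) * (n:ℝ) ^ k := by
        rw [← pow_add]; congr 1; omega
      rw [sub_div, inv_pow, inv_pow]
      congr 1
      · rw [hsplit, mul_comm, ← div_div, div_self (pow_ne_zero _ hn0), one_div]
      · rw [← one_div]
    have h_sum := tendsto_finset_sum _ h_term
    have hsumval : ∑ k ∈ Finset.Icc 1 m, c k * (if k = m then 1 else 0) = 1/(m:ℝ) := by
      rw [Finset.sum_eq_single_of_mem m (Finset.mem_Icc.2 ⟨hm, le_rfl⟩)]
      · simp [hc]
      · intro k _ hk; simp [hk]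
    have h_inner : Tendsto (fun n : ℕ =>
        (-1 : ℝ) ^ m * (Real.log n / (n : ℝ) ^ m) +
          ∑ k ∈ Finset.Icc 1 m, c k * (((n : ℝ) ^ k - 1) / (n : ℝ) ^ m)) atTop
        (nhds ((-1:ℝ)^m * 0 + ∑ k ∈ Finset.Icc 1 m, c k * (if k = m then 1 else 0))) :=
      (h_log.const_mul _).add h_sum
    have final : Tendsto g atTop
        (nhds ((((m+1:ℕ)):ℝ) * (1:ℝ)^(m+1) *
          ((-1:ℝ)^m * 0 + ∑ k ∈ Finset.Icc 1 m, c k * (if k = m then 1 else 0)))) :=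
      (tendsto_const_nhds.mul (h_ratio.pow (m+1))).mul h_inner
    have hlim : (((m+1:ℕ)):ℝ) * (1:ℝ)^(m+1) *
        ((-1:ℝ)^m * 0 + ∑ k ∈ Finset.Icc 1 m, c k * (if k = m then 1 else 0))
        = (((m+1:ℕ)):ℝ) / ((((m+1:ℕ)):ℝ) - 1) := by
      rw [hsumval]
      push_cast
      field_simp
      simp [hm0]
    rw [← hlim]
    exact Tendsto.congr' heq final
end

section
/- In the Dagum model with a = 1, c = b and 0 < q < 1, p_{n,0}^{(q)} ~ n^{−q} q Γ(1−q) Γ(q) as n → ∞. -/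
open MeasureTheory Set Real Filter

private lemma ofReal_beta_integrand {q : ℝ} (hq1 : q < 1) {x : ℝ} (hx : x ∈ Icc (0:ℝ) 1) :
    (x:ℂ) ^ ((q:ℂ) - 1) * ((1:ℂ) - x) ^ (-(q:ℂ)) = ((x ^ (q-1) * (1-x) ^ (-q) : ℝ) : ℂ) := by
  obtain ⟨h0, h1⟩ := hx
  have h1x : (0:ℝ) ≤ 1 - x := by linarith
  rw [Complex.ofReal_mul, Complex.ofReal_cpow h0 (q-1), Complex.ofReal_cpow h1x (-q)]
  push_cast
  ring

private lemma beta_real {q : ℝ} (hq0 : 0 < q) (hq1 : q < 1) :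
    ∫ x in Ioo (0:ℝ) 1, x ^ (q-1) * (1-x) ^ (-q) = Real.Gamma q * Real.Gamma (1-q) := by
  have hs : 0 < Complex.re (q : ℂ) := by simpa using hq0
  have ht : 0 < Complex.re ((1:ℂ) - q) := by simpa using (by linarith : (0:ℝ) < 1 - q)
  have key := Complex.Gamma_mul_Gamma_eq_betaIntegral hs ht
  rw [show (q:ℂ) + (1 - q) = 1 by ring, Complex.Gamma_one, one_mul] at key
  rw [Complex.betaIntegral] at key
  have congr1 : (∫ x in (0:ℝ)..1, (x:ℂ) ^ ((q:ℂ) - 1) * ((1:ℂ) - x) ^ ((1:ℂ) - q - 1))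
      = ((∫ x in (0:ℝ)..1, x ^ (q-1) * (1-x) ^ (-q) : ℝ) : ℂ) := by
    rw [← intervalIntegral.integral_ofReal]
    refine intervalIntegral.integral_congr fun x hx => ?_
    rw [show (1:ℂ) - q - 1 = -(q:ℂ) by ring]
    rw [Set.uIcc_of_le (by norm_num : (0:ℝ) ≤ 1)] at hx
    exact ofReal_beta_integrand hq1 hx
  rw [congr1] at key
  rw [show ((1:ℂ) - q) = ((1 - q : ℝ) : ℂ) by push_cast; ring, Complex.Gamma_ofReal,
    Complex.Gamma_ofReal, ← Complex.ofReal_mul] at key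
  have key2 : Real.Gamma q * Real.Gamma (1-q) = ∫ x in (0:ℝ)..1, x ^ (q-1) * (1-x) ^ (-q) := by
    exact_mod_cast key
  rw [intervalIntegral.integral_of_le (by norm_num : (0:ℝ) ≤ 1),
    integral_Ioc_eq_integral_Ioo] at key2
  exact key2.symm

private lemma beta_integrable {q : ℝ} (hq0 : 0 < q) (hq1 : q < 1) :
    IntegrableOn (fun x : ℝ => x ^ (q-1) * (1-x) ^ (-q)) (Ioo (0:ℝ) 1) := by
  have hs : 0 < Complex.re (q : ℂ) := by simpa using hq0
  have ht : 0 < Complex.re ((1:ℂ) - q) := by simpa using (by linarith : (0:ℝ) < 1 - q)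
  have h := Complex.betaIntegral_convergent hs ht
  rw [intervalIntegrable_iff_integrableOn_Ioc_of_le (by norm_num : (0:ℝ) ≤ 1)] at h
  have h2 : IntegrableOn (fun x : ℝ => ((x:ℂ) ^ ((q:ℂ) - 1) * ((1:ℂ) - x) ^ ((1:ℂ) - q - 1)).re)
      (Ioo (0:ℝ) 1) := (h.mono_set Ioo_subset_Ioc_self).re
  refine h2.congr_fun (fun x hx => ?_) measurableSet_Ioo
  beta_reduce
  rw [show (1:ℂ) - q - 1 = -(q:ℂ) by ring,
    ofReal_beta_integrand hq1 (Ioo_subset_Icc_self hx), Complex.ofReal_re]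

private lemma stmt13_image_eq : (fun x : ℝ => (1 - x)⁻¹) '' Ioo (0:ℝ) 1 = Ioi (1:ℝ) := by
  ext y
  constructor
  · rintro ⟨x, ⟨hx0, hx1⟩, rfl⟩
    have h0 : (0:ℝ) < 1 - x := by linarith
    exact mem_Ioi.mpr ((one_lt_inv₀ h0).mpr (by linarith))
  · intro hy
    have hy1 : (1:ℝ) < y := hy
    have hy0 : (0:ℝ) < y := by linarith
    have h2 : y⁻¹ < 1 := by
      rw [inv_lt_one₀ hy0]; exact hy1
    have h3 : 0 < y⁻¹ := inv_pos.mpr hy0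
    refine ⟨1 - y⁻¹, ⟨by linarith, by linarith⟩, ?_⟩
    simp [hy0.ne']

private lemma subst_eq {q : ℝ} (hq0 : 0 < q) (hq1 : q < 1) {x : ℝ} (hx : x ∈ Ioo (0:ℝ) 1) :
    |((1 - x) ^ 2)⁻¹| • (((1 - x)⁻¹ - 1) ^ (q-1) / (1 - x)⁻¹)
      = x ^ (q-1) * (1-x) ^ (-q) := by
  obtain ⟨hx0, hx1⟩ := hx
  set u := 1 - x with hudef
  have hu : (0:ℝ) < u := by simp [hudef]; linarith
  have h1 : u⁻¹ - 1 = x / u := by field_simp [hudef]; linarith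
  have e1 : (x/u) ^ (q-1) = x ^ (q-1) * u ^ (1-q) := by
    rw [Real.div_rpow hx0.le hu.le, div_eq_mul_inv, ← Real.rpow_neg hu.le, neg_sub]
  have e2 : (u^2)⁻¹ = u ^ (-2:ℝ) := by
    rw [show (u:ℝ)^2 = u ^ ((2:ℕ):ℝ) from (Real.rpow_natCast u 2).symm,
      ← Real.rpow_neg hu.le]
    norm_num
  have e4 : u ^ (-2:ℝ) * (u ^ (1-q) * u) = u ^ (-q) := by
    nth_rewrite 3 [← Real.rpow_one u]
    rw [← Real.rpow_add hu, ← Real.rpow_add hu]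
    congr 1
    ring
  rw [smul_eq_mul, h1, abs_of_pos (by positivity), div_eq_mul_inv ((x/u) ^ (q-1)), inv_inv,
    e1, e2]
  linear_combination x ^ (q-1) * e4

private lemma stmt13_hasDeriv (x : ℝ) (hx : x ∈ Ioo (0:ℝ) 1) :
    HasDerivWithinAt (fun x : ℝ => (1 - x)⁻¹) (((1 - x) ^ 2)⁻¹) (Ioo (0:ℝ) 1) x := by
  have hne : (1 - x) ≠ 0 := by obtain ⟨h0, h1⟩ := hx; intro h; linarith [h]
  have h : HasDerivAt (fun x : ℝ => (1 - x)) (-1) x := by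
    simpa using (hasDerivAt_id x).const_sub 1
  have := h.inv hne
  have h2 := this.hasDerivWithinAt (s := Ioo (0:ℝ) 1)
  simp at h2
  exact h2

private lemma stmt13_injOn : InjOn (fun x : ℝ => (1 - x)⁻¹) (Ioo (0:ℝ) 1) := by
  intro a ha b hb h
  have := inv_injective h
  linarith [this]

/-- Dagum model with `a = 1`, `c = b`, `0 < q < 1`: the record probability
`p_{n,0}^{(q)} = q(n−1)^{−q} ∫_1^n (y−1)^{q−1}/y dy` satisfies
`p_{n,0}^{(q)} ~ n^{−q} q Γ(1−q) Γ(q)` as `n → ∞`. -/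
theorem stmt13 (q : ℝ) (hq0 : 0 < q) (hq1 : q < 1) :
    Tendsto (fun n : ℕ =>
        (q * ((n : ℝ) - 1) ^ (-q) * ∫ y in Ioo (1 : ℝ) (n : ℝ), (y - 1) ^ (q - 1) / y)
          / ((n : ℝ) ^ (-q) * q * Real.Gamma (1 - q) * Real.Gamma q))
      atTop (nhds 1) := by
  set g : ℝ → ℝ := fun y => (y - 1) ^ (q - 1) / y with hg
  set I : ℝ := Real.Gamma (1 - q) * Real.Gamma q with hI
  have hIpos : 0 < I := mul_pos (Real.Gamma_pos_of_pos (by linarith)) (Real.Gamma_pos_of_pos hq0)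
  -- change of variables
  have himg := stmt13_image_eq
  have hderiv := stmt13_hasDeriv
  have hinj := stmt13_injOn
  have hcong : ∀ x ∈ Ioo (0:ℝ) 1,
      |((1 - x) ^ 2)⁻¹| • g ((1 - x)⁻¹) = x ^ (q-1) * (1-x) ^ (-q) := by
    intro x hx
    have := subst_eq hq0 hq1 hx
    simpa [hg] using this
  have hval : ∫ y in Ioi (1:ℝ), g y = I := by
    rw [← himg, integral_image_eq_integral_abs_deriv_smul measurableSet_Ioo hderiv hinj g,
      setIntegral_congr_fun measurableSet_Ioo hcong, beta_real hq0 hq1, hI]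
    ring
  have hint : IntegrableOn g (Ioi (1:ℝ)) := by
    rw [← himg, integrableOn_image_iff_integrableOn_abs_deriv_smul measurableSet_Ioo hderiv hinj g]
    exact (beta_integrable hq0 hq1).congr_fun (fun x hx => (hcong x hx).symm) measurableSet_Ioo
  -- tendsto of partial integrals
  have hF : Tendsto (fun n : ℕ => ∫ y in Ioo (1:ℝ) (n:ℝ), g y) atTop (nhds I) := by
    have h1 := intervalIntegral_tendsto_integral_Ioi 1 hint tendsto_natCast_atTop_atTop (μ := volume)
    rw [hval] at h1
    refine h1.congr' ?_
    filter_upwards [eventually_ge_atTop 1] with n hn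
    rw [intervalIntegral.integral_of_le (by exact_mod_cast hn : (1:ℝ) ≤ n),
      integral_Ioc_eq_integral_Ioo]
  have hA : Tendsto (fun n : ℕ => ((n:ℝ) - 1) ^ (-q) / (n:ℝ) ^ (-q)) atTop (nhds 1) := by
    have h0 : Tendsto (fun n : ℕ => ((n:ℝ) - 1) / (n:ℝ)) atTop (nhds 1) := by
      have := Filter.Tendsto.div_atTop (tendsto_const_nhds (x := (1:ℝ)))
        (tendsto_natCast_atTop_atTop (R := ℝ))
      have h2 : Tendsto (fun n : ℕ => 1 - 1 / (n:ℝ)) atTop (nhds (1 - 0)) :=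
        (tendsto_const_nhds).sub this
      rw [sub_zero] at h2
      refine h2.congr' ?_
      filter_upwards [eventually_ge_atTop 1] with n hn
      have : (n:ℝ) ≠ 0 := by positivity
      field_simp
    have h1 : Tendsto (fun n : ℕ => (((n:ℝ) - 1) / (n:ℝ)) ^ (-q)) atTop (nhds ((1:ℝ) ^ (-q))) :=
      h0.rpow_const (Or.inl one_ne_zero)
    rw [Real.one_rpow] at h1
    refine h1.congr' ?_
    filter_upwards [eventually_ge_atTop 1] with n hn
    have hn1 : (1:ℝ) ≤ (n:ℝ) := by exact_mod_cast hn
    rw [Real.div_rpow (by linarith) (by linarith)]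
  have hB : Tendsto (fun n : ℕ => (∫ y in Ioo (1:ℝ) (n:ℝ), g y) / I) atTop (nhds 1) := by
    have := hF.div_const I
    rwa [div_self hIpos.ne'] at this
  have hAB := hA.mul hB
  rw [mul_one] at hAB
  refine hAB.congr' ?_
  filter_upwards [eventually_ge_atTop 1] with n hn
  have hn0 : (0:ℝ) < (n:ℝ) := by exact_mod_cast Nat.lt_of_lt_of_le Nat.zero_lt_one hn
  have hrne : ((n:ℝ)) ^ (-q) ≠ 0 := (Real.rpow_pos_of_pos hn0 _).ne'
  have hq' : q ≠ 0 := hq0.ne'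
  have hG1 : Real.Gamma (1-q) ≠ 0 := (Real.Gamma_pos_of_pos (by linarith : (0:ℝ) < 1 - q)).ne'
  have hG2 : Real.Gamma q ≠ 0 := (Real.Gamma_pos_of_pos hq0).ne'
  have hIne : I ≠ 0 := hIpos.ne'
  field_simp [hI]
  ring
end

section
/- Let F(x) = 1 − 1/x for x > 1 (Pareto) and c = 1. Then for δ ≠ n−1, the δ-record probability p_{n,δ} = (1/(n−1−δ)^2)((n−1) log((n − min{1,δ})/max{1,δ}) − min{1,δ}(n−1−δ)), and p_{n,δ} = 1/(2(n−1)) if δ = n−1. -/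
open MeasureTheory Set Real Filter

lemma aux_deriv (δ c K : ℝ) (hc : c ≠ 0) (hK : K = (c + δ)/c^2) {x : ℝ} (hx : 0 < x)
    (hxc : 0 < x + c) :
    HasDerivAt (fun y => K * (Real.log y - Real.log (y + c)) + δ/c * y⁻¹)
      ((x - δ)/(x^2 * (x + c))) x := by
  have h1 : HasDerivAt (fun y : ℝ => Real.log y) x⁻¹ x := Real.hasDerivAt_log hx.ne'
  have h2 : HasDerivAt (fun y : ℝ => Real.log (y + c)) (x + c)⁻¹ x := by
    have := (Real.hasDerivAt_log hxc.ne').comp x ((hasDerivAt_id x).add_const c)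
    simpa [Function.comp_def] using this
  have h3 : HasDerivAt (fun y : ℝ => y⁻¹) (-(x^2)⁻¹) x := hasDerivAt_inv hx.ne'
  have h := ((h1.sub h2).const_mul K).add (h3.const_mul (δ/c))
  refine h.congr_deriv ?_
  subst hK
  field_simp [hx.ne', hxc.ne', hc]
  ring

lemma aux_tendsto (δ c K : ℝ) :
    Tendsto (fun y => K * (Real.log y - Real.log (y + c)) + δ/c * y⁻¹) atTop (nhds 0) := by
  have h1 : Tendsto (fun y : ℝ => Real.log y - Real.log (y + c)) atTop (nhds 0) := by
    have hq : Tendsto (fun y : ℝ => y / (y + c)) atTop (nhds 1) := by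
      have h2 : Tendsto (fun y : ℝ => c / (y + c)) atTop (nhds 0) :=
        tendsto_const_nhds.div_atTop (tendsto_atTop_add_const_right _ c tendsto_id)
      have := (tendsto_const_nhds (x := (1:ℝ)) (f := atTop)).sub h2
      rw [sub_zero] at this
      refine this.congr' ?_
      filter_upwards [eventually_gt_atTop (max 0 (-c))] with y hy
      have hyc : 0 < y + c := by have := (le_max_right 0 (-c)).trans_lt hy; linarith
      field_simp
      ring
    have hcont := (Real.continuousAt_log (by norm_num : (1:ℝ) ≠ 0)).tendsto
    have := hcont.comp hq
    rw [Real.log_one] at this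
    refine this.congr' ?_
    filter_upwards [eventually_gt_atTop (max 0 (-c))] with y hy
    have hy0 : 0 < y := (le_max_left 0 (-c)).trans_lt hy
    have hyc : 0 < y + c := by have := (le_max_right 0 (-c)).trans_lt hy; linarith
    simp [Function.comp, Real.log_div hy0.ne' hyc.ne']
  have h3 : Tendsto (fun y : ℝ => δ/c * y⁻¹) atTop (nhds 0) := by
    have := (tendsto_inv_atTop_zero (𝕜 := ℝ)).const_mul (δ/c)
    simpa using this
  have := (h1.const_mul K).add h3
  simpa using this

lemma aux (δ c a : ℝ) (hc : c ≠ 0) (ha : 0 < a) (hδ : δ ≤ a) (hac : 0 < a + c) :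
    ∫ x in Ioi a, (x - δ)/(x^2 * (x + c))
      = (c + δ)/c^2 * Real.log ((a + c)/a) - δ/(c * a) := by
  set K := (c + δ)/c^2 with hK
  have hderiv : ∀ x ∈ Ici a, HasDerivAt
      (fun y => K * (Real.log y - Real.log (y + c)) + δ/c * y⁻¹)
      ((x - δ)/(x^2 * (x + c))) x := by
    intro x hx
    exact aux_deriv δ c K hc hK (ha.trans_le hx) (by simp only [mem_Ici] at hx; linarith)
  have hpos : ∀ x ∈ Ioi a, 0 ≤ (x - δ)/(x^2 * (x + c)) := by
    intro x hx
    simp only [mem_Ioi] at hx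
    apply div_nonneg (by linarith)
    have : 0 < x + c := by linarith
    positivity
  have := integral_Ioi_of_hasDerivAt_of_nonneg' hderiv hpos (aux_tendsto δ c K)
  rw [this, Real.log_div (by linarith) ha.ne']
  field_simp
  ring

lemma aux0 (a : ℝ) (ha : 0 < a) :
    ∫ x in Ioi a, (x - a)/(x^2 * x) = 1/(2*a) := by
  have hderiv : ∀ x ∈ Ici a, HasDerivAt
      (fun y : ℝ => -y⁻¹ + a/2 * (y^2)⁻¹) ((x - a)/(x^2 * x)) x := by
    intro x hx
    have hx0 : 0 < x := ha.trans_le hx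
    have h1 : HasDerivAt (fun y : ℝ => y⁻¹) (-(x^2)⁻¹) x := hasDerivAt_inv hx0.ne'
    have h2 : HasDerivAt (fun y : ℝ => (y^2)⁻¹) (-(2*x)/((x^2)^2)) x := by
      have hp : HasDerivAt (fun y : ℝ => y^2) (2*x) x := by
        simpa using (hasDerivAt_pow 2 x)
      exact hp.inv (by positivity)
    have h := h1.neg.add (h2.const_mul (a/2))
    refine h.congr_deriv ?_
    field_simp [hx0.ne']
    ring
  have hpos : ∀ x ∈ Ioi a, 0 ≤ (x - a)/(x^2 * x) := by
    intro x hx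
    simp only [mem_Ioi] at hx
    apply div_nonneg (by linarith)
    have : 0 < x := ha.trans hx
    positivity
  have htend : Tendsto (fun y : ℝ => -y⁻¹ + a/2 * (y^2)⁻¹) atTop (nhds 0) := by
    have h1 := (tendsto_inv_atTop_zero (𝕜 := ℝ)).neg
    have h2 : Tendsto (fun y : ℝ => a/2 * (y^2)⁻¹) atTop (nhds 0) := by
      have := ((tendsto_pow_atTop (two_ne_zero)).inv_tendsto_atTop (𝕜 := ℝ)).const_mul (a/2)
      simpa using this
    have := h1.add h2
    simpa using this
  have := integral_Ioi_of_hasDerivAt_of_nonneg' hderiv hpos htend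
  rw [this]
  field_simp
  ring

/-- Pareto LDM (`F(x) = 1 − 1/x` for `x > 1`, trend `c = 1`): the δ-record probability
`p_{n,δ} = ∫_{max{δ,1}}^∞ (x−δ)/(x²(x+n−1−δ)) dx` has the stated closed form when
`δ ≠ n−1`, and equals `1/(2(n−1))` when `δ = n−1`. -/
theorem stmt14 (n : ℕ) (hn : 2 ≤ n) (δ : ℝ) :
    (δ ≠ (n : ℝ) - 1 →
      (∫ x in Ioi (max δ 1), (x - δ) / (x ^ 2 * (x + (n : ℝ) - 1 - δ)))
        = 1 / ((n : ℝ) - 1 - δ) ^ 2 *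
          (((n : ℝ) - 1) * Real.log (((n : ℝ) - min 1 δ) / max 1 δ)
            - min 1 δ * ((n : ℝ) - 1 - δ))) ∧
    (δ = (n : ℝ) - 1 →
      (∫ x in Ioi (max δ 1), (x - δ) / (x ^ 2 * (x + (n : ℝ) - 1 - δ)))
        = 1 / (2 * ((n : ℝ) - 1))) := by
  have hn1 : (1:ℝ) ≤ (n:ℝ) - 1 := by
    have : (2:ℝ) ≤ (n:ℝ) := by exact_mod_cast hn
    linarith
  constructor
  · intro hne
    set c := (n:ℝ) - 1 - δ with hc
    have hc0 : c ≠ 0 := by intro h; apply hne; simp [hc] at h; linarith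
    set a := max δ 1 with ha
    have ha0 : (0:ℝ) < a := lt_of_lt_of_le one_pos (le_max_right _ _)
    have hδa : δ ≤ a := le_max_left _ _
    have hac : 0 < a + c := by
      rcases le_total δ 1 with h | h
      · have : a = 1 := max_eq_right h
        rw [this]; simp only [hc]; linarith
      · have : a = δ := max_eq_left h
        rw [this]; simp only [hc]; linarith
    have key := aux δ c a hc0 ha0 hδa hac
    have hint : (∫ x in Ioi a, (x - δ) / (x ^ 2 * (x + (n : ℝ) - 1 - δ)))
        = ∫ x in Ioi a, (x - δ)/(x^2 * (x + c)) := by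
      congr 1; ext x; rw [hc]; ring_nf
    rw [hint, key]
    have harg : (a + c)/a = ((n : ℝ) - min 1 δ) / max 1 δ := by
      rw [ha, hc]
      rcases le_total δ 1 with h | h
      · rw [max_eq_right h, min_eq_right h, max_eq_left h]; ring_nf
      · rw [max_eq_left h, min_eq_left h, max_eq_right h]; ring_nf
    rw [harg]
    have hterm : δ/(c * a) = min 1 δ * c / c^2 := by
      rw [ha]
      rcases le_total δ 1 with h | h
      · rw [max_eq_right h, min_eq_right h]
        field_simp
      · rw [max_eq_left h, min_eq_left h]
        have hδ0 : δ ≠ 0 := by positivity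
        field_simp
    rw [hterm]
    have hcδ : c + δ = (n:ℝ) - 1 := by rw [hc]; ring
    rw [hcδ]
    field_simp
  · intro heq
    have hmax : max δ 1 = δ := max_eq_left (by rw [heq]; linarith)
    have hδpos : 0 < δ := by rw [heq]; linarith
    have hint : (∫ x in Ioi (max δ 1), (x - δ) / (x ^ 2 * (x + (n : ℝ) - 1 - δ)))
        = ∫ x in Ioi δ, (x - δ)/(x^2 * x) := by
      rw [hmax]; congr 1; ext x; rw [heq]; ring_nf
    rw [hint, aux0 δ hδpos, heq]
end

section
/- For the standard Gumbel distribution with c > 0 and δ = 0, the asymptotic dependence index of consecutive record indicators equals 1, i.e. lim_{n→∞} E[1_{n,0} 1_{n+1,0}] / (E[1_{n,0}] E[1_{n+1,0}]) = 1 (asymptotic independence of consecutive records). -/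
open MeasureTheory ProbabilityTheory Real Filter

namespace GumbelAux

open Set Topology


noncomputable def g (v x : ℝ) : ℝ := v * exp (-x) * exp (-(v * exp (-x)))

lemma g_nonneg {v : ℝ} (hv : 0 ≤ v) (x : ℝ) : 0 ≤ g v x := by
  unfold g; positivity

lemma hasDerivAt_G (v x : ℝ) :
    HasDerivAt (fun x => exp (-(v * exp (-x)))) (g v x) x := by
  have h0 : HasDerivAt (fun x : ℝ => -x) (-1) x := (hasDerivAt_id x).neg
  have h1 : HasDerivAt (fun x : ℝ => exp (-x)) (-exp (-x)) x := by
    simpa [Function.comp_def] using (Real.hasDerivAt_exp (-x)).comp x h0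
  have h2 : HasDerivAt (fun x : ℝ => -(v * exp (-x))) (v * exp (-x)) x := by
    simpa [mul_comm, Pi.neg_def] using ((h1.const_mul v).neg)
  have h3 := (Real.hasDerivAt_exp (-(v * exp (-x)))).comp x h2
  simpa [g, mul_comm, mul_left_comm, mul_assoc, Function.comp_def] using h3

lemma tendsto_G_atBot {v : ℝ} (hv : 0 < v) :
    Tendsto (fun x => exp (-(v * exp (-x)))) atBot (𝓝 0) := by
  apply Real.tendsto_exp_atBot.comp
  have h1 : Tendsto (fun x : ℝ => exp (-x)) atBot atTop :=
    Real.tendsto_exp_atTop.comp tendsto_neg_atBot_atTop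
  have h2 : Tendsto (fun x : ℝ => v * exp (-x)) atBot atTop :=
    (h1.const_mul_atTop hv)
  exact tendsto_neg_atTop_atBot.comp h2
  
lemma tendsto_G_atTop (v : ℝ) :
    Tendsto (fun x => exp (-(v * exp (-x)))) atTop (𝓝 1) := by
  have h1 : Tendsto (fun x : ℝ => -(v * exp (-x))) atTop (𝓝 0) := by
    have := (Real.tendsto_exp_atBot.comp tendsto_neg_atTop_atBot).const_mul v
    simpa using this.neg
  simpa [Function.comp_def] using (Real.continuous_exp.tendsto 0).comp h1

lemma integrableOn_g_Ioi {v : ℝ} (hv : 0 < v) (a : ℝ) : IntegrableOn (g v) (Ioi a) :=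
  integrableOn_Ioi_deriv_of_nonneg' (fun x _ => hasDerivAt_G v x)
    (fun x _ => g_nonneg hv.le x) (tendsto_G_atTop v)

lemma integral_Ioi_g {v : ℝ} (hv : 0 < v) (a : ℝ) :
    ∫ x in Ioi a, g v x = 1 - exp (-(v * exp (-a))) :=
  integral_Ioi_of_hasDerivAt_of_nonneg' (fun x _ => hasDerivAt_G v x)
    (fun x _ => g_nonneg hv.le x) (tendsto_G_atTop v)

lemma integrableOn_g_Iic {v : ℝ} (hv : 0 < v) (a : ℝ) : IntegrableOn (g v) (Iic a) := by
  have hderiv : ∀ x ∈ Ici (-a), HasDerivAt (fun x : ℝ => -exp (-(v * exp x)))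
      (g v (-x)) x := by
    intro x _
    have h2 : HasDerivAt (fun x : ℝ => -(v * exp x)) (-(v * exp x)) x := by
      simpa [Pi.neg_def] using ((Real.hasDerivAt_exp x).const_mul v).neg
    have h3 := ((Real.hasDerivAt_exp (-(v * exp x))).comp x h2).neg
    simpa [g, mul_comm, mul_left_comm, mul_assoc, Function.comp_def, Pi.neg_def] using h3
  have hlim : Tendsto (fun x : ℝ => -exp (-(v * exp x))) atTop (𝓝 0) := by
    have h2 : Tendsto (fun x : ℝ => -(v * exp x)) atTop atBot := by
      exact tendsto_neg_atTop_atBot.comp (Real.tendsto_exp_atTop.const_mul_atTop hv)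
    simpa using (Real.tendsto_exp_atBot.comp h2).neg
  have hint : IntegrableOn (fun x => g v (-x)) (Ioi (-a)) :=
    integrableOn_Ioi_deriv_of_nonneg' hderiv (fun x _ => g_nonneg hv.le _) hlim
  have hint' : IntegrableOn (fun x => g v (-x)) (Ici (-a)) := by
    rwa [integrableOn_Ici_iff_integrableOn_Ioi]
  apply (MeasurePreserving.integrableOn_comp_preimage
    (Measure.measurePreserving_neg (volume : Measure ℝ))
    (Homeomorph.neg ℝ).measurableEmbedding (f := g v) (s := Iic a)).mp
  have hset : (Neg.neg ⁻¹' Iic a : Set ℝ) = Ici (-a) := by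
    ext x; simp [neg_le]
  rw [hset]
  exact hint'

lemma integral_Iic_g {v : ℝ} (hv : 0 < v) (a : ℝ) :
    ∫ x in Iic a, g v x = exp (-(v * exp (-a))) := by
  have := integral_Iic_of_hasDerivAt_of_tendsto' (fun x _ => hasDerivAt_G v x)
    (integrableOn_g_Iic hv a) (tendsto_G_atBot hv)
  simpa using this

lemma integrable_g {v : ℝ} (hv : 0 < v) : Integrable (g v) := by
  rw [← integrableOn_univ, ← Set.Iic_union_Ioi (a := (0:ℝ))]
  exact (integrableOn_g_Iic hv 0).union (integrableOn_g_Ioi hv 0)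

lemma integral_g {v : ℝ} (hv : 0 < v) : ∫ x, g v x = 1 := by
  have := integral_of_hasDerivAt_of_tendsto (fun x => hasDerivAt_G v x)
    (integrable_g hv) (tendsto_G_atBot hv) (tendsto_G_atTop v)
  simpa using this

lemma measurable_g (v : ℝ) : Measurable (g v) := by
  unfold g; fun_prop

noncomputable def gm (v : ℝ) : Measure ℝ :=
  (volume : Measure ℝ).withDensity (fun x => ENNReal.ofReal (g v x))

lemma gm_apply {v : ℝ} (hv : 0 < v) {s : Set ℝ} (hs : MeasurableSet s)
    (hints : IntegrableOn (g v) s) :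
    gm v s = ENNReal.ofReal (∫ x in s, g v x) := by
  rw [gm, withDensity_apply _ hs,
    ← ofReal_integral_eq_lintegral_ofReal hints
      (ae_of_all _ fun x => g_nonneg hv.le x)]

lemma gm_Iic {v : ℝ} (hv : 0 < v) (t : ℝ) :
    gm v (Iic t) = ENNReal.ofReal (exp (-(v * exp (-t)))) := by
  rw [gm_apply hv measurableSet_Iic (integrableOn_g_Iic hv t), integral_Iic_g hv t]

lemma gm_Ioi {v : ℝ} (hv : 0 < v) (t : ℝ) :
    gm v (Ioi t) = ENNReal.ofReal (1 - exp (-(v * exp (-t)))) := by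
  rw [gm_apply hv measurableSet_Ioi (integrableOn_g_Ioi hv t), integral_Ioi_g hv t]

lemma gm_Iio {v : ℝ} (hv : 0 < v) (t : ℝ) :
    gm v (Iio t) = ENNReal.ofReal (exp (-(v * exp (-t)))) := by
  rw [gm_apply hv measurableSet_Iio ((integrableOn_g_Iic hv t).mono_set Iio_subset_Iic_self)]
  rw [show ∫ x in Iio t, g v x = ∫ x in Iic t, g v x from
    (integral_Iic_eq_integral_Iio).symm, integral_Iic_g hv t]

theorem gm_prob {v : ℝ} (hv : 0 < v) : IsProbabilityMeasure (gm v) := by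
  constructor
  rw [gm_apply hv MeasurableSet.univ ((integrable_g hv).integrableOn),
    setIntegral_univ, integral_g hv, ENNReal.ofReal_one]

/-- The key integral computation. -/
lemma key_lintegral {w α β : ℝ} (hw : 0 < w) (hα : 0 ≤ α) (hβ : α ≤ β) :
    ∫⁻ x, ENNReal.ofReal (exp (-(α * exp (-x))) - exp (-(β * exp (-x)))) ∂(gm w)
      = ENNReal.ofReal (w / (w + α) - w / (w + β)) := by
  have hwα : 0 < w + α := by linarith
  have hwβ : 0 < w + β := by linarith
  have hmeas : Measurable fun x : ℝ =>
      ENNReal.ofReal (exp (-(α * exp (-x))) - exp (-(β * exp (-x)))) := by fun_prop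
  rw [gm, lintegral_withDensity_eq_lintegral_mul _ ((measurable_g w).ennreal_ofReal) hmeas]
  have hkey : ∀ γ : ℝ, 0 < w + γ → ∀ x : ℝ,
      w / (w + γ) * g (w + γ) x = g w x * exp (-(γ * exp (-x))) := by
    intro γ hγ x
    unfold g
    rw [show (-((w + γ) * exp (-x))) = -(w * exp (-x)) + -(γ * exp (-x)) by ring, Real.exp_add]
    field_simp
  have hle : ∀ x : ℝ, exp (-(β * exp (-x))) ≤ exp (-(α * exp (-x))) := by
    intro x
    apply Real.exp_le_exp.2
    have : α * exp (-x) ≤ β * exp (-x) := mul_le_mul_of_nonneg_right hβ (exp_nonneg _)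
    linarith
  have hreal : ∀ x : ℝ, g w x * (exp (-(α * exp (-x))) - exp (-(β * exp (-x))))
      = w / (w + α) * g (w + α) x - w / (w + β) * g (w + β) x := by
    intro x
    rw [hkey α hwα x, hkey β hwβ x, mul_sub]
  have hpt : ∀ x : ℝ,
      (ENNReal.ofReal (g w x) * ENNReal.ofReal (exp (-(α * exp (-x))) - exp (-(β * exp (-x)))))
        = ENNReal.ofReal (w / (w + α) * g (w + α) x - w / (w + β) * g (w + β) x) := by
    intro x
    rw [← ENNReal.ofReal_mul (g_nonneg hw.le x), hreal x]
  simp_rw [Pi.mul_apply, hpt]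
  have hint : Integrable (fun x => w / (w + α) * g (w + α) x - w / (w + β) * g (w + β) x) :=
    ((integrable_g hwα).const_mul _).sub ((integrable_g hwβ).const_mul _)
  have hnn : 0 ≤ᵐ[volume] fun x => w / (w + α) * g (w + α) x - w / (w + β) * g (w + β) x := by
    apply ae_of_all
    intro x
    simp only [Pi.zero_apply]
    rw [← hreal x]
    exact mul_nonneg (g_nonneg hw.le x) (sub_nonneg.2 (hle x))
  rw [← ofReal_integral_eq_lintegral_ofReal hint hnn]
  rw [integral_sub ((integrable_g hwα).const_mul _) ((integrable_g hwβ).const_mul _),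
    integral_const_mul, integral_const_mul, integral_g hwα, integral_g hwβ, mul_one, mul_one]

section Prob
variable {Ω : Type*} [MeasureSpace Ω] [IsProbabilityMeasure (ℙ : Measure Ω)]

lemma law_eq {T : Ω → ℝ} (hT : Measurable T) {v : ℝ} (hv : 0 < v)
    (h : ∀ t, ℙ {ω | T ω ≤ t} = ENNReal.ofReal (exp (-(v * exp (-t))))) :
    (ℙ : Measure Ω).map T = gm v := by
  haveI : IsFiniteMeasure ((ℙ : Measure Ω).map T) := by
    apply Measure.isFiniteMeasure_map
  apply Measure.ext_of_Iic
  intro t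
  rw [Measure.map_apply hT measurableSet_Iic, gm_Iic hv]
  exact h t

lemma prob_lt {U V : Ω → ℝ} (hU : Measurable U) (hV : Measurable V)
    {u v : ℝ} (hu : 0 < u) (hv : 0 < v)
    (hlU : (ℙ : Measure Ω).map U = gm u) (hlV : (ℙ : Measure Ω).map V = gm v)
    (hind : IndepFun U V ℙ) :
    ℙ {ω | U ω < V ω} = ENNReal.ofReal (v / (u + v)) := by
  haveI := gm_prob hu; haveI := gm_prob hv
  have hmap := (indepFun_iff_map_prod_eq_prod_map_map hU.aemeasurable hV.aemeasurable).mp hind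
  have hS : MeasurableSet {p : ℝ × ℝ | p.1 < p.2} :=
    measurableSet_lt measurable_fst measurable_snd
  have hEv : {ω | U ω < V ω} = (fun ω => (U ω, V ω)) ⁻¹' {p : ℝ × ℝ | p.1 < p.2} := rfl
  rw [hEv, ← Measure.map_apply (hU.prodMk hV) hS, hmap, hlU, hlV,
    Measure.prod_apply hS]
  have hin : ∀ x : ℝ, (gm v) (Prod.mk x ⁻¹' {p : ℝ × ℝ | p.1 < p.2})
      = ENNReal.ofReal (exp (-(0 * exp (-x))) - exp (-(v * exp (-x)))) := by
    intro x
    have h1 : (Prod.mk x ⁻¹' {p : ℝ × ℝ | p.1 < p.2}) = Ioi x := rfl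
    rw [h1, gm_Ioi hv]
    norm_num
  simp_rw [hin]
  rw [key_lintegral hu le_rfl (by linarith : (0:ℝ) ≤ v)]
  congr 1
  rw [add_zero]
  field_simp
  ring

lemma prob_lt_lt {U V W : Ω → ℝ} (hU : Measurable U) (hV : Measurable V) (hW : Measurable W)
    {u v w : ℝ} (hu : 0 < u) (hv : 0 < v) (hw : 0 < w)
    (hlU : (ℙ : Measure Ω).map U = gm u) (hlV : (ℙ : Measure Ω).map V = gm v)
    (hlW : (ℙ : Measure Ω).map W = gm w)
    (hVW : IndepFun V W ℙ) (hPU : IndepFun (fun ω => (V ω, W ω)) U ℙ) :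
    ℙ {ω | U ω < V ω ∧ V ω < W ω}
      = ENNReal.ofReal (v / (v + u) - v / (v + u + w)) := by
  haveI := gm_prob hu; haveI := gm_prob hv; haveI := gm_prob hw
  have hmapVW := (indepFun_iff_map_prod_eq_prod_map_map
    (hV.prodMk hW).aemeasurable hU.aemeasurable).mp hPU
  have hmap2 := (indepFun_iff_map_prod_eq_prod_map_map hV.aemeasurable hW.aemeasurable).mp hVW
  have hS : MeasurableSet {q : (ℝ × ℝ) × ℝ | q.2 < q.1.1 ∧ q.1.1 < q.1.2} := by
    exact (measurableSet_lt measurable_snd measurable_fst.fst).inter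
      (measurableSet_lt measurable_fst.fst measurable_fst.snd)
  have hEv : {ω | U ω < V ω ∧ V ω < W ω}
      = (fun ω => ((V ω, W ω), U ω)) ⁻¹' {q : (ℝ × ℝ) × ℝ | q.2 < q.1.1 ∧ q.1.1 < q.1.2} := rfl
  rw [hEv, ← Measure.map_apply ((hV.prodMk hW).prodMk hU) hS, hmapVW, hmap2, hlU, hlV, hlW,
    Measure.prod_apply hS]
  rw [lintegral_prod _ (measurable_measure_prodMk_left hS).aemeasurable]
  have hinner : ∀ y : ℝ, ∫⁻ z, (gm u) (Prod.mk (y, z) ⁻¹'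
      {q : (ℝ × ℝ) × ℝ | q.2 < q.1.1 ∧ q.1.1 < q.1.2}) ∂(gm w)
      = ENNReal.ofReal (exp (-(u * exp (-y)))) * ENNReal.ofReal (1 - exp (-(w * exp (-y)))) := by
    intro y
    have hident : ∀ z : ℝ, (gm u) (Prod.mk (y, z) ⁻¹'
        {q : (ℝ × ℝ) × ℝ | q.2 < q.1.1 ∧ q.1.1 < q.1.2})
        = Set.indicator (Ioi y) (fun _ => ENNReal.ofReal (exp (-(u * exp (-y))))) z := by
      intro z
      by_cases h : y < z
      · have h2 : (Prod.mk (y, z) ⁻¹' {q : (ℝ × ℝ) × ℝ | q.2 < q.1.1 ∧ q.1.1 < q.1.2})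
            = Iio y := by ext t; simp [h]
        rw [h2, gm_Iio hu]
        exact (Set.indicator_of_mem (show z ∈ Ioi y from h) (fun _ => ENNReal.ofReal (exp (-(u * exp (-y)))))).symm
      · have h2 : (Prod.mk (y, z) ⁻¹' {q : (ℝ × ℝ) × ℝ | q.2 < q.1.1 ∧ q.1.1 < q.1.2})
            = ∅ := by ext t; simp [h]
        rw [h2, measure_empty]
        exact (Set.indicator_of_notMem (show z ∉ Ioi y from h) (fun _ => ENNReal.ofReal (exp (-(u * exp (-y)))))).symm
    simp_rw [hident]
    rw [lintegral_indicator measurableSet_Ioi, setLIntegral_const, gm_Ioi hw]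
  simp_rw [hinner]
  have hpt : ∀ y : ℝ, ENNReal.ofReal (exp (-(u * exp (-y))))
      * ENNReal.ofReal (1 - exp (-(w * exp (-y))))
      = ENNReal.ofReal (exp (-(u * exp (-y))) - exp (-((u + w) * exp (-y)))) := by
    intro y
    rw [← ENNReal.ofReal_mul (exp_nonneg _)]
    congr 1
    rw [mul_sub, mul_one, show (-((u + w) * exp (-y))) = -(u * exp (-y)) + -(w * exp (-y)) by ring,
      Real.exp_add]
  simp_rw [hpt]
  have hk := key_lintegral (w := v) (α := u) (β := u + w) hv hu.le (by linarith)
  rw [hk, show v + (u + w) = v + u + w by ring]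


lemma sup'_attach_eq {α : Type*} [SemilatticeSup α] (s : Finset ℕ) (hne : s.Nonempty)
    (f : ℕ → α) :
    s.attach.sup' (by simpa using hne) (fun j => f j.1) = s.sup' hne f := by
  apply le_antisymm
  · rw [Finset.sup'_le_iff]
    intro j _
    exact Finset.le_sup' f j.2
  · rw [Finset.sup'_le_iff]
    intro j hj
    exact Finset.le_sup' (f := fun j : {x // x ∈ s} => f j.1) (Finset.mem_attach s ⟨j, hj⟩)

variable {Ω : Type*} [MeasureSpace Ω] [IsProbabilityMeasure (ℙ : Measure Ω)]

lemma sup_law (X : ℕ → Ω → ℝ) (hXm : ∀ n, Measurable (X n))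
    (hindep : iIndepFun X ℙ)
    (hcdf : ∀ j t, ℙ {ω | X j ω ≤ t} = ENNReal.ofReal (exp (-exp (-t))))
    (c : ℝ) (m : ℕ) (hm : 2 ≤ m) (hne : (Finset.Ico 1 m).Nonempty) :
    (ℙ : Measure Ω).map (fun ω => (Finset.Ico 1 m).sup' hne (fun j => X j ω + c * j))
      = gm (∑ j ∈ Finset.Ico 1 m, exp (c * j)) := by
  have hspos : 0 < ∑ j ∈ Finset.Ico 1 m, exp (c * (j:ℕ)) :=
    Finset.sum_pos (fun j _ => exp_pos _) hne
  have hmeas : Measurable fun ω => (Finset.Ico 1 m).sup' hne (fun j => X j ω + c * j) := by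
    have h1 := Finset.measurable_sup' hne
      (f := fun (j : ℕ) (ω : Ω) => X j ω + c * (j:ℕ))
      (fun j _ => (hXm j).add_const _)
    have h2 : (Finset.Ico 1 m).sup' hne (fun (j : ℕ) (ω : Ω) => X j ω + c * (j:ℕ))
        = fun ω => (Finset.Ico 1 m).sup' hne (fun j => X j ω + c * j) := by
      funext ω
      exact Finset.sup'_apply hne _ ω
    rwa [h2] at h1
  apply law_eq hmeas hspos
  intro t
  have hset : {ω | (Finset.Ico 1 m).sup' hne (fun j => X j ω + c * j) ≤ t}
      = ⋂ j ∈ Finset.Ico 1 m, X j ⁻¹' Iic (t - c * j) := by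
    ext ω
    simp only [Set.mem_setOf_eq, Finset.sup'_le_iff, Set.mem_iInter, Set.mem_preimage,
      Set.mem_Iic]
    constructor
    · intro h j hj; linarith [h j hj]
    · intro h j hj; linarith [h j hj]
  rw [hset, hindep.measure_inter_preimage_eq_mul (Finset.Ico 1 m)
    (sets := fun j => Iic (t - c * j)) (fun i _ => measurableSet_Iic)]
  have hfac : ∀ j : ℕ, ℙ (X j ⁻¹' Iic (t - c * j))
      = ENNReal.ofReal (exp (-(exp (c * j) * exp (-t)))) := by
    intro j
    have : X j ⁻¹' Iic (t - c * j) = {ω | X j ω ≤ t - c * j} := rfl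
    rw [this, hcdf j]
    congr 2
    rw [show -(t - c * (j:ℕ)) = c * j + -t by ring, Real.exp_add]
  simp_rw [hfac]
  rw [← ENNReal.ofReal_prod_of_nonneg (fun j _ => (exp_pos (-(exp (c * (j:ℕ)) * exp (-t)))).le)]
  congr 1
  rw [← Real.exp_sum]
  congr 1
  rw [Finset.sum_mul, ← Finset.sum_neg_distrib]
end Prob
end GumbelAux


open GumbelAux

/-- Gumbel LDM with `c > 0`: consecutive record indicators are asymptotically independent,
i.e. the dependence index `l_n(c,0) = E[1_{n,0}1_{n+1,0}]/(E[1_{n,0}]E[1_{n+1,0}])`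
converges to 1 as `n → ∞`. Records are indexed from 1: observation `n` is a record when
`Y_n > max(Y_1, …, Y_{n−1})` with `Y_j = X_j + c j`. -/
theorem stmt15 {Ω : Type*} [MeasureSpace Ω] [IsProbabilityMeasure (ℙ : Measure Ω)]
    (X : ℕ → Ω → ℝ) (hXm : ∀ n, Measurable (X n))
    (hindep : iIndepFun X ℙ)
    (hgumbel : ∀ n t, (ℙ {ω | X n ω ≤ t}).toReal = exp (-exp (-t)))
    (c : ℝ) (hc : 0 < c) :
    Tendsto (fun n : ℕ =>
      (ℙ {ω | (∀ j, 1 ≤ j → j < n → X j ω + c * j < X n ω + c * n) ∧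
              (∀ j, 1 ≤ j → j < n + 1 → X j ω + c * j < X (n + 1) ω + c * (n + 1))}).toReal
      / ((ℙ {ω | ∀ j, 1 ≤ j → j < n → X j ω + c * j < X n ω + c * n}).toReal *
         (ℙ {ω | ∀ j, 1 ≤ j → j < n + 1 →
              X j ω + c * j < X (n + 1) ω + c * (n + 1)}).toReal))
      atTop (nhds 1) := by
  classical
  have hcdf : ∀ j t, ℙ {ω | X j ω ≤ t} = ENNReal.ofReal (exp (-exp (-t))) := by
    intro j t
    rw [← hgumbel j t, ENNReal.ofReal_toReal (measure_ne_top _ _)]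
  have htend : Tendsto (fun _ : ℕ => (1:ℝ)) atTop (nhds 1) := tendsto_const_nhds
  refine htend.congr' ?_
  filter_upwards [eventually_ge_atTop 2] with n hn
  have h1n : 1 ≤ n := by omega
  have hne : (Finset.Ico 1 n).Nonempty := by rw [Finset.nonempty_Ico]; omega
  have hne' : (Finset.Ico 1 (n+1)).Nonempty := by rw [Finset.nonempty_Ico]; omega
  set s : ℝ := ∑ j ∈ Finset.Ico 1 n, exp (c * (j:ℕ)) with hsdef
  set a : ℝ := exp (c * (n:ℕ)) with hadef
  set b : ℝ := exp (c * ((n+1:ℕ):ℝ)) with hbdef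
  have hspos : 0 < s := Finset.sum_pos (fun j _ => exp_pos _) hne
  have hapos : 0 < a := exp_pos _
  have hbpos : 0 < b := exp_pos _
  set Z : Ω → ℝ := fun ω => (Finset.Ico 1 n).sup' hne (fun j => X j ω + c * j) with hZdef
  set Z' : Ω → ℝ := fun ω => (Finset.Ico 1 (n+1)).sup' hne' (fun j => X j ω + c * j) with hZ'def
  have hZm : Measurable Z := by
    have h1 := Finset.measurable_sup' hne
      (f := fun (j : ℕ) (ω : Ω) => X j ω + c * (j:ℕ)) (fun j _ => (hXm j).add_const _)
    have h2 : (Finset.Ico 1 n).sup' hne (fun (j : ℕ) (ω : Ω) => X j ω + c * (j:ℕ)) = Z := by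
      funext ω; exact Finset.sup'_apply hne _ ω
    rwa [h2] at h1
  have hZ'm : Measurable Z' := by
    have h1 := Finset.measurable_sup' hne'
      (f := fun (j : ℕ) (ω : Ω) => X j ω + c * (j:ℕ)) (fun j _ => (hXm j).add_const _)
    have h2 : (Finset.Ico 1 (n+1)).sup' hne' (fun (j : ℕ) (ω : Ω) => X j ω + c * (j:ℕ)) = Z' := by
      funext ω; exact Finset.sup'_apply hne' _ ω
    rwa [h2] at h1
  have hYnm : Measurable (fun ω => X n ω + c * (n:ℕ)) := (hXm n).add_const _
  have hYn1m : Measurable (fun ω => X (n+1) ω + c * ((n+1:ℕ):ℝ)) := (hXm (n+1)).add_const _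
  -- laws
  have hlawZ : (ℙ : Measure Ω).map Z = gm s := sup_law X hXm hindep hcdf c n hn hne
  have hsum' : (∑ j ∈ Finset.Ico 1 (n+1), exp (c * (j:ℕ))) = s + a := by
    rw [Finset.sum_Ico_succ_top h1n]
  have hlawZ' : (ℙ : Measure Ω).map Z' = gm (s + a) := by
    have := sup_law X hXm hindep hcdf c (n+1) (by omega) hne'
    rwa [hsum'] at this
  have hshift : ∀ m : ℕ, (ℙ : Measure Ω).map (fun ω => X m ω + c * (m:ℕ)) = gm (exp (c * (m:ℕ))) := by
    intro m
    apply law_eq ((hXm m).add_const _) (exp_pos _)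
    intro t
    have hset : {ω | X m ω + c * (m:ℕ) ≤ t} = {ω | X m ω ≤ t - c * (m:ℕ)} := by
      ext ω; simp only [Set.mem_setOf_eq]; constructor <;> intro <;> linarith
    rw [hset, hcdf m]
    congr 2
    rw [show -(t - c * ((m:ℕ):ℝ)) = c * (m:ℕ) + -t by ring, Real.exp_add]
  have hlawYn : (ℙ : Measure Ω).map (fun ω => X n ω + c * (n:ℕ)) = gm a := hshift n
  have hlawYn1 : (ℙ : Measure Ω).map (fun ω => X (n+1) ω + c * ((n+1:ℕ):ℝ)) = gm b := hshift (n+1)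
  -- independence
  have hIndYY : IndepFun (fun ω => X n ω + c * (n:ℕ)) (fun ω => X (n+1) ω + c * ((n+1:ℕ):ℝ)) ℙ := by
    have h := hindep.indepFun (show n ≠ n+1 by omega)
    exact h.comp (measurable_id.add_const (c * (n:ℕ))) (measurable_id.add_const (c * ((n+1:ℕ):ℝ)))
  have hPairZ : IndepFun (fun ω => (X n ω + c * (n:ℕ), X (n+1) ω + c * ((n+1:ℕ):ℝ))) Z ℙ := by
    have h0 := hindep.indepFun_finset ({n, n+1} : Finset ℕ) (Finset.Ico 1 n)
      (by
        simp only [Finset.disjoint_left, Finset.mem_insert, Finset.mem_singleton, Finset.mem_Ico]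
        intro x hx hx'
        omega) hXm
    have hnmem : n ∈ ({n, n+1} : Finset ℕ) := by simp
    have hn1mem : n+1 ∈ ({n, n+1} : Finset ℕ) := by simp
    have hattne : (Finset.Ico 1 n).attach.Nonempty := by simpa using hne
    set φ : ({i // i ∈ ({n, n+1} : Finset ℕ)} → ℝ) → ℝ × ℝ :=
      fun v => (v ⟨n, hnmem⟩ + c * (n:ℕ), v ⟨n+1, hn1mem⟩ + c * ((n+1:ℕ):ℝ)) with hφdef
    set ψ : ({i // i ∈ Finset.Ico 1 n} → ℝ) → ℝ :=
      fun v => (Finset.Ico 1 n).attach.sup' hattne (fun j => v j + c * ((j:ℕ):ℝ)) with hψdef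
    have hφm : Measurable φ :=
      ((measurable_pi_apply _).add_const _).prodMk ((measurable_pi_apply _).add_const _)
    have hψm : Measurable ψ := by
      have h1 := Finset.measurable_sup' hattne
        (f := fun (j : {i // i ∈ Finset.Ico 1 n}) (v : {i // i ∈ Finset.Ico 1 n} → ℝ) =>
          v j + c * ((j:ℕ):ℝ))
        (fun j _ => (measurable_pi_apply _).add_const _)
      have h2 : (Finset.Ico 1 n).attach.sup'
          hattne (fun (j : {i // i ∈ Finset.Ico 1 n}) (v : {i // i ∈ Finset.Ico 1 n} → ℝ) =>
          v j + c * ((j:ℕ):ℝ)) = ψ := by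
        funext v; exact Finset.sup'_apply hattne _ v
      rwa [h2] at h1
    have hcomp := h0.comp hφm hψm
    have he2 : (ψ ∘ fun a (i : {i // i ∈ Finset.Ico 1 n}) => X i a) = Z := by
      funext ω
      exact sup'_attach_eq (Finset.Ico 1 n) hne (fun j => X j ω + c * (j:ℕ))
    rwa [he2] at hcomp
  have hIndZYn : IndepFun Z (fun ω => X n ω + c * (n:ℕ)) ℙ := by
    have := hPairZ.symm.comp measurable_id measurable_fst
    exact this
  have hIndZ'Yn1 : IndepFun Z' (fun ω => X (n+1) ω + c * ((n+1:ℕ):ℝ)) ℙ := by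
    have h0 := hindep.indepFun_finset (Finset.Ico 1 (n+1)) ({n+1} : Finset ℕ)
      (by
        simp only [Finset.disjoint_left, Finset.mem_singleton, Finset.mem_Ico]
        intro x hx hx'
        omega) hXm
    have hattne : (Finset.Ico 1 (n+1)).attach.Nonempty := by simpa using hne'
    have hmem : n+1 ∈ ({n+1} : Finset ℕ) := by simp
    set ψ : ({i // i ∈ Finset.Ico 1 (n+1)} → ℝ) → ℝ :=
      fun v => (Finset.Ico 1 (n+1)).attach.sup' hattne (fun j => v j + c * ((j:ℕ):ℝ)) with hψdef
    set φ : ({i // i ∈ ({n+1} : Finset ℕ)} → ℝ) → ℝ :=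
      fun v => v ⟨n+1, hmem⟩ + c * ((n+1:ℕ):ℝ) with hφdef
    have hψm : Measurable ψ := by
      have h1 := Finset.measurable_sup' hattne
        (f := fun (j : {i // i ∈ Finset.Ico 1 (n+1)}) (v : {i // i ∈ Finset.Ico 1 (n+1)} → ℝ) =>
          v j + c * ((j:ℕ):ℝ))
        (fun j _ => (measurable_pi_apply _).add_const _)
      have h2 : (Finset.Ico 1 (n+1)).attach.sup'
          hattne (fun (j : {i // i ∈ Finset.Ico 1 (n+1)})
            (v : {i // i ∈ Finset.Ico 1 (n+1)} → ℝ) => v j + c * ((j:ℕ):ℝ)) = ψ := by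
        funext v; exact Finset.sup'_apply hattne _ v
      rwa [h2] at h1
    have hφm : Measurable φ := (measurable_pi_apply _).add_const _
    have hcomp := h0.comp hψm hφm
    have he2 : (ψ ∘ fun a (i : {i // i ∈ Finset.Ico 1 (n+1)}) => X i a) = Z' := by
      funext ω
      exact sup'_attach_eq (Finset.Ico 1 (n+1)) hne' (fun j => X j ω + c * (j:ℕ))
    rwa [he2] at hcomp
  -- probabilities
  have hPA : ℙ {ω | Z ω < X n ω + c * (n:ℕ)} = ENNReal.ofReal (a / (s + a)) :=
    prob_lt hZm hYnm hspos hapos hlawZ hlawYn hIndZYn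
  have hPB : ℙ {ω | Z' ω < X (n+1) ω + c * ((n+1:ℕ):ℝ)} = ENNReal.ofReal (b / (s + a + b)) :=
    prob_lt hZ'm hYn1m (by positivity) hbpos hlawZ' hlawYn1 hIndZ'Yn1
  have hPJ : ℙ {ω | Z ω < X n ω + c * (n:ℕ) ∧
      X n ω + c * (n:ℕ) < X (n+1) ω + c * ((n+1:ℕ):ℝ)}
      = ENNReal.ofReal (a / (a + s) - a / (a + s + b)) :=
    prob_lt_lt hZm hYnm hYn1m hspos hapos hbpos hlawZ hlawYn hlawYn1 hIndYY hPairZ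
  -- event identifications
  have hEA : {ω : Ω | ∀ j, 1 ≤ j → j < n → X j ω + c * j < X n ω + c * n}
      = {ω | Z ω < X n ω + c * (n:ℕ)} := by
    ext ω
    simp only [Set.mem_setOf_eq, hZdef, Finset.sup'_lt_iff, Finset.mem_Ico, and_imp]
  have hEB : {ω : Ω | ∀ j, 1 ≤ j → j < n + 1 → X j ω + c * j < X (n+1) ω + c * ((n+1:ℕ):ℝ)}
      = {ω | Z' ω < X (n+1) ω + c * ((n+1:ℕ):ℝ)} := by
    ext ω
    simp only [Set.mem_setOf_eq, hZ'def, Finset.sup'_lt_iff, Finset.mem_Ico, and_imp]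
  have hEJ : {ω : Ω | (∀ j, 1 ≤ j → j < n → X j ω + c * j < X n ω + c * n) ∧
        (∀ j, 1 ≤ j → j < n + 1 → X j ω + c * j < X (n+1) ω + c * ((n+1:ℕ):ℝ))}
      = {ω | Z ω < X n ω + c * (n:ℕ) ∧
          X n ω + c * (n:ℕ) < X (n+1) ω + c * ((n+1:ℕ):ℝ)} := by
    ext ω
    simp only [Set.mem_setOf_eq, hZdef, Finset.sup'_lt_iff, Finset.mem_Ico, and_imp]
    constructor
    · rintro ⟨h1, h2⟩
      exact ⟨fun j hj1 hj2 => h1 j hj1 hj2, h2 n h1n (by omega)⟩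
    · rintro ⟨h1, h2⟩
      refine ⟨fun j hj1 hj2 => h1 j hj1 hj2, fun j hj1 hj2 => ?_⟩
      by_cases hlt : j < n
      · exact lt_trans (h1 j hj1 hlt) h2
      · have hj : j = n := by omega
        subst hj
        exact h2
  -- final computation
  have hgoal : (ℙ {ω : Ω | (∀ j, 1 ≤ j → j < n → X j ω + c * j < X n ω + c * n) ∧
        (∀ j, 1 ≤ j → j < n + 1 → X j ω + c * j < X (n+1) ω + c * ((n+1:ℕ):ℝ))}).toReal
      / ((ℙ {ω : Ω | ∀ j, 1 ≤ j → j < n → X j ω + c * j < X n ω + c * n}).toReal *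
         (ℙ {ω : Ω | ∀ j, 1 ≤ j → j < n + 1 →
            X j ω + c * j < X (n+1) ω + c * ((n+1:ℕ):ℝ)}).toReal) = 1 := by
    rw [hEA, hEB, hEJ, hPA, hPB, hPJ]
    have hJeq : a / (a + s) - a / (a + s + b) = a * b / ((a + s) * (a + s + b)) := by
      field_simp
      ring
    rw [hJeq, ENNReal.toReal_ofReal (by positivity), ENNReal.toReal_ofReal (by positivity),
      ENNReal.toReal_ofReal (by positivity)]
    rw [div_eq_one_iff_eq (by positivity)]
    field_simp
    ring
  have hcast : ((n+1:ℕ):ℝ) = (n:ℝ) + 1 := by push_cast; ring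
  rw [hcast] at hgoal
  exact hgoal.symm
end

section
/- If μ⁺ = ∞, then in the linear drift model Y_n = X_n + cn the total number of δ-records N_{∞,δ} is infinite almost surely, for every c, δ ∈ ℝ. -/
open MeasureTheory ProbabilityTheory Set

section Aux

open Filter
open scoped ENNReal

private lemma stmt17_indepset {Ω : Type*} [MeasurableSpace Ω] {μ : Measure Ω}
    (X : ℕ → Ω → ℝ) (hindep : iIndepFun X μ) (t : ℕ → ℝ) :
    iIndepSet (fun n => X n ⁻¹' Ioi (t n)) μ := by
  rw [iIndepSet_iff_iIndep]
  have h : iIndep (fun n => MeasurableSpace.comap (X n) inferInstance) μ := hindep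
  rw [iIndep_iff] at h ⊢
  intro s f hf
  refine h s (fun i hi => ?_)
  have hle : MeasurableSpace.generateFrom {X i ⁻¹' Ioi (t i)} ≤
      MeasurableSpace.comap (X i) inferInstance :=
    MeasurableSpace.generateFrom_le (by
      rintro u hu
      rw [Set.mem_singleton_iff] at hu
      exact hu ▸ ⟨Ioi (t i), measurableSet_Ioi, rfl⟩)
  exact hle _ (hf i hi)

private lemma stmt17_tail {Ω : Type*} [MeasureSpace Ω] [IsProbabilityMeasure (ℙ : Measure Ω)]
    (X : ℕ → Ω → ℝ) (hXm : ∀ n, Measurable (X n))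
    (f : ℝ → ℝ) (hf : ∀ x, 0 ≤ f x)
    (hdist : ∀ n t, ℙ {ω | X n ω ≤ t} = ENNReal.ofReal (∫ s in Iic t, f s))
    (hprob : ∫ s : ℝ, f s = 1) :
    ∀ n t, ℙ (X n ⁻¹' Ioi t) = ∫⁻ x in Ioi t, ENNReal.ofReal (f x) := by
  have hfint : Integrable f := by
    by_contra h
    rw [integral_undef h] at hprob
    norm_num at hprob
  have hae : 0 ≤ᵐ[volume] f := Filter.Eventually.of_forall hf
  have htot : ∫⁻ x, ENNReal.ofReal (f x) = 1 := by
    rw [← ofReal_integral_eq_lintegral_ofReal hfint hae, hprob]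
    simp
  intro n t
  have hsplit : (∫⁻ x in Iic t, ENNReal.ofReal (f x)) + ∫⁻ x in Ioi t, ENNReal.ofReal (f x) = 1 := by
    rw [← htot, ← compl_Iic]
    exact lintegral_add_compl _ measurableSet_Iic
  have hIic : ℙ (X n ⁻¹' Iic t) = ∫⁻ x in Iic t, ENNReal.ofReal (f x) := by
    have := hdist n t
    rw [show {ω | X n ω ≤ t} = X n ⁻¹' Iic t from rfl] at this
    rw [this, ofReal_integral_eq_lintegral_ofReal hfint.integrableOn
      (ae_restrict_of_ae hae)]
  have hcompl : X n ⁻¹' Ioi t = (X n ⁻¹' Iic t)ᶜ := by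
    rw [← preimage_compl, compl_Iic]
  rw [hcompl, measure_compl ((hXm n) measurableSet_Iic) (measure_ne_top _ _), measure_univ, hIic]
  have hfin : (∫⁻ x in Iic t, ENNReal.ofReal (f x)) ≠ ⊤ := by
    refine ne_of_lt (lt_of_le_of_lt ?_ ENNReal.one_lt_top)
    rw [← hsplit]; exact le_self_add
  exact ENNReal.sub_eq_of_eq_add hfin (by rw [add_comm]; exact hsplit.symm)

private lemma stmt17_div (f : ℝ → ℝ) (hf : ∀ x, 0 ≤ f x) (hfm : Measurable f)
    (hmu : ¬ IntegrableOn (fun x => x * f x) (Ioi (0 : ℝ)))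
    (K : ℝ) (hK : 0 < K) :
    (∑' n : ℕ, ∫⁻ x in Ioi (K * n), ENNReal.ofReal (f x)) = ⊤ := by
  by_contra hlt
  apply hmu
  refine ⟨(measurable_id.mul hfm).aestronglyMeasurable, ?_⟩
  have hpos : ∀ᵐ x ∂(volume.restrict (Ioi (0:ℝ))), 0 ≤ x * f x :=
    (ae_restrict_iff' measurableSet_Ioi).2 (Filter.Eventually.of_forall
      (fun x hx => mul_nonneg (le_of_lt hx) (hf x)))
  rw [hasFiniteIntegral_iff_ofReal hpos]
  set g : ℝ → ℝ≥0∞ := fun x =>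
    ∑' n : ℕ, (Ioi (K * (n:ℝ))).indicator (fun y => ENNReal.ofReal K * ENNReal.ofReal (f y)) x
    with hg
  have hgm : ∀ n : ℕ, Measurable
      ((Ioi (K * (n:ℝ))).indicator (fun y => ENNReal.ofReal K * ENNReal.ofReal (f y))) :=
    fun n => (measurable_const.mul hfm.ennreal_ofReal).indicator measurableSet_Ioi
  have hpt : ∀ x ∈ Ioi (0:ℝ), ENNReal.ofReal (x * f x) ≤ g x := by
    intro x hx
    set m := ⌈x / K⌉₊ with hm
    have hsupport : ∀ n : ℕ, n ∉ Finset.range m →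
        (Ioi (K * (n:ℝ))).indicator (fun y => ENNReal.ofReal K * ENNReal.ofReal (f y)) x = 0 := by
      intro n hn
      rw [Finset.mem_range, not_lt] at hn
      apply Set.indicator_of_notMem
      rw [mem_Ioi, not_lt, mul_comm]
      calc x ≤ K * m := by
              rw [mul_comm]
              calc x = (x / K) * K := (div_mul_cancel₀ x hK.ne').symm
              _ ≤ (m : ℝ) * K := by
                  exact mul_le_mul_of_nonneg_right (Nat.le_ceil _) hK.le
        _ ≤ (n : ℝ) * K := by
              rw [mul_comm]
              exact mul_le_mul_of_nonneg_right (by exact_mod_cast hn) hK.le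
    have hsum : g x = ∑ n ∈ Finset.range m,
        (Ioi (K * (n:ℝ))).indicator (fun y => ENNReal.ofReal K * ENNReal.ofReal (f y)) x :=
      tsum_eq_sum hsupport
    have hval : ∀ n ∈ Finset.range m,
        (Ioi (K * (n:ℝ))).indicator (fun y => ENNReal.ofReal K * ENNReal.ofReal (f y)) x
        = ENNReal.ofReal K * ENNReal.ofReal (f x) := by
      intro n hn
      rw [Finset.mem_range] at hn
      apply Set.indicator_of_mem
      rw [mem_Ioi]
      have : (n : ℝ) < x / K := by
        rwa [← Nat.lt_ceil]
      calc K * n = n * K := mul_comm _ _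
        _ < (x / K) * K := mul_lt_mul_of_pos_right this hK
        _ = x := div_mul_cancel₀ x hK.ne'
    rw [hsum, Finset.sum_congr rfl hval, Finset.sum_const, Finset.card_range]
    rw [ENNReal.ofReal_mul hx.le]
    have hx2 : ENNReal.ofReal x ≤ m * ENNReal.ofReal K := by
      rw [← ENNReal.ofReal_natCast m, ← ENNReal.ofReal_mul (by positivity)]
      apply ENNReal.ofReal_le_ofReal
      calc x = (x / K) * K := (div_mul_cancel₀ x hK.ne').symm
        _ ≤ (m : ℝ) * K := mul_le_mul_of_nonneg_right (Nat.le_ceil _) hK.le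
    calc ENNReal.ofReal x * ENNReal.ofReal (f x)
        ≤ (m * ENNReal.ofReal K) * ENNReal.ofReal (f x) :=
          mul_le_mul_left hx2 _
      _ = m • (ENNReal.ofReal K * ENNReal.ofReal (f x)) := by
          rw [nsmul_eq_mul, mul_assoc]
  calc ∫⁻ x in Ioi (0:ℝ), ENNReal.ofReal (x * f x)
      ≤ ∫⁻ x in Ioi (0:ℝ), g x := setLIntegral_mono (Measurable.ennreal_tsum hgm) hpt
    _ = ∑' n : ℕ, ∫⁻ x in Ioi (0:ℝ),
          (Ioi (K * (n:ℝ))).indicator (fun y => ENNReal.ofReal K * ENNReal.ofReal (f y)) x :=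
        lintegral_tsum (fun n => (hgm n).aemeasurable)
    _ = ∑' n : ℕ, ENNReal.ofReal K * ∫⁻ x in Ioi (K * (n:ℝ)), ENNReal.ofReal (f x) := by
        refine tsum_congr fun n => ?_
        rw [lintegral_indicator measurableSet_Ioi, Measure.restrict_restrict measurableSet_Ioi,
          Ioi_inter_Ioi, sup_eq_left.2 (by positivity : (0:ℝ) ≤ K * n),
          lintegral_const_mul _ hfm.ennreal_ofReal]
    _ = ENNReal.ofReal K * ∑' n : ℕ, ∫⁻ x in Ioi (K * (n:ℝ)), ENNReal.ofReal (f x) :=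
        ENNReal.tsum_mul_left
    _ < ⊤ := ENNReal.mul_lt_top ENNReal.ofReal_lt_top (lt_top_iff_ne_top.2 hlt)

private lemma stmt17_path (c δ : ℝ) (Z : ℕ → ℝ)
    (hinf : {n : ℕ | (max δ 0 + |c| + 1) * n < Z n}.Infinite) :
    {n : ℕ | 1 ≤ n ∧ ∀ j, 1 ≤ j → j < n → Z j + c * j + δ < Z n + c * n}.Infinite := by
  set D := max δ 0 with hD
  have hD0 : 0 ≤ D := le_max_right _ _
  have hδD : δ ≤ D := le_max_left _ _
  set R := {n : ℕ | 1 ≤ n ∧ ∀ j, 1 ≤ j → j < n → Z j + c * j + δ < Z n + c * n} with hR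
  by_contra hfin
  rw [Set.not_infinite] at hfin
  obtain ⟨N0, hN0⟩ := hfin.bddAbove
  set N := max N0 1 with hN
  have hN1 : 1 ≤ N := le_max_right _ _
  have hne : (Finset.Icc 1 N).Nonempty := Finset.nonempty_Icc.mpr hN1
  set B : ℝ := (Finset.Icc 1 N).sup' hne (fun j => Z j + c * j) with hB
  have claim : ∀ n : ℕ, ∀ j : ℕ, 1 ≤ j → j ≤ N + n → Z j + c * j ≤ B + D * n := by
    intro n
    induction n with
    | zero =>
      intro j h1 h2
      simp only [Nat.add_zero] at h2
      have h := Finset.le_sup' (fun j : ℕ => Z j + c * (j:ℝ)) (Finset.mem_Icc.mpr ⟨h1, h2⟩)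
      rw [← hB] at h
      have h0 : D * ((0:ℕ):ℝ) = 0 := by simp
      linarith
    | succ n ih =>
      intro j h1 h2
      rcases le_or_gt j (N + n) with h | h
      · calc Z j + c * j ≤ B + D * n := ih j h1 h
          _ ≤ B + D * (n + 1 : ℕ) := by
            push_cast
            nlinarith
      · have hj : j = N + n + 1 := le_antisymm h2 h
        have hjR : j ∉ R := by
          intro hmem
          have := hN0 hmem
          omega
        rw [hR, Set.mem_setOf_eq] at hjR
        push_neg at hjR
        obtain ⟨i, hi1, hij, hle⟩ := hjR (by omega)
        have hiN : i ≤ N + n := by omega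
        have := ih i hi1 hiN
        have : Z j + c * j ≤ B + D * n + δ := by linarith
        calc Z j + c * j ≤ B + D * n + D := by linarith
          _ ≤ B + D * (n + 1 : ℕ) := by push_cast; nlinarith
  obtain ⟨n, hnS, hngt⟩ := hinf.exists_gt (N + ⌈B⌉₊)
  rw [Set.mem_setOf_eq] at hnS
  have hnN : N ≤ n := by omega
  have h1n : 1 ≤ n := le_trans hN1 hnN
  have hcl := claim (n - N) n h1n (by omega)
  have hcast : ((n - N : ℕ) : ℝ) ≤ (n : ℝ) := by
    exact_mod_cast Nat.sub_le n N
  have hZn : Z n + c * n ≤ B + D * n := by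
    calc Z n + c * n ≤ B + D * ((n - N : ℕ) : ℝ) := hcl
      _ ≤ B + D * n := by nlinarith
  have hcn : -(|c|) * n ≤ c * n := by
    have : -|c| ≤ c := neg_abs_le c
    have hn0 : (0:ℝ) ≤ n := Nat.cast_nonneg n
    nlinarith
  have hBn : B < n := by
    have h1 : (⌈B⌉₊ : ℝ) < (n : ℝ) := by exact_mod_cast (by omega : ⌈B⌉₊ < n)
    exact lt_of_le_of_lt (Nat.le_ceil B) h1
  have hn0 : (1:ℝ) ≤ n := by exact_mod_cast h1n
  nlinarith [hnS, hZn, hcn, hBn]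

end Aux

/-- If the iid variables have infinite right-tail expectation (`μ⁺ = ∫_0^∞ x f(x) dx = ∞`),
then in the linear drift model `Y_n = X_n + cn` the total number of δ-records is infinite
almost surely, for every `c, δ ∈ ℝ`. (Observation `n ≥ 1` is a δ-record when
`Y_n > max(Y_1, …, Y_{n−1}) + δ`; `Y_1` is a δ-record by convention.) -/
theorem stmt17 {Ω : Type*} [MeasureSpace Ω] [IsProbabilityMeasure (ℙ : Measure Ω)]
    (X : ℕ → Ω → ℝ) (hXm : ∀ n, Measurable (X n))
    (hindep : iIndepFun X ℙ)
    (f : ℝ → ℝ) (hf : ∀ x, 0 ≤ f x) (hfm : Measurable f)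
    (hdist : ∀ n t, ℙ {ω | X n ω ≤ t} = ENNReal.ofReal (∫ s in Iic t, f s))
    (hprob : ∫ s : ℝ, f s = 1)
    (hmu : ¬ IntegrableOn (fun x => x * f x) (Ioi (0 : ℝ))) :
    ∀ c δ : ℝ, ∀ᵐ ω ∂(ℙ : Measure Ω),
      {n : ℕ | 1 ≤ n ∧ ∀ j, 1 ≤ j → j < n →
        X j ω + c * j + δ < X n ω + c * n}.Infinite := by
  intro c δ
  set K : ℝ := max δ 0 + |c| + 1 with hKdef
  have hK : 0 < K := by
    have h1 : (0:ℝ) ≤ max δ 0 := le_max_right _ _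
    have h2 : (0:ℝ) ≤ |c| := abs_nonneg c
    rw [hKdef]; linarith
  set s : ℕ → Set Ω := fun n => X n ⁻¹' Ioi (K * n) with hs
  have hsm : ∀ n, MeasurableSet (s n) := fun n => (hXm n) measurableSet_Ioi
  have hind : iIndepSet s ℙ := stmt17_indepset X hindep (fun n => K * n)
  have htail := stmt17_tail X hXm f hf hdist hprob
  have hsum : (∑' n : ℕ, ℙ (s n)) = ⊤ := by
    have : ∀ n : ℕ, ℙ (s n) = ∫⁻ x in Ioi (K * (n:ℝ)), ENNReal.ofReal (f x) :=
      fun n => htail n (K * n)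
    rw [tsum_congr this]
    exact stmt17_div f hf hfm hmu K hK
  have hone : ℙ (Filter.limsup s Filter.atTop) = 1 :=
    ProbabilityTheory.measure_limsup_eq_one hsm hind hsum
  have hms : MeasurableSet (Filter.limsup s Filter.atTop) :=
    MeasurableSet.measurableSet_limsup hsm
  have hzero : ℙ ((Filter.limsup s Filter.atTop)ᶜ) = 0 := by
    rw [measure_compl hms (measure_ne_top _ _), measure_univ, hone, tsub_self]
  have hae : ∀ᵐ ω ∂(ℙ : Measure Ω), ω ∈ Filter.limsup s Filter.atTop := by
    rw [Filter.eventually_iff]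
    rw [mem_ae_iff]
    exact hzero
  filter_upwards [hae] with ω hω
  rw [Filter.mem_limsup_iff_frequently_mem] at hω
  have hinf : {n : ℕ | K * n < X n ω}.Infinite := by
    have := Nat.frequently_atTop_iff_infinite.mp hω
    convert this using 1
    rfl
  exact stmt17_path c δ (fun n => X n ω) hinf
end

section
/- If c < 0 and μ⁺ < ∞ then the expected total number of δ-records E[N_{∞,δ}] is finite, for every δ ∈ ℝ. (This resolves the Franke–Wergen–Krug conjecture on records with negative drift.) -/
open MeasureTheory ProbabilityTheory Set
open scoped ENNReal

/-- If `c < 0` and `μ⁺ < ∞`, the expected total number of δ-records in the linear drift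
model `Y_n = X_n + cn` is finite, for every `δ ∈ ℝ`:
`E[N_{∞,δ}] = Σ_{n≥1} P(Y_n is a δ-record) < ∞`. -/
theorem stmt18 {Ω : Type*} [MeasureSpace Ω] [IsProbabilityMeasure (ℙ : Measure Ω)]
    (X : ℕ → Ω → ℝ) (hXm : ∀ n, Measurable (X n))
    (hindep : iIndepFun X ℙ)
    (f : ℝ → ℝ) (hf : ∀ x, 0 ≤ f x) (hfm : Measurable f)
    (hdist : ∀ n t, ℙ {ω | X n ω ≤ t} = ENNReal.ofReal (∫ s in Iic t, f s))
    (hprob : ∫ s : ℝ, f s = 1)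
    (hmu : IntegrableOn (fun x => x * f x) (Ioi (0 : ℝ)))
    (c : ℝ) (hc : c < 0) (δ : ℝ) :
    ∑' n : ℕ, ℙ {ω | ∀ j, 1 ≤ j → j < n + 1 →
        X j ω + c * j + δ < X (n + 1) ω + c * (n + 1)} < ⊤ := by
  classical
  set a : ℝ := -c with ha_def
  have ha : 0 < a := by simp only [ha_def]; linarith
  have hca : c = -a := by rw [ha_def]; ring
  -- f is integrable
  have hfi : Integrable f := by
    by_contra h
    rw [integral_undef h] at hprob
    norm_num at hprob
  -- the law ν of each X n
  set ν : Measure ℝ := (volume : Measure ℝ).withDensity (fun x => ENNReal.ofReal (f x))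
    with hν_def
  have hν_apply : ∀ s : Set ℝ, MeasurableSet s → ν s = ENNReal.ofReal (∫ x in s, f x) := by
    intro s hs
    rw [hν_def, withDensity_apply _ hs,
      ← ofReal_integral_eq_lintegral_ofReal hfi.restrict (Filter.Eventually.of_forall hf)]
  have hν_univ : ν univ = 1 := by
    rw [hν_apply _ MeasurableSet.univ, setIntegral_univ, hprob, ENNReal.ofReal_one]
  haveI : IsProbabilityMeasure ν := ⟨hν_univ⟩
  have hcdf : ∀ n (t : ℝ), ℙ {ω | X n ω ≤ t} = ν (Iic t) := fun n t => by
    rw [hdist n t, hν_apply _ measurableSet_Iic]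
  have htail : ∀ n (t : ℝ), ℙ {ω | t < X n ω} = ν (Ioi t) := by
    intro n t
    have h1 : {ω | t < X n ω} = {ω | X n ω ≤ t}ᶜ := by ext ω; simp [not_le]
    have h2 : (Ioi t) = (Iic t)ᶜ := compl_Iic.symm
    have hms : MeasurableSet {ω | X n ω ≤ t} := (hXm n) measurableSet_Iic
    rw [h1, h2, prob_compl_eq_one_sub hms, prob_compl_eq_one_sub measurableSet_Iic, hcdf]
  -- choose t0 with ν (Iic t0) < 1
  obtain ⟨t0, ht0⟩ : ∃ t : ℝ, ν (Iic t) < 1 := by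
    have hiter : (⋂ n : ℕ, Iic (-(n : ℝ))) = ∅ := by
      ext x
      simp only [mem_iInter, mem_Iic, mem_empty_iff_false, iff_false, not_forall, not_le]
      obtain ⟨n, hn⟩ := exists_nat_gt (-x)
      exact ⟨n, by linarith⟩
    have htend := tendsto_measure_iInter_atTop (μ := ν) (s := fun n : ℕ => Iic (-(n : ℝ)))
      (fun n => measurableSet_Iic.nullMeasurableSet)
      (fun i j hij => Iic_subset_Iic.mpr (neg_le_neg (Nat.cast_le.mpr hij)))
      ⟨0, measure_ne_top ν _⟩
    rw [hiter, measure_empty] at htend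
    obtain ⟨n, hn⟩ := (htend.eventually (gt_mem_nhds zero_lt_one)).exists
    exact ⟨-(n : ℝ), hn⟩
  set q : ℝ≥0∞ := ν (Iic t0) with hq_def
  set b : ℝ := t0 + δ with hb_def
  set T : ℕ → ℝ := fun n => b + a * ((n / 2 : ℕ) : ℝ) with hT_def
  -- key estimate for each n
  have key : ∀ n : ℕ,
      ℙ {ω | ∀ j, 1 ≤ j → j < n + 1 →
        X j ω + c * j + δ < X (n + 1) ω + c * (n + 1)}
        ≤ ν (Ioi (T n)) + q ^ (n / 2) := by
    intro n
    set S : Finset ℕ := Finset.Icc 1 (min (n / 2 + 1) n) with hS_def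
    have hsub : {ω | ∀ j, 1 ≤ j → j < n + 1 →
          X j ω + c * j + δ < X (n + 1) ω + c * (n + 1)}
        ⊆ {ω | T n < X (n + 1) ω} ∪ ⋂ j ∈ S, {ω | X j ω ≤ t0} := by
      intro ω hω
      by_cases hTc : T n < X (n + 1) ω
      · exact Or.inl hTc
      · push_neg at hTc
        refine Or.inr (mem_iInter₂.mpr fun j hj => ?_)
        rw [hS_def, Finset.mem_Icc] at hj
        obtain ⟨hj1, hj2⟩ := hj
        have hj2' : j ≤ n := le_trans hj2 (min_le_right _ _)
        have hjh : j ≤ n / 2 + 1 := le_trans hj2 (min_le_left _ _)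
        have h := hω j hj1 (Nat.lt_succ_of_le hj2')
        have hTn : T n = b + a * ((n / 2 : ℕ) : ℝ) := by rw [hT_def]
        have hcast : (j : ℝ) + ((n / 2 : ℕ) : ℝ) ≤ (n : ℝ) + 1 := by
          have hnat : j + n / 2 ≤ n + 1 := by omega
          exact_mod_cast hnat
        have hprod : 0 ≤ a * ((n : ℝ) + 1 - (j : ℝ) - ((n / 2 : ℕ) : ℝ)) :=
          mul_nonneg ha.le (by linarith)
        have hXj : X j ω < X (n + 1) ω + c * ((n : ℝ) + 1) - c * (j : ℝ) - δ := by
          push_cast at h ⊢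
          linarith
        have hfin : X j ω < t0 := by
          have hb' : b = t0 + δ := hb_def
          have heq : (b + a * ((n / 2 : ℕ) : ℝ)) + c * ((n : ℝ) + 1) - c * (j : ℝ) - δ
              = t0 - a * ((n : ℝ) + 1 - (j : ℝ) - ((n / 2 : ℕ) : ℝ)) := by
            rw [hb', hca]; ring
          have h2 : X j ω < (b + a * ((n / 2 : ℕ) : ℝ)) + c * ((n : ℝ) + 1)
              - c * (j : ℝ) - δ := by
            rw [← hTn]; linarith
          rw [heq] at h2
          linarith
        exact hfin.le
    have hmeas : ∀ j ∈ S, MeasurableSet[(inferInstance : MeasurableSpace ℝ).comap (X j)]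
        {ω | X j ω ≤ t0} := fun j _ => ⟨Iic t0, measurableSet_Iic, rfl⟩
    calc ℙ {ω | ∀ j, 1 ≤ j → j < n + 1 →
          X j ω + c * j + δ < X (n + 1) ω + c * (n + 1)}
        ≤ ℙ ({ω | T n < X (n + 1) ω} ∪ ⋂ j ∈ S, {ω | X j ω ≤ t0}) := measure_mono hsub
      _ ≤ ℙ {ω | T n < X (n + 1) ω} + ℙ (⋂ j ∈ S, {ω | X j ω ≤ t0}) := measure_union_le _ _
      _ = ν (Ioi (T n)) + ∏ j ∈ S, ℙ {ω | X j ω ≤ t0} := by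
          rw [htail, hindep.meas_biInter hmeas]
      _ = ν (Ioi (T n)) + q ^ S.card := by
          rw [Finset.prod_congr rfl (fun j _ => hcdf j t0), Finset.prod_const]
      _ ≤ ν (Ioi (T n)) + q ^ (n / 2) := by
          refine add_le_add_right ?_ _
          refine pow_le_pow_of_le_one (zero_le : (0 : ℝ≥0∞) ≤ q) prob_le_one ?_
          rw [hS_def, Nat.card_Icc]
          omega
  -- sum of geometric part
  have hq1 : q < 1 := ht0
  have hsum2 : ∑' n : ℕ, q ^ (n / 2) < ⊤ := by
    rw [← tsum_even_add_odd (f := fun n : ℕ => q ^ (n / 2)) ENNReal.summable ENNReal.summable]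
    have he : ∀ k : ℕ, (2 * k) / 2 = k := fun k => by omega
    have ho : ∀ k : ℕ, (2 * k + 1) / 2 = k := fun k => by omega
    simp only [he, ho, ENNReal.tsum_geometric]
    have hpos : (0 : ℝ≥0∞) < 1 - q := tsub_pos_of_lt hq1
    exact ENNReal.add_lt_top.mpr ⟨ENNReal.inv_lt_top.mpr hpos, ENNReal.inv_lt_top.mpr hpos⟩
  -- sum of tail part
  have hsum1 : ∑' n : ℕ, ν (Ioi (T n)) < ⊤ := by
    have h1 : ∀ n : ℕ, ν (Ioi (T n))
        = ∫⁻ x, (Ioi (T n)).indicator (fun _ => (1 : ℝ≥0∞)) x ∂ν :=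
      fun n => (lintegral_indicator_one measurableSet_Ioi).symm
    simp only [h1]
    rw [← lintegral_tsum (fun n => (measurable_const.indicator measurableSet_Ioi).aemeasurable)]
    set C : ℝ := 2 * max (-b) 0 / a + 2 with hC_def
    have hpt : ∀ x : ℝ, (∑' n : ℕ, (Ioi (T n)).indicator (fun _ => (1 : ℝ≥0∞)) x)
        ≤ ENNReal.ofReal (2 / a * max x 0 + C) := by
      intro x
      set m0 : ℕ := ⌈max ((x - b) / a) 0⌉₊ with hm0_def
      have hzero : ∀ n : ℕ, n ∉ Finset.range (2 * m0) →
          (Ioi (T n)).indicator (fun _ => (1 : ℝ≥0∞)) x = 0 := by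
        intro n hn
        rw [Finset.mem_range, not_lt] at hn
        apply indicator_of_notMem
        simp only [mem_Ioi, not_lt]
        have hle : m0 ≤ n / 2 := by omega
        have h2 : ((x - b) / a) ≤ ((n / 2 : ℕ) : ℝ) := by
          calc (x - b) / a ≤ max ((x - b) / a) 0 := le_max_left _ _
            _ ≤ (m0 : ℝ) := Nat.le_ceil _
            _ ≤ ((n / 2 : ℕ) : ℝ) := by exact_mod_cast hle
        have h3 : x - b ≤ a * ((n / 2 : ℕ) : ℝ) := by
          rw [div_le_iff₀ ha] at h2; linarith
        simp only [hT_def]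
        linarith
      have hsum_eq : (∑' n : ℕ, (Ioi (T n)).indicator (fun _ => (1 : ℝ≥0∞)) x)
          = ∑ n ∈ Finset.range (2 * m0), (Ioi (T n)).indicator (fun _ => (1 : ℝ≥0∞)) x :=
        tsum_eq_sum hzero
      rw [hsum_eq]
      have hbound : (∑ n ∈ Finset.range (2 * m0),
          (Ioi (T n)).indicator (fun _ => (1 : ℝ≥0∞)) x) ≤ (2 * m0 : ℕ) := by
        calc (∑ n ∈ Finset.range (2 * m0), (Ioi (T n)).indicator (fun _ => (1 : ℝ≥0∞)) x)
            ≤ ∑ _n ∈ Finset.range (2 * m0), (1 : ℝ≥0∞) := by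
              refine Finset.sum_le_sum fun n _ => ?_
              by_cases hx : x ∈ Ioi (T n) <;> simp [Set.indicator, hx]
          _ = (2 * m0 : ℕ) := by simp
      refine le_trans hbound ?_
      rw [← ENNReal.ofReal_natCast]
      apply ENNReal.ofReal_le_ofReal
      have hm0le : (m0 : ℝ) < max ((x - b) / a) 0 + 1 := Nat.ceil_lt_add_one (le_max_right _ _)
      have hmax : max ((x - b) / a) 0 ≤ (max x 0 + max (-b) 0) / a := by
        refine max_le ?_ (by positivity)
        refine (div_le_div_iff_of_pos_right ha).mpr ?_
        have := le_max_left x 0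
        have := le_max_left (-b) 0
        linarith
      have he : 2 * ((max x 0 + max (-b) 0) / a) = 2 / a * max x 0 + 2 * max (-b) 0 / a := by
        ring
      push_cast
      rw [hC_def]
      linarith
    calc (∫⁻ x, ∑' n : ℕ, (Ioi (T n)).indicator (fun _ => (1 : ℝ≥0∞)) x ∂ν)
        ≤ ∫⁻ x, ENNReal.ofReal (2 / a * max x 0 + C) ∂ν := lintegral_mono hpt
      _ ≤ ∫⁻ x, (ENNReal.ofReal (2 / a * max x 0) + ENNReal.ofReal C) ∂ν :=
          lintegral_mono fun x => ENNReal.ofReal_add_le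
      _ = (∫⁻ x, ENNReal.ofReal (2 / a * max x 0) ∂ν) + ENNReal.ofReal C * ν univ := by
          rw [lintegral_add_right _ measurable_const, lintegral_const]
      _ < ⊤ := by
          refine ENNReal.add_lt_top.mpr ⟨?_, by simp [hν_univ]⟩
          have hmax_meas : Measurable fun x : ℝ => max x 0 :=
            measurable_id.max measurable_const
          have hsplit : ∀ x : ℝ, ENNReal.ofReal (2 / a * max x 0)
              = ENNReal.ofReal (2 / a) * ENNReal.ofReal (max x 0) := fun x =>
            ENNReal.ofReal_mul (by positivity)
          simp only [hsplit]
          rw [lintegral_const_mul _ hmax_meas.ennreal_ofReal]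
          refine ENNReal.mul_lt_top ENNReal.ofReal_lt_top ?_
          -- ∫⁻ max x 0 dν < ⊤ using the first moment hypothesis
          rw [hν_def, lintegral_withDensity_eq_lintegral_mul _ hfm.ennreal_ofReal
            hmax_meas.ennreal_ofReal]
          have heq : (fun x : ℝ => ((fun x => ENNReal.ofReal (f x)) *
              (fun x => ENNReal.ofReal (max x 0))) x)
              = (Ioi (0 : ℝ)).indicator (fun x => ENNReal.ofReal (x * f x)) := by
            funext x
            by_cases hx : (0 : ℝ) < x
            · simp only [Pi.mul_apply, indicator_of_mem (mem_Ioi.mpr hx),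
                max_eq_left hx.le, ← ENNReal.ofReal_mul (hf x)]
              rw [mul_comm]
            · push_neg at hx
              simp [Pi.mul_apply, indicator_of_notMem, mem_Ioi, not_lt.mpr hx,
                max_eq_right hx]
              exact Or.inr hx
          rw [heq]
          show (∫⁻ x, (Ioi (0 : ℝ)).indicator (fun x => ENNReal.ofReal (x * f x)) x
            ∂(volume : Measure ℝ)) < ⊤
          rw [lintegral_indicator measurableSet_Ioi _,
            ← ofReal_integral_eq_lintegral_ofReal hmu
              ((ae_restrict_iff' measurableSet_Ioi).mpr (Filter.Eventually.of_forall
                fun x hx => mul_nonneg (le_of_lt hx) (hf x)))]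
          exact ENNReal.ofReal_lt_top
  calc (∑' n : ℕ, ℙ {ω | ∀ j, 1 ≤ j → j < n + 1 →
        X j ω + c * j + δ < X (n + 1) ω + c * (n + 1)})
      ≤ ∑' n : ℕ, (ν (Ioi (T n)) + q ^ (n / 2)) := ENNReal.tsum_le_tsum key
    _ = (∑' n : ℕ, ν (Ioi (T n))) + ∑' n : ℕ, q ^ (n / 2) := ENNReal.tsum_add
    _ < ⊤ := ENNReal.add_lt_top.mpr ⟨hsum1, hsum2⟩
end
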